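/- arXiv:2106.03531 — 4 statements merged into one kernel-verified Lean document; each statement's English description precedes it below -/
import Mathlib

section
/- If G is a bipartite graph with parts X and Y, then θ_int(G) ≤ min{Δ(X), Δ(Y)}, where Δ(X) and Δ(Y) denote the maximum degrees among vertices of X and of Y respectively. -/
open SimpleGraph

variable {V : Type*}

/-- A proper edge coloring: distinct edges sharing a vertex get distinct colors. -/
def IsProperEdgeColoring (G : SimpleGraph V) (c : Sym2 V → ℕ) : Prop :=
  ∀ e₁ ∈ G.edgeSet, ∀ e₂ ∈ G.edgeSet, e₁ ≠ e₂ → (∃ v, v ∈ e₁ ∧ v ∈ e₂) → c e₁ ≠ c e₂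

/-- The set of colors appearing on edges incident to `v`. -/
def colorsAt (G : SimpleGraph V) (c : Sym2 V → ℕ) (v : V) : Set ℕ :=
  {n | ∃ e ∈ G.edgeSet, v ∈ e ∧ c e = n}

/-- An interval coloring: a proper edge coloring with positive integer colors such that
the set of colors at each vertex is an interval of integers. -/
def IsIntervalColoring (G : SimpleGraph V) (c : Sym2 V → ℕ) : Prop :=
  IsProperEdgeColoring G c ∧ (∀ e ∈ G.edgeSet, 1 ≤ c e) ∧
    ∀ v, ∀ a ∈ colorsAt G c v, ∀ b ∈ colorsAt G c v, ∀ k, a ≤ k → k ≤ b →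
      k ∈ colorsAt G c v

def IntervalColorable (G : SimpleGraph V) : Prop :=
  ∃ c, IsIntervalColoring G c

/-- The chromatic index: least `t` admitting a proper edge coloring with colors in `{1,…,t}`. -/
noncomputable def chromIndex (G : SimpleGraph V) : ℕ :=
  sInf {t | ∃ c, IsProperEdgeColoring G c ∧ ∀ e ∈ G.edgeSet, c e ∈ Finset.Icc 1 t}

/-- A decomposition of `G` into `k` edge-disjoint interval colorable subgraphs. -/
def IntervalDecomposition (G : SimpleGraph V) (k : ℕ) : Prop :=
  ∃ H : Fin k → SimpleGraph V, (∀ i, H i ≤ G) ∧ (∀ i, IntervalColorable (H i)) ∧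
    ∀ e ∈ G.edgeSet, ∃! i, e ∈ (H i).edgeSet

/-- The interval coloring thickness of `G`. -/
noncomputable def intervalThickness (G : SimpleGraph V) : ℕ :=
  sInf {k | IntervalDecomposition G k}

/-! ### Auxiliary machinery -/

section Rank

variable {W : Type*}

/-- The rank of `u` relative to a finset `S` and an injection `ι : W → ℕ`. -/
def rkAux (ι : W → ℕ) (S : Finset W) (u : W) : ℕ :=
  (S.filter (fun w => ι w ≤ ι u)).card

lemma rkAux_pos {ι : W → ℕ} {S : Finset W} {u : W} (hu : u ∈ S) : 1 ≤ rkAux ι S u :=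
  Finset.card_pos.mpr ⟨u, Finset.mem_filter.mpr ⟨hu, le_rfl⟩⟩

lemma rkAux_le {ι : W → ℕ} {S : Finset W} {u : W} : rkAux ι S u ≤ S.card :=
  Finset.card_le_card (Finset.filter_subset _ _)

lemma rkAux_lt {ι : W → ℕ} {S : Finset W} {u w : W} (hw : w ∈ S) (h : ι u < ι w) :
    rkAux ι S u < rkAux ι S w := by
  have hsub : S.filter (fun x => ι x ≤ ι u) ⊆ S.filter (fun x => ι x ≤ ι w) := by
    intro x hx
    rw [Finset.mem_filter] at hx ⊢
    exact ⟨hx.1, hx.2.trans h.le⟩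
  refine Finset.card_lt_card ((Finset.ssubset_iff_of_subset hsub).mpr ?_)
  exact ⟨w, Finset.mem_filter.mpr ⟨hw, le_rfl⟩, fun hc => absurd (Finset.mem_filter.mp hc).2 (not_le.mpr h)⟩

lemma rkAux_injOn {ι : W → ℕ} (hι : Function.Injective ι) {S : Finset W} :
    Set.InjOn (rkAux ι S) S := by
  intro u hu w hw heq
  by_contra hne
  have hιne : ι u ≠ ι w := fun h => hne (hι h)
  rcases lt_or_gt_of_ne hιne with h | h
  · exact absurd heq (Nat.ne_of_lt (rkAux_lt (Finset.mem_coe.mp hw) h))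
  · exact absurd heq.symm (Nat.ne_of_lt (rkAux_lt (Finset.mem_coe.mp hu) h))

lemma rkAux_surj {ι : W → ℕ} (hι : Function.Injective ι) {S : Finset W}
    {k : ℕ} (hk1 : 1 ≤ k) (hk2 : k ≤ S.card) : ∃ u ∈ S, rkAux ι S u = k := by
  have himg : S.image (rkAux ι S) = Finset.Icc 1 S.card := by
    apply Finset.eq_of_subset_of_card_le
    · intro n hn
      obtain ⟨u, hu, rfl⟩ := Finset.mem_image.mp hn
      exact Finset.mem_Icc.mpr ⟨rkAux_pos hu, rkAux_le⟩
    · rw [Nat.card_Icc, Finset.card_image_of_injOn (rkAux_injOn hι)]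
      omega
  have : k ∈ S.image (rkAux ι S) := by
    rw [himg]; exact Finset.mem_Icc.mpr ⟨hk1, hk2⟩
  exact Finset.mem_image.mp this

end Rank

section Star

variable [Fintype V]

/-- A graph which is bipartite w.r.t. `P` and in which every `P`-vertex has degree at most one
(a vertex-disjoint union of stars centered at `¬P`-vertices) is interval colorable. -/
lemma star_intervalColorable (H : SimpleGraph V) [DecidableRel H.Adj]
    (P : V → Prop) [DecidablePred P]
    (hbip : ∀ u v, H.Adj u v → (P u ↔ ¬ P v))
    (hdeg : ∀ v, P v → H.degree v ≤ 1) :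
    IntervalColorable H := by
  classical
  set ι : V → ℕ := fun v => ((Fintype.equivFin V) v : ℕ) with hιdef
  have hιinj : Function.Injective ι := fun a b h =>
    (Fintype.equivFin V).injective (Fin.val_injective h)
  set g : V → V → ℕ := fun u v =>
    if P u ∧ ¬ P v then rkAux ι (H.neighborFinset v) u
    else if P v ∧ ¬ P u then rkAux ι (H.neighborFinset u) v else 0 with hg
  have hsym : ∀ u v, g u v = g v u := by
    intro u v
    by_cases hu : P u <;> by_cases hv : P v <;> simp [hg, hu, hv]
  set c : Sym2 V → ℕ := Sym2.lift ⟨g, hsym⟩ with hc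
  have key : ∀ e ∈ H.edgeSet, ∀ v ∈ e, ¬ P v →
      ∃ u, u ∈ H.neighborFinset v ∧ e = s(v, u) ∧ c e = rkAux ι (H.neighborFinset v) u := by
    intro e he v hv hPv
    obtain ⟨u, rfl⟩ : ∃ u, e = s(v, u) := ⟨Sym2.Mem.other hv, (Sym2.other_spec hv).symm⟩
    have hadj : H.Adj v u := H.mem_edgeSet.mp he
    have hPu : P u := by have := hbip v u hadj; tauto
    refine ⟨u, (H.mem_neighborFinset v u).mpr hadj, rfl, ?_⟩
    simp [hc, hg, hPv, hPu]
  have onlyone : ∀ v, P v → ∀ e₁ ∈ H.edgeSet, ∀ e₂ ∈ H.edgeSet, v ∈ e₁ → v ∈ e₂ → e₁ = e₂ := by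
    intro v hPv e₁ he₁ e₂ he₂ hv₁ hv₂
    obtain ⟨u₁, rfl⟩ : ∃ u, e₁ = s(v, u) := ⟨Sym2.Mem.other hv₁, (Sym2.other_spec hv₁).symm⟩
    obtain ⟨u₂, rfl⟩ : ∃ u, e₂ = s(v, u) := ⟨Sym2.Mem.other hv₂, (Sym2.other_spec hv₂).symm⟩
    have h₁ : u₁ ∈ H.neighborFinset v := (H.mem_neighborFinset v u₁).mpr (H.mem_edgeSet.mp he₁)
    have h₂ : u₂ ∈ H.neighborFinset v := (H.mem_neighborFinset v u₂).mpr (H.mem_edgeSet.mp he₂)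
    have hcard : (H.neighborFinset v).card ≤ 1 := hdeg v hPv
    rw [Finset.card_le_one.mp hcard u₁ h₁ u₂ h₂]
  refine ⟨c, ?_, ?_, ?_⟩
  · -- proper
    rintro e₁ he₁ e₂ he₂ hne ⟨v, hv₁, hv₂⟩
    by_cases hPv : P v
    · exact absurd (onlyone v hPv e₁ he₁ e₂ he₂ hv₁ hv₂) hne
    · obtain ⟨u₁, hm₁, he₁', hc₁⟩ := key e₁ he₁ v hv₁ hPv
      obtain ⟨u₂, hm₂, he₂', hc₂⟩ := key e₂ he₂ v hv₂ hPv
      have hune : u₁ ≠ u₂ := by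
        rintro rfl; exact hne (he₁'.trans he₂'.symm)
      rw [hc₁, hc₂]
      exact fun h => hune (rkAux_injOn hιinj (Finset.mem_coe.mpr hm₁) (Finset.mem_coe.mpr hm₂) h)
  · -- colors positive
    intro e he
    induction e using Sym2.ind with
    | _ u v =>
      have hadj : H.Adj u v := H.mem_edgeSet.mp he
      by_cases hPu : P u
      · have hPv : ¬ P v := (hbip u v hadj).mp hPu
        obtain ⟨w, hm, _, hce⟩ := key _ he v (Sym2.mem_mk_right u v) hPv
        rw [hce]; exact rkAux_pos hm
      · obtain ⟨w, hm, _, hce⟩ := key _ he u (Sym2.mem_mk_left u v) hPu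
        rw [hce]; exact rkAux_pos hm
  · -- interval
    intro v a ha b hb k hak hkb
    simp only [colorsAt, Set.mem_setOf_eq] at ha hb ⊢
    by_cases hPv : P v
    · obtain ⟨e₁, he₁, hv₁, rfl⟩ := ha
      obtain ⟨e₂, he₂, hv₂, rfl⟩ := hb
      have heq : e₁ = e₂ := onlyone v hPv e₁ he₁ e₂ he₂ hv₁ hv₂
      subst heq
      have : k = c e₁ := le_antisymm hkb hak
      exact ⟨e₁, he₁, hv₁, this.symm⟩
    · obtain ⟨e₁, he₁, hv₁, rfl⟩ := ha
      obtain ⟨e₂, he₂, hv₂, rfl⟩ := hb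
      obtain ⟨u₁, hm₁, _, hc₁⟩ := key e₁ he₁ v hv₁ hPv
      obtain ⟨u₂, hm₂, _, hc₂⟩ := key e₂ he₂ v hv₂ hPv
      have hk1 : 1 ≤ k := le_trans (hc₁ ▸ rkAux_pos hm₁) hak
      have hk2 : k ≤ (H.neighborFinset v).card := le_trans hkb (hc₂ ▸ rkAux_le)
      obtain ⟨u, hu, hru⟩ := rkAux_surj hιinj hk1 hk2
      have hadj : H.Adj v u := (H.mem_neighborFinset v u).mp hu
      have hPu : P u := by have := hbip v u hadj; tauto
      refine ⟨s(v, u), H.mem_edgeSet.mpr hadj, Sym2.mem_mk_left v u, ?_⟩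
      simp only [hc, Sym2.lift_mk]
      simp [hg, hPv, hPu, hru]

end Star

section Decomp

variable [Fintype V] [DecidableEq V]

/-- The label of the pair `(u,v)`: the rank of the other endpoint among the neighbors of the
endpoint satisfying `P`. -/
def sideLab (G : SimpleGraph V) [DecidableRel G.Adj] (P : V → Prop) [DecidablePred P]
    (ι : V → ℕ) (u v : V) : ℕ :=
  if P u then rkAux ι (G.neighborFinset u) v else rkAux ι (G.neighborFinset v) u

/-- The subgraph of `G` consisting of the edges with label `n`. -/
def sideGraph (G : SimpleGraph V) [DecidableRel G.Adj] (P : V → Prop) [DecidablePred P]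
    (ι : V → ℕ) (n : ℕ) : SimpleGraph V where
  Adj u v := G.Adj u v ∧ sideLab G P ι u v = n ∧ sideLab G P ι v u = n
  symm := ⟨fun u v h => ⟨h.1.symm, h.2.2, h.2.1⟩⟩
  loopless := ⟨fun v h => G.loopless.irrefl v h.1⟩

instance sideGraph_decidableAdj (G : SimpleGraph V) [DecidableRel G.Adj]
    (P : V → Prop) [DecidablePred P] (ι : V → ℕ) (n : ℕ) :
    DecidableRel (sideGraph G P ι n).Adj := fun _ _ =>
  inferInstanceAs (Decidable (_ ∧ _ ∧ _))

lemma sideGraph_adj (G : SimpleGraph V) [DecidableRel G.Adj] (P : V → Prop) [DecidablePred P]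
    (ι : V → ℕ) (n : ℕ) (u v : V) :
    (sideGraph G P ι n).Adj u v ↔
      G.Adj u v ∧ sideLab G P ι u v = n ∧ sideLab G P ι v u = n := Iff.rfl

lemma decomp_of_bipartite (G : SimpleGraph V) [DecidableRel G.Adj]
    (P : V → Prop) [DecidablePred P]
    (hbip : ∀ u v, G.Adj u v → (P u ↔ ¬ P v))
    (D : ℕ) (hD : ∀ v, P v → G.degree v ≤ D) :
    IntervalDecomposition G D := by
  classical
  set ι : V → ℕ := fun v => ((Fintype.equivFin V) v : ℕ) with hιdef
  have hιinj : Function.Injective ι := fun a b h =>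
    (Fintype.equivFin V).injective (Fin.val_injective h)
  refine ⟨fun i => sideGraph G P ι ((i : ℕ) + 1), fun i u v h => h.1, fun i => ?_, ?_⟩
  · -- each layer is interval colorable
    refine star_intervalColorable _ P (fun u v h => hbip u v h.1) ?_
    intro v hPv
    have : (sideGraph G P ι ((i : ℕ) + 1)).degree v
        = ((sideGraph G P ι ((i : ℕ) + 1)).neighborFinset v).card := rfl
    rw [this]
    apply Finset.card_le_one.mpr
    intro a ha b hb
    rw [SimpleGraph.mem_neighborFinset, sideGraph_adj] at ha hb
    obtain ⟨ha1, ha2, -⟩ := ha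
    obtain ⟨hb1, hb2, -⟩ := hb
    simp only [sideLab, if_pos hPv] at ha2 hb2
    exact rkAux_injOn hιinj (Finset.mem_coe.mpr ((G.mem_neighborFinset v a).mpr ha1))
      (Finset.mem_coe.mpr ((G.mem_neighborFinset v b).mpr hb1)) (ha2.trans hb2.symm)
  · -- every edge lies in exactly one layer
    have claim : ∀ u v, G.Adj u v → P u →
        ∃! i : Fin D, s(u, v) ∈ (sideGraph G P ι ((i : ℕ) + 1)).edgeSet := by
      intro u v huv hPu
      have hPv : ¬ P v := (hbip u v huv).mp hPu
      set r := rkAux ι (G.neighborFinset u) v with hr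
      have hvmem : v ∈ G.neighborFinset u := (G.mem_neighborFinset u v).mpr huv
      have hr1 : 1 ≤ r := rkAux_pos hvmem
      have hr2 : r ≤ D := le_trans rkAux_le (hD u hPu)
      have hlab1 : sideLab G P ι u v = r := by simp [sideLab, hPu, hr]
      have hlab2 : sideLab G P ι v u = r := by simp [sideLab, hPv, hr]
      refine ⟨⟨r - 1, by omega⟩, ?_, ?_⟩
      · show s(u, v) ∈ (sideGraph G P ι (r - 1 + 1)).edgeSet
        rw [SimpleGraph.mem_edgeSet, sideGraph_adj]
        exact ⟨huv, by rw [hlab1]; omega, by rw [hlab2]; omega⟩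
      · intro j hj
        have hj' : s(u, v) ∈ (sideGraph G P ι ((j : ℕ) + 1)).edgeSet := hj
        rw [SimpleGraph.mem_edgeSet, sideGraph_adj] at hj'
        rw [hlab1] at hj'
        exact Fin.ext (show (j : ℕ) = r - 1 by omega)
    intro e he
    induction e using Sym2.ind with
    | _ u v =>
      have huv : G.Adj u v := G.mem_edgeSet.mp he
      by_cases hPu : P u
      · exact claim u v huv hPu
      · have hPv : P v := by have := hbip u v huv; tauto
        have := claim v u huv.symm hPv
        simpa [Sym2.eq_swap] using this

end Decomp

lemma intervalThickness_le_of_decomp (G : SimpleGraph V) {k : ℕ}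
    (h : IntervalDecomposition G k) : intervalThickness G ≤ k :=
  Nat.sInf_le h

theorem bipartite_intervalThickness_le_min_part_maxDegree
    {X Y : Type*} [Fintype X] [Fintype Y] [DecidableEq X] [DecidableEq Y]
    (G : SimpleGraph (X ⊕ Y)) [DecidableRel G.Adj]
    (hX : ∀ x x' : X, ¬ G.Adj (Sum.inl x) (Sum.inl x'))
    (hY : ∀ y y' : Y, ¬ G.Adj (Sum.inr y) (Sum.inr y')) :
    intervalThickness G ≤
      min (Finset.univ.sup fun x : X => G.degree (Sum.inl x))
        (Finset.univ.sup fun y : Y => G.degree (Sum.inr y)) := by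
  classical
  refine le_min ?_ ?_
  · refine intervalThickness_le_of_decomp G (decomp_of_bipartite G
      (fun v => v.isLeft = true) ?_ _ ?_)
    · rintro (x | y) (x' | y') h
      · exact absurd h (hX x x')
      · simp
      · simp
      · exact absurd h (hY y y')
    · rintro (x | y) hv
      · exact Finset.le_sup (f := fun x : X => G.degree (Sum.inl x)) (Finset.mem_univ x)
      · simp at hv
  · refine intervalThickness_le_of_decomp G (decomp_of_bipartite G
      (fun v => v.isRight = true) ?_ _ ?_)
    · rintro (x | y) (x' | y') h
      · exact absurd h (hX x x')
      · simp
      · simp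
      · exact absurd h (hY y y')
    · rintro (x | y) hv
      · simp at hv
      · exact Finset.le_sup (f := fun y : Y => G.degree (Sum.inr y)) (Finset.mem_univ y)
end

section
/- If G is a bipartite graph where every vertex has degree 1, 2, or 2r and Δ(G) = 2r, then G has an interval 2r-coloring α such that for each vertex v of degree 2, the set of colors at v is {2i−1, 2i} for some i with 1 ≤ i ≤ r. -/
set_option maxHeartbeats 1000000
set_option linter.unusedSectionVars false
set_option linter.unnecessarySeqFocus false

namespace IC
open Finset

variable {V : Type*} [Fintype V] [DecidableEq V]

def cnt (p : V × V) (x : V) : ℕ := (if p.1 = x then 1 else 0) + (if p.2 = x then 1 else 0)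

section E
variable {E : Type*} [Fintype E] [DecidableEq E]

def mdeg (ends : E → V × V) (x : V) : ℕ := ∑ e, cnt (ends e) x

def msrc (ends : E → V × V) (o : E → Bool) (e : E) : V :=
  if o e then (ends e).1 else (ends e).2

def mtgt (ends : E → V × V) (o : E → Bool) (e : E) : V :=
  if o e then (ends e).2 else (ends e).1

def outdeg (ends : E → V × V) (o : E → Bool) (x : V) : ℕ :=
  ∑ e, if msrc ends o e = x then 1 else 0

def indeg (ends : E → V × V) (o : E → Bool) (x : V) : ℕ :=
  ∑ e, if mtgt ends o e = x then 1 else 0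

lemma outdeg_add_indeg (ends : E → V × V) (o : E → Bool) (x : V) :
    outdeg ends o x + indeg ends o x = mdeg ends x := by
  rw [outdeg, indeg, mdeg, ← Finset.sum_add_distrib]
  refine Finset.sum_congr rfl fun e _ => ?_
  unfold msrc mtgt cnt
  by_cases h : o e <;> simp [h] <;> omega

variable {r : ℕ}

def outc (ends : E → V × V) (o : E → Bool) (f : E → Fin r) (i : Fin r) (x : V) : ℕ :=
  ∑ e, if f e = i ∧ msrc ends o e = x then 1 else 0

def inc (ends : E → V × V) (o : E → Bool) (f : E → Fin r) (i : Fin r) (x : V) : ℕ :=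
  ∑ e, if f e = i ∧ mtgt ends o e = x then 1 else 0

lemma sum_outc (ends : E → V × V) (o : E → Bool) (f : E → Fin r) (x : V) :
    ∑ i, outc ends o f i x = outdeg ends o x := by
  unfold outc outdeg
  rw [Finset.sum_comm]
  refine Finset.sum_congr rfl fun e _ => ?_
  by_cases h : msrc ends o e = x <;> simp [h]

lemma sum_inc (ends : E → V × V) (o : E → Bool) (f : E → Fin r) (x : V) :
    ∑ i, inc ends o f i x = indeg ends o x := by
  unfold inc indeg
  rw [Finset.sum_comm]
  refine Finset.sum_congr rfl fun e _ => ?_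
  by_cases h : mtgt ends o e = x <;> simp [h]

-- Euler orientation
def dpar (ends : E → V × V) (o : E → Bool) (v : V) : ℤ :=
  (outdeg ends o v : ℤ) - indeg ends o v

def DWalk (ends : E → V × V) (o : E → Bool) : V → V → List E → Prop
  | u, w, [] => u = w
  | u, w, e :: l => msrc ends o e = u ∧ DWalk ends o (mtgt ends o e) w l

lemma dwalk_append {ends : E → V × V} {o : E → Bool} {u w : V} {l₁ l₂ : List E} :
    DWalk ends o u w (l₁ ++ l₂) ↔ ∃ m, DWalk ends o u m l₁ ∧ DWalk ends o m w l₂ := by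
  induction l₁ generalizing u with
  | nil => simp [DWalk]
  | cons e t ih =>
    constructor
    · rintro ⟨hs, h⟩
      obtain ⟨m, h1, h2⟩ := ih.mp h
      exact ⟨m, ⟨hs, h1⟩, h2⟩
    · rintro ⟨m, ⟨hs, h1⟩, h2⟩
      exact ⟨hs, ih.mpr ⟨m, h1, h2⟩⟩

lemma dwalk_congr {ends : E → V × V} {o o' : E → Bool} {u w : V} {l : List E}
    (h : ∀ e ∈ l, o e = o' e) (hw : DWalk ends o u w l) : DWalk ends o' u w l := by
  induction l generalizing u with
  | nil => exact hw
  | cons e t ih =>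
    obtain ⟨hs, ht⟩ := hw
    have he : o e = o' e := h e (by simp)
    refine ⟨?_, ?_⟩
    · rw [msrc, ← he]; exact hs
    · have : mtgt ends o' e = mtgt ends o e := by rw [mtgt, mtgt, he]
      rw [this]
      exact ih (fun x hx => h x (by simp [hx])) ht

lemma dwalk_nodup {ends : E → V × V} {o : E → Bool} {u w : V} {l : List E}
    (hw : DWalk ends o u w l) : ∃ l', l'.Nodup ∧ DWalk ends o u w l' := by
  induction l generalizing u with
  | nil => exact ⟨[], List.nodup_nil, hw⟩
  | cons e t ih =>
    obtain ⟨hs, ht⟩ := hw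
    obtain ⟨t', nd, hw'⟩ := ih ht
    by_cases he : e ∈ t'
    · obtain ⟨t₁, t₂, rfl⟩ := List.append_of_mem he
      obtain ⟨m, h1, h2⟩ := dwalk_append.mp hw'
      obtain ⟨hs2, ht2⟩ := h2
      refine ⟨e :: t₂, ?_, hs, ht2⟩
      exact List.Nodup.sublist (List.sublist_append_right t₁ (e :: t₂)) nd
    · exact ⟨e :: t', List.Nodup.cons he nd, hs, hw'⟩

def flipList (o : E → Bool) : List E → (E → Bool)
  | [] => o
  | e :: l => flipList (Function.update o e (!o e)) l

lemma sum_pt {φ ψ : E → ℤ} {e : E} (h : ∀ x, x ≠ e → φ x = ψ x) :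
    ∑ x, φ x = ∑ x, ψ x - ψ e + φ e := by
  rw [← Finset.add_sum_erase _ φ (mem_univ e), ← Finset.add_sum_erase _ ψ (mem_univ e)]
  have : ∑ x ∈ univ.erase e, φ x = ∑ x ∈ univ.erase e, ψ x :=
    Finset.sum_congr rfl fun x hx => h x (Finset.ne_of_mem_erase hx)
  omega

lemma msrc_update (ends : E → V × V) (o : E → Bool) (e : E) :
    msrc ends (Function.update o e (!o e)) e = mtgt ends o e := by
  unfold msrc mtgt; rw [Function.update_self]; by_cases h : o e <;> simp [h]

lemma mtgt_update (ends : E → V × V) (o : E → Bool) (e : E) :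
    mtgt ends (Function.update o e (!o e)) e = msrc ends o e := by
  unfold msrc mtgt; rw [Function.update_self]; by_cases h : o e <;> simp [h]

lemma dpar_update (ends : E → V × V) (o : E → Bool) (e : E) (v : V) :
    dpar ends (Function.update o e (!o e)) v =
      dpar ends o v - (if msrc ends o e = v then 2 else 0)
        + (if mtgt ends o e = v then 2 else 0) := by
  set o' := Function.update o e (!o e) with ho'
  have hsrc : ∀ x, x ≠ e → msrc ends o' x = msrc ends o x := by
    intro x hx; unfold msrc; rw [ho', Function.update_of_ne hx]
  have htgt : ∀ x, x ≠ e → mtgt ends o' x = mtgt ends o x := by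
    intro x hx; unfold mtgt; rw [ho', Function.update_of_ne hx]
  have hout : (outdeg ends o' v : ℤ) = (outdeg ends o v : ℤ)
      - (if msrc ends o e = v then 1 else 0) + (if mtgt ends o e = v then 1 else 0) := by
    rw [outdeg, outdeg, Nat.cast_sum, Nat.cast_sum]
    rw [sum_pt (φ := fun x => ((if msrc ends o' x = v then 1 else 0 : ℕ) : ℤ))
      (ψ := fun x => ((if msrc ends o x = v then 1 else 0 : ℕ) : ℤ)) (e := e)
      (fun x hx => by simp only [hsrc x hx])]
    rw [msrc_update]
    by_cases h1 : msrc ends o e = v <;> by_cases h2 : mtgt ends o e = v <;> simp [h1, h2]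
  have hin : (indeg ends o' v : ℤ) = (indeg ends o v : ℤ)
      - (if mtgt ends o e = v then 1 else 0) + (if msrc ends o e = v then 1 else 0) := by
    rw [indeg, indeg, Nat.cast_sum, Nat.cast_sum]
    rw [sum_pt (φ := fun x => ((if mtgt ends o' x = v then 1 else 0 : ℕ) : ℤ))
      (ψ := fun x => ((if mtgt ends o x = v then 1 else 0 : ℕ) : ℤ)) (e := e)
      (fun x hx => by simp only [htgt x hx])]
    rw [mtgt_update]
    by_cases h1 : msrc ends o e = v <;> by_cases h2 : mtgt ends o e = v <;> simp [h1, h2]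
  rw [dpar, dpar, hout, hin]
  by_cases h1 : msrc ends o e = v <;> by_cases h2 : mtgt ends o e = v <;> simp [h1, h2] <;> ring

lemma dpar_flipList (ends : E → V × V) :
    ∀ (l : List E) (o : E → Bool) (u w : V), l.Nodup → DWalk ends o u w l → ∀ v,
      dpar ends (flipList o l) v =
        dpar ends o v - (if u = v then 2 else 0) + (if w = v then 2 else 0) := by
  intro l
  induction l with
  | nil =>
    intro o u w _ hw v
    obtain rfl : u = w := hw
    simp [flipList]
  | cons e t ih =>
    intro o u w hnd hw v
    obtain ⟨hs, ht⟩ := hw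
    set o₁ := Function.update o e (!o e) with ho₁
    have hne : e ∉ t := (List.nodup_cons.mp hnd).1
    have ht1 : DWalk ends o₁ (mtgt ends o e) w t := by
      refine dwalk_congr (fun x hx => ?_) ht
      rw [ho₁, Function.update_of_ne (fun hxe => hne (by rw [← hxe]; exact hx))]
    have : flipList o (e :: t) = flipList o₁ t := rfl
    rw [this, ih o₁ (mtgt ends o e) w (List.nodup_cons.mp hnd).2 ht1 v, dpar_update, hs]
    by_cases h1 : u = v <;> by_cases h2 : mtgt ends o e = v <;> by_cases h3 : w = v <;>
      simp [h1, h2, h3] <;> ring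

lemma sum_outdeg (ends : E → V × V) (o : E → Bool) :
    ∑ v, outdeg ends o v = Fintype.card E := by
  unfold outdeg
  rw [Finset.sum_comm]
  simp [Finset.sum_ite_eq]

lemma sum_indeg (ends : E → V × V) (o : E → Bool) :
    ∑ v, indeg ends o v = Fintype.card E := by
  unfold indeg
  rw [Finset.sum_comm]
  simp [Finset.sum_ite_eq]

lemma sum_dpar (ends : E → V × V) (o : E → Bool) : ∑ v, dpar ends o v = 0 := by
  unfold dpar
  rw [Finset.sum_sub_distrib, ← Nat.cast_sum, ← Nat.cast_sum, sum_outdeg, sum_indeg]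
  ring

lemma dpar_even (ends : E → V × V) (o : E → Bool) (v : V) (hev : Even (mdeg ends v)) :
    Even (dpar ends o v) := by
  have h := outdeg_add_indeg ends o v
  obtain ⟨k, hk⟩ := hev
  rw [dpar]
  refine ⟨(outdeg ends o v : ℤ) - k, ?_⟩
  omega

theorem euler_orient (ends : E → V × V) (hev : ∀ v, Even (mdeg ends v)) :
    ∃ o, ∀ v, outdeg ends o v = indeg ends o v := by
  classical
  obtain ⟨o, -, ho⟩ := Finset.exists_min_image (univ : Finset (E → Bool))
    (fun o => ∑ v, (dpar ends o v).natAbs) ⟨fun _ => true, mem_univ _⟩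
  have hzero : ∀ v, dpar ends o v = 0 := by
    by_contra hne
    push_neg at hne
    obtain ⟨v₀, hv₀⟩ := hne
    -- find u with dpar > 0
    have hex : ∃ u, 0 < dpar ends o u := by
      by_contra hc
      push_neg at hc
      rcases lt_or_gt_of_ne hv₀ with hlt | hgt
      · have := sum_dpar ends o
        have hstrict : ∑ v, dpar ends o v < ∑ v, (0 : ℤ) :=
          Finset.sum_lt_sum (fun i _ => hc i) ⟨v₀, mem_univ _, hlt⟩
        simp [this] at hstrict
      · exact absurd hgt (not_lt.mpr (hc v₀))
    obtain ⟨u, hu⟩ := hex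
    set R : Finset V := univ.filter (fun w => ∃ l, DWalk ends o u w l) with hR
    have huR : u ∈ R := by
      rw [hR, Finset.mem_filter]
      exact ⟨mem_univ _, [], rfl⟩
    have hclosed : ∀ e : E, msrc ends o e ∈ R → mtgt ends o e ∈ R := by
      intro e he
      rw [hR, Finset.mem_filter] at he ⊢
      obtain ⟨-, l, hl⟩ := he
      refine ⟨mem_univ _, l ++ [e], dwalk_append.mpr ⟨msrc ends o e, hl, rfl, rfl⟩⟩
    have hsumR : ∑ w ∈ R, dpar ends o w ≤ 0 := by
      have h1 : ∑ w ∈ R, outdeg ends o w =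
          ∑ e, (if msrc ends o e ∈ R then 1 else 0 : ℕ) := by
        unfold outdeg
        rw [Finset.sum_comm]
        exact Finset.sum_congr rfl fun e _ => Finset.sum_ite_eq R (msrc ends o e) (fun _ => 1)
      have h2 : ∑ w ∈ R, indeg ends o w =
          ∑ e, (if mtgt ends o e ∈ R then 1 else 0 : ℕ) := by
        unfold indeg
        rw [Finset.sum_comm]
        exact Finset.sum_congr rfl fun e _ => Finset.sum_ite_eq R (mtgt ends o e) (fun _ => 1)
      have hle : ∑ w ∈ R, outdeg ends o w ≤ ∑ w ∈ R, indeg ends o w := by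
        rw [h1, h2]
        refine Finset.sum_le_sum fun e _ => ?_
        by_cases h : msrc ends o e ∈ R
        · simp [h, hclosed e h]
        · simp [h]
      have heq : ∑ w ∈ R, dpar ends o w =
          (∑ w ∈ R, outdeg ends o w : ℤ) - (∑ w ∈ R, indeg ends o w : ℤ) := by
        unfold dpar
        push_cast
        rw [Finset.sum_sub_distrib]
      rw [heq]
      have h3 : ((∑ w ∈ R, outdeg ends o w : ℕ) : ℤ) = ∑ w ∈ R, (outdeg ends o w : ℤ) := by
        push_cast; rfl
      have h4 : ((∑ w ∈ R, indeg ends o w : ℕ) : ℤ) = ∑ w ∈ R, (indeg ends o w : ℤ) := by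
        push_cast; rfl
      have h5 := Nat.cast_le (α := ℤ) |>.mpr hle
      omega
    -- get w in R with negative dpar
    have hexw : ∃ w ∈ R, dpar ends o w < 0 := by
      by_contra hc
      push_neg at hc
      have : dpar ends o u ≤ ∑ w ∈ R, dpar ends o w :=
        Finset.single_le_sum (fun i hi => hc i hi) huR
      omega
    obtain ⟨w, hwR, hw⟩ := hexw
    rw [hR, Finset.mem_filter] at hwR
    obtain ⟨-, l₀, hl₀⟩ := hwR
    obtain ⟨l, hnd, hl⟩ := dwalk_nodup hl₀
    have hflip := dpar_flipList ends l o u w hnd hl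
    have hwu : w ≠ u := by intro h; rw [h] at hw; omega
    have hu2 : 2 ≤ dpar ends o u := by
      have := dpar_even ends o u (hev u)
      obtain ⟨k, hk⟩ := this
      omega
    have hw2 : dpar ends o w ≤ -2 := by
      have := dpar_even ends o w (hev w)
      obtain ⟨k, hk⟩ := this
      omega
    have hlt : ∑ v, (dpar ends (flipList o l) v).natAbs < ∑ v, (dpar ends o v).natAbs := by
      refine Finset.sum_lt_sum (fun v _ => ?_) ⟨u, mem_univ _, ?_⟩
      · rw [hflip v]
        rcases eq_or_ne u v with rfl | h1
        · rcases eq_or_ne w u with rfl | h2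
          · simp
          · simp [h2]
            omega
        · rcases eq_or_ne w v with rfl | h2
          · simp [h1]
            omega
          · simp [h1, h2]
      · rw [hflip u]
        simp [hwu]
        omega
    exact absurd (ho _ (mem_univ _)) (not_le.mpr hlt)
  exact ⟨o, fun v => by have := hzero v; rw [dpar] at this; omega⟩

lemma sum_split_image {E : Type*} [Fintype E] [DecidableEq E] {m : V → E}
    (hm : Function.Injective m) (φ : E → ℕ) :
    ∑ e, φ e = ∑ u, φ (m u) + ∑ e : {x : E // x ∉ univ.image m}, φ e.val := by
  classical
  have h1 := Finset.sum_filter_add_sum_filter_not univ (fun e => e ∈ univ.image m) φ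
  have h2 : ∑ e ∈ univ.filter (fun e => e ∈ univ.image m), φ e = ∑ u, φ (m u) := by
    have : univ.filter (fun e => e ∈ univ.image m) = univ.image m := by
      ext x; simp
    rw [this, Finset.sum_image (fun a _ b _ h => hm h)]
  have h3 : ∑ e ∈ univ.filter (fun e => e ∉ univ.image m), φ e
      = ∑ e : {x : E // x ∉ univ.image m}, φ e.val := by
    rw [Finset.sum_subtype (p := fun e => e ∉ univ.image m)
      (univ.filter (fun e => e ∉ univ.image m)) (by intro x; simp) (fun x => φ x)]
  omega

universe upeel

theorem peel (s : ℕ) : ∀ {E : Type upeel} [Fintype E] [DecidableEq E]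
    (ends : E → V × V) (o : E → Bool),
    (∀ v, outdeg ends o v = s) → (∀ v, indeg ends o v = s) →
    ∃ f : E → Fin s, ∀ (i : Fin s) (v : V),
      outc ends o f i v = 1 ∧ inc ends o f i v = 1 := by
  induction s with
  | zero =>
    intro E _ _ ends o hout _
    have hE : IsEmpty E := by
      constructor
      intro e
      have h0 := hout (msrc ends o e)
      rw [outdeg, Finset.sum_eq_zero_iff] at h0
      have := h0 e (mem_univ e)
      simp at this
    exact ⟨fun e => (hE.false e).elim, fun i => i.elim0⟩
  | succ s ih =>
    intro E _ _ ends o hout hin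
    classical
    set t : V → Finset V :=
      fun v => univ.filter (fun w => ∃ e, msrc ends o e = v ∧ mtgt ends o e = w) with ht
    have hsumS : ∀ S : Finset V, ∑ v ∈ S, outdeg ends o v =
        ∑ e, (if msrc ends o e ∈ S then 1 else 0 : ℕ) := by
      intro S
      unfold outdeg
      rw [Finset.sum_comm]
      exact Finset.sum_congr rfl fun e _ => Finset.sum_ite_eq S (msrc ends o e) (fun _ => 1)
    have hsumT : ∀ S : Finset V, ∑ v ∈ S, indeg ends o v =
        ∑ e, (if mtgt ends o e ∈ S then 1 else 0 : ℕ) := by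
      intro S
      unfold indeg
      rw [Finset.sum_comm]
      exact Finset.sum_congr rfl fun e _ => Finset.sum_ite_eq S (mtgt ends o e) (fun _ => 1)
    have hH : ∀ S : Finset V, S.card ≤ (S.biUnion t).card := by
      intro S
      have key : (s+1) * S.card ≤ (s+1) * (S.biUnion t).card := by
        have e1 : ∑ v ∈ S, outdeg ends o v = (s+1) * S.card := by
          rw [Finset.sum_congr rfl (fun v _ => hout v), Finset.sum_const, smul_eq_mul,
            mul_comm]
        have e2 : ∑ v ∈ S.biUnion t, indeg ends o v = (s+1) * (S.biUnion t).card := by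
          rw [Finset.sum_congr rfl (fun v _ => hin v), Finset.sum_const, smul_eq_mul,
            mul_comm]
        rw [← e1, ← e2, hsumS, hsumT]
        refine Finset.sum_le_sum fun e _ => ?_
        by_cases h : msrc ends o e ∈ S
        · have : mtgt ends o e ∈ S.biUnion t := by
            rw [Finset.mem_biUnion]
            exact ⟨msrc ends o e, h, by rw [ht]; simp; exact ⟨e, rfl, rfl⟩⟩
          simp [h, this]
        · simp [h]
      exact Nat.le_of_mul_le_mul_left key (Nat.succ_pos s)
    obtain ⟨g, hginj, hgt⟩ := (Finset.all_card_le_biUnion_card_iff_exists_injective t).mp hH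
    have hme : ∀ v, ∃ e, msrc ends o e = v ∧ mtgt ends o e = g v := by
      intro v
      have := hgt v
      rw [ht] at this
      simp at this
      exact this
    set m : V → E := fun v => (hme v).choose with hmdef
    have hm1 : ∀ v, msrc ends o (m v) = v := fun v => (hme v).choose_spec.1
    have hm2 : ∀ v, mtgt ends o (m v) = g v := fun v => (hme v).choose_spec.2
    have hminj : Function.Injective m := by
      intro a b hab
      rw [← hm1 a, ← hm1 b, hab]
    have hgbij := (Finite.injective_iff_bijective).mp hginj
    -- counting: for any v, the m-image contributes exactly one out-edge and one in-edge
    have hmsrc1 : ∀ v, ∑ u, (if msrc ends o (m u) = v then 1 else 0 : ℕ) = 1 := by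
      intro v
      have : ∀ u, (if msrc ends o (m u) = v then 1 else 0 : ℕ) = if u = v then 1 else 0 := by
        intro u; rw [hm1]
      rw [Finset.sum_congr rfl (fun u _ => this u)]
      simp
    have hmtgt1 : ∀ v, ∑ u, (if mtgt ends o (m u) = v then 1 else 0 : ℕ) = 1 := by
      intro v
      obtain ⟨u₀, hu₀⟩ := hgbij.surjective v
      have hfil : univ.filter (fun u => g u = v) = {u₀} := by
        ext u
        simp only [Finset.mem_filter, Finset.mem_univ, true_and, Finset.mem_singleton]
        constructor
        · intro h; exact hginj (h.trans hu₀.symm)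
        · intro h; rw [h, hu₀]
      have : ∀ u, (if mtgt ends o (m u) = v then 1 else 0 : ℕ) = if g u = v then 1 else 0 := by
        intro u; rw [hm2]
      rw [Finset.sum_congr rfl (fun u _ => this u), ← Finset.card_filter, hfil,
        Finset.card_singleton]
    -- the reduced multigraph
    obtain ⟨f₂, hf₂⟩ := ih (fun x : {x : E // x ∉ univ.image m} => ends x.val)
      (fun x => o x.val)
      (by
        intro v
        have hs : ∑ e, (if msrc ends o e = v then 1 else 0 : ℕ)
            = ∑ u, (if msrc ends o (m u) = v then 1 else 0 : ℕ)
              + ∑ x : {x : E // x ∉ univ.image m},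
                  (if msrc ends o x.val = v then 1 else 0 : ℕ) :=
          sum_split_image hminj _
        have h0 := hout v
        rw [outdeg] at h0
        rw [hs, hmsrc1 v] at h0
        have hb : outdeg (fun x : {x : E // x ∉ univ.image m} => ends x.val)
            (fun x => o x.val) v
            = ∑ x : {x : E // x ∉ univ.image m},
                (if msrc ends o x.val = v then 1 else 0 : ℕ) := rfl
        rw [hb]
        omega)
      (by
        intro v
        have hs : ∑ e, (if mtgt ends o e = v then 1 else 0 : ℕ)
            = ∑ u, (if mtgt ends o (m u) = v then 1 else 0 : ℕ)
              + ∑ x : {x : E // x ∉ univ.image m},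
                  (if mtgt ends o x.val = v then 1 else 0 : ℕ) :=
          sum_split_image hminj _
        have h0 := hin v
        rw [indeg] at h0
        rw [hs, hmtgt1 v] at h0
        have hb : indeg (fun x : {x : E // x ∉ univ.image m} => ends x.val)
            (fun x => o x.val) v
            = ∑ x : {x : E // x ∉ univ.image m},
                (if mtgt ends o x.val = v then 1 else 0 : ℕ) := rfl
        rw [hb]
        omega)
    set f : E → Fin (s+1) :=
      fun e => if h : e ∈ univ.image m then Fin.last s else (f₂ ⟨e, h⟩).castSucc with hf
    have hfm : ∀ u, f (m u) = Fin.last s := by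
      intro u
      rw [hf]
      simp only [dif_pos (Finset.mem_image_of_mem m (mem_univ u))]
    have hfe₂ : ∀ x : {x : E // x ∉ univ.image m}, f x.val = (f₂ x).castSucc := by
      intro x
      rw [hf]
      simp only [dif_neg x.2]
    refine ⟨f, fun i v => ?_⟩
    refine Fin.lastCases ?_ ?_ i
    · constructor
      · have hs : ∑ e, (if f e = Fin.last s ∧ msrc ends o e = v then 1 else 0 : ℕ)
            = ∑ u, (if f (m u) = Fin.last s ∧ msrc ends o (m u) = v then 1 else 0 : ℕ)
              + ∑ x : {x : E // x ∉ univ.image m},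
                  (if f x.val = Fin.last s ∧ msrc ends o x.val = v then 1 else 0 : ℕ) :=
          sum_split_image hminj _
        unfold outc
        rw [hs]
        have hA : ∑ u, (if f (m u) = Fin.last s ∧ msrc ends o (m u) = v then 1 else 0 : ℕ)
            = ∑ u, (if msrc ends o (m u) = v then 1 else 0 : ℕ) :=
          Finset.sum_congr rfl fun u _ => by simp [hfm u]
        have hA1 := hmsrc1 v
        have hB : ∑ x : {x : E // x ∉ univ.image m},
            (if f x.val = Fin.last s ∧ msrc ends o x.val = v then 1 else 0 : ℕ) = 0 :=
          Finset.sum_eq_zero fun x _ => by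
            simp [hfe₂ x, (Fin.castSucc_lt_last (f₂ x)).ne]
        omega
      · have hs : ∑ e, (if f e = Fin.last s ∧ mtgt ends o e = v then 1 else 0 : ℕ)
            = ∑ u, (if f (m u) = Fin.last s ∧ mtgt ends o (m u) = v then 1 else 0 : ℕ)
              + ∑ x : {x : E // x ∉ univ.image m},
                  (if f x.val = Fin.last s ∧ mtgt ends o x.val = v then 1 else 0 : ℕ) :=
          sum_split_image hminj _
        unfold inc
        rw [hs]
        have hA : ∑ u, (if f (m u) = Fin.last s ∧ mtgt ends o (m u) = v then 1 else 0 : ℕ)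
            = ∑ u, (if mtgt ends o (m u) = v then 1 else 0 : ℕ) :=
          Finset.sum_congr rfl fun u _ => by simp [hfm u]
        have hA1 := hmtgt1 v
        have hB : ∑ x : {x : E // x ∉ univ.image m},
            (if f x.val = Fin.last s ∧ mtgt ends o x.val = v then 1 else 0 : ℕ) = 0 :=
          Finset.sum_eq_zero fun x _ => by
            simp [hfe₂ x, (Fin.castSucc_lt_last (f₂ x)).ne]
        omega
    · intro j
      have hj := hf₂ j v
      constructor
      · have hs : ∑ e, (if f e = j.castSucc ∧ msrc ends o e = v then 1 else 0 : ℕ)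
            = ∑ u, (if f (m u) = j.castSucc ∧ msrc ends o (m u) = v then 1 else 0 : ℕ)
              + ∑ x : {x : E // x ∉ univ.image m},
                  (if f x.val = j.castSucc ∧ msrc ends o x.val = v then 1 else 0 : ℕ) :=
          sum_split_image hminj _
        unfold outc
        rw [hs]
        have hA : ∑ u, (if f (m u) = j.castSucc ∧ msrc ends o (m u) = v then 1 else 0 : ℕ)
            = 0 :=
          Finset.sum_eq_zero fun u _ => by simp [hfm u, (Fin.castSucc_lt_last j).ne']
        have hB : ∑ x : {x : E // x ∉ univ.image m},
            (if f x.val = j.castSucc ∧ msrc ends o x.val = v then 1 else 0 : ℕ)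
            = outc (fun x : {x : E // x ∉ univ.image m} => ends x.val)
                (fun x => o x.val) f₂ j v := by
          unfold outc
          refine Finset.sum_congr rfl fun x _ => ?_
          have : msrc (fun x : {x : E // x ∉ univ.image m} => ends x.val)
              (fun x => o x.val) x = msrc ends o x.val := rfl
          rw [this, hfe₂ x]
          simp [Fin.castSucc_inj]
        rw [hB]
        have := hj.1
        omega
      · have hs : ∑ e, (if f e = j.castSucc ∧ mtgt ends o e = v then 1 else 0 : ℕ)
            = ∑ u, (if f (m u) = j.castSucc ∧ mtgt ends o (m u) = v then 1 else 0 : ℕ)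
              + ∑ x : {x : E // x ∉ univ.image m},
                  (if f x.val = j.castSucc ∧ mtgt ends o x.val = v then 1 else 0 : ℕ) :=
          sum_split_image hminj _
        unfold inc
        rw [hs]
        have hA : ∑ u, (if f (m u) = j.castSucc ∧ mtgt ends o (m u) = v then 1 else 0 : ℕ)
            = 0 :=
          Finset.sum_eq_zero fun u _ => by simp [hfm u, (Fin.castSucc_lt_last j).ne']
        have hB : ∑ x : {x : E // x ∉ univ.image m},
            (if f x.val = j.castSucc ∧ mtgt ends o x.val = v then 1 else 0 : ℕ)
            = inc (fun x : {x : E // x ∉ univ.image m} => ends x.val)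
                (fun x => o x.val) f₂ j v := by
          unfold inc
          refine Finset.sum_congr rfl fun x _ => ?_
          have : mtgt (fun x : {x : E // x ∉ univ.image m} => ends x.val)
              (fun x => o x.val) x = mtgt ends o x.val := rfl
          rw [this, hfe₂ x]
          simp [Fin.castSucc_inj]
        rw [hB]
        have := hj.2
        omega


-- Pairing up a list into phantom edges
def pairUp : List V → List (V × V)
  | [] => []
  | [_] => []
  | a :: b :: t => (a, b) :: pairUp t

lemma pairUp_cnt (v : V) : ∀ L : List V, Even L.length →
    ((pairUp L).map (fun p => cnt p v)).sum = L.count v := by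
  intro L
  induction L using pairUp.induct with
  | case1 => simp [pairUp]
  | case2 a => intro h; simp at h
  | case3 a b t ih =>
    intro h
    have ht : Even t.length := by
      simp only [List.length_cons] at h
      obtain ⟨k, hk⟩ := h
      exact ⟨k - 1, by omega⟩
    have hih := ih ht
    rw [pairUp, List.map_cons, List.sum_cons, hih, List.count_cons, List.count_cons]
    unfold cnt
    by_cases ha : a = v <;> by_cases hb : b = v <;> simp [ha, hb] <;> omega

lemma pairUp_mem {p : V × V} : ∀ {L : List V}, p ∈ pairUp L → p.1 ∈ L ∧ p.2 ∈ L := by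
  intro L
  induction L using pairUp.induct with
  | case1 => simp [pairUp]
  | case2 a => simp [pairUp]
  | case3 a b t ih =>
    intro h
    rw [pairUp, List.mem_cons] at h
    rcases h with h | h
    · rw [h]
      simp
    · have := ih h
      constructor <;> simp [this.1, this.2]

section EE
variable {E : Type*} [Fintype E] [DecidableEq E]

lemma sum_fin_get (φ : V × V → ℕ) : ∀ P : List (V × V),
    ∑ i : Fin P.length, φ (P.get i) = (P.map φ).sum := by
  intro P
  induction P with
  | nil => simp
  | cons a t ih =>
    simp [Fin.sum_univ_succ, ih]

lemma sum_mdeg (ends : E → V × V) : ∑ v, mdeg ends v = 2 * Fintype.card E := by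
  unfold mdeg
  rw [Finset.sum_comm]
  have : ∀ e, ∑ v, cnt (ends e) v = 2 := by
    intro e
    unfold cnt
    rw [Finset.sum_add_distrib]
    simp [Finset.sum_ite_eq']
  rw [Finset.sum_congr rfl (fun e _ => this e)]
  simp [mul_comm]

theorem core (r : ℕ) (hr : 1 ≤ r) (ends : E → V × V)
    (hdeg : ∀ v, mdeg ends v = 0 ∨ mdeg ends v = 1 ∨ mdeg ends v = 2 * r) :
    ∃ (o : E → Bool) (f : E → Fin r),
      (∀ (i : Fin r) (v : V), outc ends o f i v ≤ 1 ∧ inc ends o f i v ≤ 1) ∧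
      (∀ v, mdeg ends v = 2 * r → ∀ i : Fin r,
        outc ends o f i v = 1 ∧ inc ends o f i v = 1) := by
  classical
  have hle : ∀ v, mdeg ends v ≤ 2 * r := by
    intro v
    rcases hdeg v with h | h | h <;> omega
  set L : List V :=
    (Finset.univ.val.bind fun v => Multiset.replicate (2 * r - mdeg ends v) v).toList with hL
  have hcount : ∀ v, L.count v = 2 * r - mdeg ends v := by
    intro v
    have h1 : L.count v = Multiset.count v
        (Finset.univ.val.bind fun v => Multiset.replicate (2 * r - mdeg ends v) v) := by
      rw [hL, ← Multiset.coe_count, Multiset.coe_toList]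
    rw [h1, Multiset.count_bind]
    have h2 : Multiset.map (fun b => Multiset.count v (Multiset.replicate (2 * r - mdeg ends b) b))
        Finset.univ.val = Multiset.map (fun b => if b = v then 2 * r - mdeg ends b else 0)
        Finset.univ.val := by
      refine Multiset.map_congr rfl fun b _ => ?_
      rw [Multiset.count_replicate]
    rw [h2]
    have h3 : (Multiset.map (fun b => if b = v then 2 * r - mdeg ends b else 0)
        Finset.univ.val).sum = ∑ b, if b = v then 2 * r - mdeg ends b else 0 := rfl
    rw [h3, Finset.sum_ite_eq' Finset.univ v (fun b => 2 * r - mdeg ends b)]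
    simp
  have hlen : L.length + ∑ v, mdeg ends v = 2 * r * Fintype.card V := by
    have h1 : L.length = ∑ v, (2 * r - mdeg ends v) := by
      rw [hL, Multiset.length_toList, Multiset.card_bind]
      have : Multiset.map (Multiset.card ∘ fun v => Multiset.replicate (2 * r - mdeg ends v) v)
          Finset.univ.val = Multiset.map (fun v => 2 * r - mdeg ends v) Finset.univ.val := by
        refine Multiset.map_congr rfl fun b _ => ?_
        simp [Multiset.card_replicate]
      rw [this]
      rfl
    rw [h1, ← Finset.sum_add_distrib]
    rw [Finset.sum_congr rfl (fun v _ => by have := hle v; omega :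
      ∀ v ∈ Finset.univ, 2 * r - mdeg ends v + mdeg ends v = 2 * r)]
    simp [mul_comm]
  have heL : Even L.length := by
    have hm := sum_mdeg ends
    have h2 : 2 * r * Fintype.card V = 2 * (r * Fintype.card V) := by ring
    exact ⟨r * Fintype.card V - Fintype.card E, by omega⟩
  set P : List (V × V) := pairUp L with hP
  set ends'' : E ⊕ Fin P.length → V × V :=
    Sum.elim ends (fun j => P.get j) with hends''
  have hphX : ∀ j : Fin P.length, (P.get j).1 ∈ L ∧ (P.get j).2 ∈ L := by
    intro j
    have hm : P.get j ∈ P := by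
      have := List.get_mem P j
      simpa using this
    exact pairUp_mem hm
  have hdeg'' : ∀ v, mdeg ends'' v = 2 * r := by
    intro v
    have h1 : mdeg ends'' v = mdeg ends v + ∑ j : Fin P.length, cnt (P.get j) v := by
      unfold mdeg
      rw [Fintype.sum_sum_type]
      rfl
    rw [h1, sum_fin_get (fun p => cnt p v) P, pairUp_cnt v L heL, hcount v]
    have := hle v
    omega
  obtain ⟨o'', ho''⟩ := euler_orient ends'' (fun v => by rw [hdeg'' v]; exact ⟨r, by ring⟩)
  have houtr : ∀ v, outdeg ends'' o'' v = r := by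
    intro v
    have h1 := outdeg_add_indeg ends'' o'' v
    have h2 := ho'' v
    have h3 := hdeg'' v
    omega
  have hinr : ∀ v, indeg ends'' o'' v = r := by
    intro v
    have h1 := outdeg_add_indeg ends'' o'' v
    have h2 := ho'' v
    have h3 := hdeg'' v
    omega
  obtain ⟨f'', hf''⟩ := peel r ends'' o'' houtr hinr
  refine ⟨fun e => o'' (Sum.inl e), fun e => f'' (Sum.inl e), ?_, ?_⟩
  all_goals
    have hbr_out : ∀ (i : Fin r) (v : V), outc ends'' o'' f'' i v =
        outc ends (fun e => o'' (Sum.inl e)) (fun e => f'' (Sum.inl e)) i v +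
          ∑ j : Fin P.length,
            (if f'' (Sum.inr j) = i ∧ msrc ends'' o'' (Sum.inr j) = v then 1 else 0 : ℕ) := by
      intro i v
      unfold outc
      rw [Fintype.sum_sum_type]
      rfl
    have hbr_in : ∀ (i : Fin r) (v : V), inc ends'' o'' f'' i v =
        inc ends (fun e => o'' (Sum.inl e)) (fun e => f'' (Sum.inl e)) i v +
          ∑ j : Fin P.length,
            (if f'' (Sum.inr j) = i ∧ mtgt ends'' o'' (Sum.inr j) = v then 1 else 0 : ℕ) := by
      intro i v
      unfold inc
      rw [Fintype.sum_sum_type]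
      rfl
  · intro i v
    have h1 := (hf'' i v).1
    have h2 := (hf'' i v).2
    rw [hbr_out i v] at h1
    rw [hbr_in i v] at h2
    omega
  · intro v hv i
    have hnotL : v ∉ L := by
      rw [← List.count_eq_zero, hcount v, hv]
      omega
    have hph0 : ∀ j : Fin P.length, msrc ends'' o'' (Sum.inr j) ≠ v ∧
        mtgt ends'' o'' (Sum.inr j) ≠ v := by
      intro j
      have h1 := hphX j
      have hsrc : msrc ends'' o'' (Sum.inr j) = (P.get j).1 ∨
          msrc ends'' o'' (Sum.inr j) = (P.get j).2 := by
        unfold msrc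
        by_cases h : o'' (Sum.inr j) <;> simp [h, hends'']
      have htgt : mtgt ends'' o'' (Sum.inr j) = (P.get j).1 ∨
          mtgt ends'' o'' (Sum.inr j) = (P.get j).2 := by
        unfold mtgt
        by_cases h : o'' (Sum.inr j) <;> simp [h, hends'']
      constructor
      · rcases hsrc with h | h <;> rw [h] <;> intro hc <;> rw [hc] at h1 <;>
          [exact hnotL h1.1; exact hnotL h1.2]
      · rcases htgt with h | h <;> rw [h] <;> intro hc <;> rw [hc] at h1 <;>
          [exact hnotL h1.1; exact hnotL h1.2]
    have h1 := (hf'' i v).1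
    have h2 := (hf'' i v).2
    rw [hbr_out i v] at h1
    rw [hbr_in i v] at h2
    have hz1 : ∑ j : Fin P.length,
        (if f'' (Sum.inr j) = i ∧ msrc ends'' o'' (Sum.inr j) = v then 1 else 0 : ℕ) = 0 :=
      Finset.sum_eq_zero fun j _ => by simp [(hph0 j).1]
    have hz2 : ∑ j : Fin P.length,
        (if f'' (Sum.inr j) = i ∧ mtgt ends'' o'' (Sum.inr j) = v then 1 else 0 : ℕ) = 0 :=
      Finset.sum_eq_zero fun j _ => by simp [(hph0 j).2]
    omega

end EE
section Helpers
variable {E : Type*} [Fintype E] [DecidableEq E]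

lemma sum_split_one (e₀ : E) (φ : E → ℕ) :
    ∑ e, φ e = φ e₀ + ∑ x : {x : E // x ≠ e₀}, φ x.val := by
  classical
  rw [← Finset.add_sum_erase _ φ (mem_univ e₀)]
  congr 1
  rw [Finset.sum_subtype (p := fun x => x ≠ e₀) (univ.erase e₀) (by intro x; simp) φ]

lemma sum_split_two {e₁ e₂ : E} (hne : e₁ ≠ e₂) (φ : E → ℕ) :
    ∑ e, φ e = φ e₁ + φ e₂ + ∑ x : {x : E // x ≠ e₁ ∧ x ≠ e₂}, φ x.val := by
  classical
  rw [← Finset.add_sum_erase _ φ (mem_univ e₁),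
    ← Finset.add_sum_erase _ φ (Finset.mem_erase.mpr ⟨hne.symm, mem_univ e₂⟩), ← add_assoc]
  congr 1
  rw [Finset.sum_subtype (p := fun x => x ≠ e₁ ∧ x ≠ e₂)
    ((univ.erase e₁).erase e₂) (by intro x; simp; tauto) φ]

lemma outc_le_outdeg {r : ℕ} (ends : E → V × V) (o : E → Bool) (f : E → Fin r)
    (i : Fin r) (x : V) : outc ends o f i x ≤ outdeg ends o x := by
  refine Finset.sum_le_sum fun e _ => ?_
  by_cases h : f e = i ∧ msrc ends o e = x
  · simp [h, h.2]
  · simp only [if_neg h]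
    omega

lemma inc_le_indeg {r : ℕ} (ends : E → V × V) (o : E → Bool) (f : E → Fin r)
    (i : Fin r) (x : V) : inc ends o f i x ≤ indeg ends o x := by
  refine Finset.sum_le_sum fun e _ => ?_
  by_cases h : f e = i ∧ mtgt ends o e = x
  · simp [h, h.2]
  · simp only [if_neg h]
    omega

lemma counts_zero {r : ℕ} (ends : E → V × V) (o : E → Bool) (f : E → Fin r)
    (i : Fin r) (x : V) (h : mdeg ends x = 0) :
    outc ends o f i x = 0 ∧ inc ends o f i x = 0 := by
  have h1 := outdeg_add_indeg ends o x
  have h2 := outc_le_outdeg ends o f i x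
  have h3 := inc_le_indeg ends o f i x
  omega

lemma cnt_two {p : V × V} {v : V} (h : cnt p v = 2) : p.1 = v ∧ p.2 = v := by
  unfold cnt at h
  by_cases h1 : p.1 = v <;> by_cases h2 : p.2 = v <;> simp [h1, h2] at h <;> tauto

lemma cnt_one {p : V × V} {v : V} (h : cnt p v = 1) :
    ∃ a, a ≠ v ∧ (p = (v, a) ∨ p = (a, v)) := by
  unfold cnt at h
  by_cases h1 : p.1 = v <;> by_cases h2 : p.2 = v <;> simp [h1, h2] at h
  · exact ⟨p.2, h2, Or.inl (by rw [← h1])⟩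
  · exact ⟨p.1, h1, Or.inr (by rw [← h2])⟩

lemma cnt_cases (p : V × V) (v w : V) (hvw : v ≠ w) (hp : cnt p v = 1) :
    ∀ a, a ≠ v → (p = (v, a) ∨ p = (a, v)) → cnt p w = if a = w then 1 else 0 := by
  intro a ha hpat
  rcases hpat with h | h <;> rw [h] <;> unfold cnt <;>
    by_cases haw : a = w <;> simp [haw, hvw, Ne.symm hvw]

end Helpers

universe umt

theorem mmt (r : ℕ) (hr : 1 ≤ r) : ∀ (n : ℕ) {E : Type umt} [Fintype E] [DecidableEq E]
    (ends : E → V × V),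
    (Finset.univ.filter (fun v => mdeg ends v = 2)).card = n →
    (∀ v, mdeg ends v = 0 ∨ mdeg ends v = 1 ∨ mdeg ends v = 2 ∨ mdeg ends v = 2 * r) →
    ∃ (o : E → Bool) (f : E → Fin r),
      (∀ (i : Fin r) (v : V), outc ends o f i v ≤ 1 ∧ inc ends o f i v ≤ 1) ∧
      (∀ v, mdeg ends v = 2 * r → ∀ i : Fin r,
        outc ends o f i v = 1 ∧ inc ends o f i v = 1) ∧
      (∀ v, mdeg ends v = 2 → ∀ i : Fin r,
        (outc ends o f i v = 1 ∧ inc ends o f i v = 1) ∨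
        (outc ends o f i v = 0 ∧ inc ends o f i v = 0)) := by
  intro n
  induction n using Nat.strong_induction_on with
  | _ n ih =>
    intro E _ _ ends hn hdeg
    classical
    by_cases h2r : 2 * r = 2
    · -- r = 1 : all degrees are 0, 1 or 2 = 2r, use core directly
      obtain ⟨o, f, ha, hb⟩ := core r hr ends (by
        intro v
        rcases hdeg v with h | h | h | h
        · exact Or.inl h
        · exact Or.inr (Or.inl h)
        · exact Or.inr (Or.inr (by omega))
        · exact Or.inr (Or.inr h))
      exact ⟨o, f, ha, hb, fun v hv i => Or.inl (hb v (by omega) i)⟩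
    by_cases hn0 : n = 0
    · -- no degree-2 vertices
      have hno2 : ∀ v, mdeg ends v ≠ 2 := by
        intro v hv
        have hmem : v ∈ Finset.univ.filter (fun v => mdeg ends v = 2) := by
          simp [hv]
        have hfe : Finset.univ.filter (fun v => mdeg ends v = 2) = ∅ :=
          Finset.card_eq_zero.mp (by rw [hn, hn0])
        rw [hfe] at hmem
        simp at hmem
      obtain ⟨o, f, ha, hb⟩ := core r hr ends (by
        intro v
        rcases hdeg v with h | h | h | h
        · exact Or.inl h
        · exact Or.inr (Or.inl h)
        · exact absurd h (hno2 v)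
        · exact Or.inr (Or.inr h))
      exact ⟨o, f, ha, hb, fun v hv => absurd hv (hno2 v)⟩
    -- there is a degree-2 vertex v₀
    have hne0 : (Finset.univ.filter (fun v => mdeg ends v = 2)).Nonempty := by
      rw [← Finset.card_pos, hn]
      omega
    obtain ⟨v₀, hv₀mem⟩ := hne0
    have hv₀ : mdeg ends v₀ = 2 := (Finset.mem_filter.mp hv₀mem).2
    by_cases hloop : ∃ e₀, cnt (ends e₀) v₀ = 2
    · -- CASE A : a loop at v₀
      obtain ⟨e₀, he₀⟩ := hloop
      have hloopends := cnt_two he₀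
      have hrest : ∀ x, x ≠ e₀ → cnt (ends x) v₀ = 0 := by
        intro x hx
        by_contra hc
        have hsub : ({e₀, x} : Finset E) ⊆ Finset.univ := Finset.subset_univ _
        have hsum : cnt (ends e₀) v₀ + cnt (ends x) v₀ ≤ mdeg ends v₀ := by
          have hp : ∑ e ∈ ({e₀, x} : Finset E), cnt (ends e) v₀ =
              cnt (ends e₀) v₀ + cnt (ends x) v₀ :=
            Finset.sum_pair (fun h => hx h.symm)
          rw [mdeg, ← hp]
          exact Finset.sum_le_sum_of_subset hsub
        omega
      -- reduced multigraph: drop e₀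
      have hmdeg' : ∀ w, w ≠ v₀ →
          mdeg (fun x : {x : E // x ≠ e₀} => ends x.val) w = mdeg ends w := by
        intro w hw
        have hs := sum_split_one e₀ (fun e => cnt (ends e) w)
        have hc0 : cnt (ends e₀) w = 0 := by
          unfold cnt
          simp [hloopends.1, hloopends.2, Ne.symm hw]
        have hb1 : mdeg (fun x : {x : E // x ≠ e₀} => ends x.val) w =
            ∑ x : {x : E // x ≠ e₀}, cnt (ends x.val) w := rfl
        have hb2 : mdeg ends w = ∑ e, cnt (ends e) w := rfl
        omega
      have hmdeg'v₀ : mdeg (fun x : {x : E // x ≠ e₀} => ends x.val) v₀ = 0 := by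
        have hs := sum_split_one e₀ (fun e => cnt (ends e) v₀)
        have hb1 : mdeg (fun x : {x : E // x ≠ e₀} => ends x.val) v₀ =
            ∑ x : {x : E // x ≠ e₀}, cnt (ends x.val) v₀ := rfl
        have hz0 : ∑ x : {x : E // x ≠ e₀}, cnt (ends x.val) v₀ = 0 :=
          Finset.sum_eq_zero fun x _ => hrest x.val x.2
        omega
      have hfil : Finset.univ.filter
          (fun v => mdeg (fun x : {x : E // x ≠ e₀} => ends x.val) v = 2) =
          (Finset.univ.filter (fun v => mdeg ends v = 2)).erase v₀ := by
        ext w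
        simp only [Finset.mem_filter, Finset.mem_univ, true_and, Finset.mem_erase]
        constructor
        · intro hw
          have hwv : w ≠ v₀ := by
            intro hc
            rw [hc, hmdeg'v₀] at hw
            omega
          exact ⟨hwv, by rw [← hmdeg' w hwv]; exact hw⟩
        · rintro ⟨hwv, hw⟩
          rw [hmdeg' w hwv]
          exact hw
      obtain ⟨o', f', ha', hb', hc'⟩ := ih (n - 1) (by omega)
        (fun x : {x : E // x ≠ e₀} => ends x.val)
        (by rw [hfil, Finset.card_erase_of_mem hv₀mem, hn])
        (by
          intro v
          by_cases hv : v = v₀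
          · rw [hv, hmdeg'v₀]; omega
          · rw [hmdeg' v hv]; exact hdeg v)
      set i₀ : Fin r := ⟨0, hr⟩ with hi₀
      refine ⟨fun e => if h : e = e₀ then true else o' ⟨e, h⟩,
        fun e => if h : e = e₀ then i₀ else f' ⟨e, h⟩, ?_⟩
      set o : E → Bool := fun e => if h : e = e₀ then true else o' ⟨e, h⟩ with ho
      set f : E → Fin r := fun e => if h : e = e₀ then i₀ else f' ⟨e, h⟩ with hf
      have hsrc₀ : msrc ends o e₀ = v₀ := by
        unfold msrc
        rcases Bool.eq_false_or_eq_true (o e₀) with h | h <;>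
          simp [h, hloopends.1, hloopends.2]
      have htgt₀ : mtgt ends o e₀ = v₀ := by
        unfold mtgt
        rcases Bool.eq_false_or_eq_true (o e₀) with h | h <;>
          simp [h, hloopends.1, hloopends.2]
      have hfe₀ : f e₀ = i₀ := by rw [hf]; simp
      have hout : ∀ (i : Fin r) w, outc ends o f i w =
          (if i = i₀ ∧ w = v₀ then 1 else 0) +
            outc (fun x : {x : E // x ≠ e₀} => ends x.val) o' f' i w := by
        intro i w
        have hs := sum_split_one e₀ (fun e => if f e = i ∧ msrc ends o e = w then 1 else 0)
        rw [outc, hs, hfe₀, hsrc₀]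
        have h2 : ∑ x : {x : E // x ≠ e₀},
            (if f x.val = i ∧ msrc ends o x.val = w then 1 else 0 : ℕ) =
            outc (fun x : {x : E // x ≠ e₀} => ends x.val) o' f' i w := by
          rw [outc]
          refine Finset.sum_congr rfl fun x _ => ?_
          have h3 : f x.val = f' x := by rw [hf]; simp [x.2]
          have h4 : msrc ends o x.val =
              msrc (fun x : {x : E // x ≠ e₀} => ends x.val) o' x := by
            unfold msrc
            rw [ho]
            simp [x.2]
          rw [h3, h4]
        rw [h2]
        congr 1
        exact if_congr (by constructor <;> rintro ⟨x1, x2⟩ <;> exact ⟨x1.symm, x2.symm⟩) rfl rfl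
      have hin : ∀ (i : Fin r) w, inc ends o f i w =
          (if i = i₀ ∧ w = v₀ then 1 else 0) +
            inc (fun x : {x : E // x ≠ e₀} => ends x.val) o' f' i w := by
        intro i w
        have hs := sum_split_one e₀ (fun e => if f e = i ∧ mtgt ends o e = w then 1 else 0)
        rw [inc, hs, hfe₀, htgt₀]
        have h2 : ∑ x : {x : E // x ≠ e₀},
            (if f x.val = i ∧ mtgt ends o x.val = w then 1 else 0 : ℕ) =
            inc (fun x : {x : E // x ≠ e₀} => ends x.val) o' f' i w := by
          rw [inc]
          refine Finset.sum_congr rfl fun x _ => ?_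
          have h3 : f x.val = f' x := by rw [hf]; simp [x.2]
          have h4 : mtgt ends o x.val =
              mtgt (fun x : {x : E // x ≠ e₀} => ends x.val) o' x := by
            unfold mtgt
            rw [ho]
            simp [x.2]
          rw [h3, h4]
        rw [h2]
        congr 1
        exact if_congr (by constructor <;> rintro ⟨x1, x2⟩ <;> exact ⟨x1.symm, x2.symm⟩) rfl rfl
      have hz : ∀ i : Fin r, outc (fun x : {x : E // x ≠ e₀} => ends x.val) o' f' i v₀ = 0 ∧
          inc (fun x : {x : E // x ≠ e₀} => ends x.val) o' f' i v₀ = 0 :=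
        fun i => counts_zero _ o' f' i v₀ hmdeg'v₀
      refine ⟨?_, ?_, ?_⟩
      · intro i w
        rw [hout i w, hin i w]
        by_cases hw : w = v₀
        · subst hw
          rw [(hz i).1, (hz i).2]
          by_cases hi : i = i₀ <;> simp [hi]
        · obtain ⟨h1a, h1b⟩ := ha' i w
          have hiw : ¬(i = i₀ ∧ w = v₀) := fun hc => hw hc.2
          simp only [if_neg hiw]
          omega
      · intro w hw i
        have hwv : w ≠ v₀ := by intro hc; rw [hc, hv₀] at hw; omega
        rw [hout i w, hin i w]
        obtain ⟨h1a, h1b⟩ := hb' w (by rw [hmdeg' w hwv]; exact hw) i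
        have hiw : ¬(i = i₀ ∧ w = v₀) := fun hc => hwv hc.2
        simp only [if_neg hiw]
        omega
      · intro w hw i
        by_cases hwv : w = v₀
        · subst hwv
          rw [hout i w, hin i w, (hz i).1, (hz i).2]
          by_cases hi : i = i₀
          · left
            constructor <;> simp [hi]
          · right
            constructor <;> simp [hi]
        · have h1 := hc' w (by rw [hmdeg' w hwv]; exact hw) i
          rw [hout i w, hin i w]
          have hiw : ¬(i = i₀ ∧ w = v₀) := fun hc => hwv hc.2
          simp only [if_neg hiw, zero_add]
          exact h1
    · -- CASE B : two distinct edges at v₀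
      push_neg at hloop
      have hc1 : ∀ e, cnt (ends e) v₀ ≤ 1 := by
        intro e
        have h1 := hloop e
        have h2 : cnt (ends e) v₀ ≤ 2 := by unfold cnt; split_ifs <;> omega
        omega
      set I : Finset E := Finset.univ.filter (fun e => cnt (ends e) v₀ ≠ 0) with hI
      have hIsum : ∑ e ∈ I, cnt (ends e) v₀ = 2 := by
        rw [hI, Finset.sum_filter_ne_zero]
        exact hv₀
      have hIone : ∀ e ∈ I, cnt (ends e) v₀ = 1 := by
        intro e he
        rw [hI, Finset.mem_filter] at he
        have := hc1 e
        omega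
      have hIcard : I.card = 2 := by
        have h1 : ∑ e ∈ I, cnt (ends e) v₀ = ∑ e ∈ I, 1 :=
          Finset.sum_congr rfl hIone
        rw [h1, Finset.sum_const, smul_eq_mul, mul_one] at hIsum
        exact hIsum
      obtain ⟨e₁, e₂, hne, hIeq⟩ := Finset.card_eq_two.mp hIcard
      have hcnt₁ : cnt (ends e₁) v₀ = 1 := hIone e₁ (by rw [hIeq]; simp)
      have hcnt₂ : cnt (ends e₂) v₀ = 1 := hIone e₂ (by rw [hIeq]; simp)
      have hrest : ∀ x, x ≠ e₁ → x ≠ e₂ → cnt (ends x) v₀ = 0 := by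
        intro x h1 h2
        by_contra hc
        have : x ∈ I := by rw [hI, Finset.mem_filter]; exact ⟨mem_univ x, hc⟩
        rw [hIeq] at this
        simp [h1, h2] at this
      obtain ⟨a, ha, hpat₁⟩ := cnt_one hcnt₁
      obtain ⟨b, hb, hpat₂⟩ := cnt_one hcnt₂
      set ends₂ : Option {x : E // x ≠ e₁ ∧ x ≠ e₂} → V × V :=
        fun z => Option.elim z (a, b) (fun x => ends x.val) with hends₂
      have hcab : ∀ w, cnt (a, b) w = (if a = w then 1 else 0) + (if b = w then 1 else 0) := by
        intro w
        unfold cnt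
        rfl
      have hmdeg' : ∀ w, w ≠ v₀ → mdeg ends₂ w = mdeg ends w := by
        intro w hw
        have hb1 : mdeg ends₂ w = cnt (a, b) w +
            ∑ x : {x : E // x ≠ e₁ ∧ x ≠ e₂}, cnt (ends x.val) w := by
          rw [mdeg, Fintype.sum_option]
          rfl
        have hb2 := sum_split_two hne (fun e => cnt (ends e) w)
        have hb3 : mdeg ends w = ∑ e, cnt (ends e) w := rfl
        have hw1 := cnt_cases (ends e₁) v₀ w (fun h => hw h.symm) hcnt₁ a ha hpat₁
        have hw2 := cnt_cases (ends e₂) v₀ w (fun h => hw h.symm) hcnt₂ b hb hpat₂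
        have hw3 := hcab w
        omega
      have hmdeg'v₀ : mdeg ends₂ v₀ = 0 := by
        have hb1 : mdeg ends₂ v₀ = cnt (a, b) v₀ +
            ∑ x : {x : E // x ≠ e₁ ∧ x ≠ e₂}, cnt (ends x.val) v₀ := by
          rw [mdeg, Fintype.sum_option]
          rfl
        have hz0 : ∑ x : {x : E // x ≠ e₁ ∧ x ≠ e₂}, cnt (ends x.val) v₀ = 0 :=
          Finset.sum_eq_zero fun x _ => hrest x.val x.2.1 x.2.2
        have hw3 := hcab v₀
        rw [hb1, hz0, hw3]
        simp [ha, hb]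
      have hfil : Finset.univ.filter (fun v => mdeg ends₂ v = 2) =
          (Finset.univ.filter (fun v => mdeg ends v = 2)).erase v₀ := by
        ext w
        simp only [Finset.mem_filter, Finset.mem_univ, true_and, Finset.mem_erase]
        constructor
        · intro hw
          have hwv : w ≠ v₀ := by
            intro hc
            rw [hc, hmdeg'v₀] at hw
            omega
          exact ⟨hwv, by rw [← hmdeg' w hwv]; exact hw⟩
        · rintro ⟨hwv, hw⟩
          rw [hmdeg' w hwv]
          exact hw
      obtain ⟨o', f', ha', hb', hc'⟩ := ih (n - 1) (by omega) ends₂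
        (by rw [hfil, Finset.card_erase_of_mem hv₀mem, hn])
        (by
          intro v
          by_cases hv : v = v₀
          · rw [hv, hmdeg'v₀]; omega
          · rw [hmdeg' v hv]; exact hdeg v)
      set oT : E → Bool := fun e => decide ((ends e).2 = v₀) with hoT
      set oS : E → Bool := fun e => decide ((ends e).1 = v₀) with hoS
      refine ⟨fun e => if h1 : e = e₁ then (if o' none then oT e else oS e)
        else if h2 : e = e₂ then (if o' none then oS e else oT e)
        else o' (some ⟨e, h1, h2⟩),
        fun e => if h1 : e = e₁ then f' none else if h2 : e = e₂ then f' none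
        else f' (some ⟨e, h1, h2⟩), ?_⟩
      set o : E → Bool := fun e => if h1 : e = e₁ then (if o' none then oT e else oS e)
        else if h2 : e = e₂ then (if o' none then oS e else oT e)
        else o' (some ⟨e, h1, h2⟩) with ho
      set f : E → Fin r := fun e => if h1 : e = e₁ then f' none
        else if h2 : e = e₂ then f' none else f' (some ⟨e, h1, h2⟩) with hf
      have hoe₁ : o e₁ = (if o' none then oT e₁ else oS e₁) := by rw [ho]; simp
      have hoe₂ : o e₂ = (if o' none then oS e₂ else oT e₂) := by
        rw [ho]
        simp [hne.symm]
      have hf₁ : f e₁ = f' none := by rw [hf]; simp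
      have hf₂ : f e₂ = f' none := by rw [hf]; simp [hne.symm]
      have hfs : ∀ x : {x : E // x ≠ e₁ ∧ x ≠ e₂}, f x.val = f' (some x) := by
        intro x
        rw [hf]
        simp [x.2.1, x.2.2]
      have hos : ∀ x : {x : E // x ≠ e₁ ∧ x ≠ e₂}, o x.val = o' (some x) := by
        intro x
        rw [ho]
        simp [x.2.1, x.2.2]
      have hsrcs : ∀ x : {x : E // x ≠ e₁ ∧ x ≠ e₂},
          msrc ends o x.val = msrc ends₂ o' (some x) := by
        intro x
        unfold msrc
        rw [hos x]
        rfl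
      have htgts : ∀ x : {x : E // x ≠ e₁ ∧ x ≠ e₂},
          mtgt ends o x.val = mtgt ends₂ o' (some x) := by
        intro x
        unfold mtgt
        rw [hos x]
        rfl
      have hsrc₁ : msrc ends o e₁ = (if o' none then a else v₀) := by
        cases hd : o' none <;> rcases hpat₁ with hp | hp <;>
          simp [msrc, hoe₁, hd, hoT, hoS, hp, ha]
      have htgt₁ : mtgt ends o e₁ = (if o' none then v₀ else a) := by
        cases hd : o' none <;> rcases hpat₁ with hp | hp <;>
          simp [mtgt, hoe₁, hd, hoT, hoS, hp, ha]
      have hsrc₂ : msrc ends o e₂ = (if o' none then v₀ else b) := by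
        cases hd : o' none <;> rcases hpat₂ with hp | hp <;>
          simp [msrc, hoe₂, hd, hoT, hoS, hp, hb]
      have htgt₂ : mtgt ends o e₂ = (if o' none then b else v₀) := by
        cases hd : o' none <;> rcases hpat₂ with hp | hp <;>
          simp [mtgt, hoe₂, hd, hoT, hoS, hp, hb]
      have hsrcn : msrc ends₂ o' none = (if o' none then a else b) := by
        cases hd : o' none <;> simp [msrc, hd, hends₂]
      have htgtn : mtgt ends₂ o' none = (if o' none then b else a) := by
        cases hd : o' none <;> simp [mtgt, hd, hends₂]
      -- count bridges
      have houtsplit : ∀ (i : Fin r) (w : V), outc ends o f i w =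
          (if f' none = i ∧ msrc ends o e₁ = w then 1 else 0) +
          (if f' none = i ∧ msrc ends o e₂ = w then 1 else 0) +
          ∑ x : {x : E // x ≠ e₁ ∧ x ≠ e₂},
            (if f' (some x) = i ∧ msrc ends₂ o' (some x) = w then 1 else 0) := by
        intro i w
        rw [outc, sum_split_two hne (fun e => if f e = i ∧ msrc ends o e = w then 1 else 0),
          hf₁, hf₂]
        congr 1
        refine Finset.sum_congr rfl fun x _ => ?_
        rw [hfs x, hsrcs x]
      have hinsplit : ∀ (i : Fin r) (w : V), inc ends o f i w =
          (if f' none = i ∧ mtgt ends o e₁ = w then 1 else 0) +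
          (if f' none = i ∧ mtgt ends o e₂ = w then 1 else 0) +
          ∑ x : {x : E // x ≠ e₁ ∧ x ≠ e₂},
            (if f' (some x) = i ∧ mtgt ends₂ o' (some x) = w then 1 else 0) := by
        intro i w
        rw [inc, sum_split_two hne (fun e => if f e = i ∧ mtgt ends o e = w then 1 else 0),
          hf₁, hf₂]
        congr 1
        refine Finset.sum_congr rfl fun x _ => ?_
        rw [hfs x, htgts x]
      have houtsplit' : ∀ (i : Fin r) (w : V), outc ends₂ o' f' i w =
          (if f' none = i ∧ msrc ends₂ o' none = w then 1 else 0) +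
          ∑ x : {x : E // x ≠ e₁ ∧ x ≠ e₂},
            (if f' (some x) = i ∧ msrc ends₂ o' (some x) = w then 1 else 0) := by
        intro i w
        rw [outc, Fintype.sum_option]
      have hinsplit' : ∀ (i : Fin r) (w : V), inc ends₂ o' f' i w =
          (if f' none = i ∧ mtgt ends₂ o' none = w then 1 else 0) +
          ∑ x : {x : E // x ≠ e₁ ∧ x ≠ e₂},
            (if f' (some x) = i ∧ mtgt ends₂ o' (some x) = w then 1 else 0) := by
        intro i w
        rw [inc, Fintype.sum_option]
      have hout : ∀ (i : Fin r) (w : V), w ≠ v₀ →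
          outc ends o f i w = outc ends₂ o' f' i w := by
        intro i w hw
        rw [houtsplit i w, houtsplit' i w, hsrc₁, hsrc₂, hsrcn]
        have hv0w : ¬ (v₀ = w) := fun h => hw h.symm
        cases hd : o' none <;> simp [hd, hv0w]
      have hin : ∀ (i : Fin r) (w : V), w ≠ v₀ →
          inc ends o f i w = inc ends₂ o' f' i w := by
        intro i w hw
        rw [hinsplit i w, hinsplit' i w, htgt₁, htgt₂, htgtn]
        have hv0w : ¬ (v₀ = w) := fun h => hw h.symm
        cases hd : o' none <;> simp [hd, hv0w]
      have hzv₀ : ∀ i : Fin r, outc ends₂ o' f' i v₀ = 0 ∧ inc ends₂ o' f' i v₀ = 0 :=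
        fun i => counts_zero ends₂ o' f' i v₀ hmdeg'v₀
      have hv₀out : ∀ i : Fin r, outc ends o f i v₀ = (if f' none = i then 1 else 0) := by
        intro i
        have h1 := (hzv₀ i).1
        rw [houtsplit' i v₀] at h1
        have hS : ∑ x : {x : E // x ≠ e₁ ∧ x ≠ e₂},
            (if f' (some x) = i ∧ msrc ends₂ o' (some x) = v₀ then 1 else 0) = 0 := by
          omega
        rw [houtsplit i v₀, hS, hsrc₁, hsrc₂]
        cases hd : o' none <;> simp [hd, ha, hb]
      have hv₀in : ∀ i : Fin r, inc ends o f i v₀ = (if f' none = i then 1 else 0) := by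
        intro i
        have h1 := (hzv₀ i).2
        rw [hinsplit' i v₀] at h1
        have hS : ∑ x : {x : E // x ≠ e₁ ∧ x ≠ e₂},
            (if f' (some x) = i ∧ mtgt ends₂ o' (some x) = v₀ then 1 else 0) = 0 := by
          omega
        rw [hinsplit i v₀, hS, htgt₁, htgt₂]
        cases hd : o' none <;> simp [hd, ha, hb]
      refine ⟨?_, ?_, ?_⟩
      · intro i w
        by_cases hw : w = v₀
        · subst hw
          rw [hv₀out i, hv₀in i]
          constructor <;> split <;> omega
        · rw [hout i w hw, hin i w hw]
          exact ha' i w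
      · intro w hw i
        have hwv : w ≠ v₀ := by intro hc; rw [hc, hv₀] at hw; omega
        rw [hout i w hwv, hin i w hwv]
        exact hb' w (by rw [hmdeg' w hwv]; exact hw) i
      · intro w hw i
        by_cases hwv : w = v₀
        · subst hwv
          rw [hv₀out i, hv₀in i]
          by_cases hi : f' none = i
          · left
            constructor <;> simp [hi]
          · right
            constructor <;> simp [hi]
        · rw [hout i w hwv, hin i w hwv]
          exact hc' w (by rw [hmdeg' w hwv]; exact hw) i


end E
end IC

open SimpleGraph

variable {V : Type*}

theorem bipartite_degrees_one_two_even_interval_coloring [Fintype V] [DecidableEq V]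
    (G : SimpleGraph V) [DecidableRel G.Adj] (r : ℕ) (hr : 1 ≤ r)
    (hbip : G.Colorable 2) (hdelta : G.maxDegree = 2 * r)
    (hdeg : ∀ v, G.degree v = 1 ∨ G.degree v = 2 ∨ G.degree v = 2 * r) :
    ∃ c, IsIntervalColoring G c ∧ (∀ e ∈ G.edgeSet, c e ≤ 2 * r) ∧
      ∀ v, G.degree v = 2 →
        ∃ i, 1 ≤ i ∧ i ≤ r ∧ colorsAt G c v = {2 * i - 1, 2 * i} := by
  classical
  set ends : {e : Sym2 V // e ∈ G.edgeFinset} → V × V := fun e => e.val.out with hends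
  have hmk : ∀ e : {e : Sym2 V // e ∈ G.edgeFinset}, Sym2.mk (ends e).1 (ends e).2 = e.val :=
    fun e => Quot.out_eq e.val
  have hsval : ∀ e : {e : Sym2 V // e ∈ G.edgeFinset}, s((ends e).1, (ends e).2) = e.val := by
    intro e
    rw [← hmk e]
  have hadj : ∀ e : {e : Sym2 V // e ∈ G.edgeFinset}, G.Adj (ends e).1 (ends e).2 := by
    intro e
    rw [← SimpleGraph.mem_edgeSet, hsval e]
    exact SimpleGraph.mem_edgeFinset.mp e.2
  have hneq : ∀ e : {e : Sym2 V // e ∈ G.edgeFinset}, (ends e).1 ≠ (ends e).2 :=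
    fun e => (hadj e).ne
  have hmem : ∀ (e : {e : Sym2 V // e ∈ G.edgeFinset}) (v : V),
      v ∈ e.val ↔ (v = (ends e).1 ∨ v = (ends e).2) := by
    intro e v
    rw [← hsval e, Sym2.mem_iff]
  have hdeg_eq : ∀ v, IC.mdeg ends v = G.degree v := by
    intro v
    have h1 : IC.mdeg ends v = ∑ e : {e : Sym2 V // e ∈ G.edgeFinset},
        (if v ∈ e.val then 1 else 0) := by
      unfold IC.mdeg IC.cnt
      refine Finset.sum_congr rfl fun e _ => ?_
      by_cases h1 : v = (ends e).1 <;> by_cases h2 : v = (ends e).2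
      · exact absurd (h1.symm.trans h2) (hneq e)
      · simp [hmem e, h1, h2, eq_comm, hneq e, (hneq e).symm]
      · simp [hmem e, h1, h2, eq_comm, hneq e, (hneq e).symm]
      · simp [hmem e, h1, h2, eq_comm, hneq e, (hneq e).symm]
    rw [h1, ← Finset.card_filter, ← SimpleGraph.card_incidenceFinset_eq_degree]
    apply Finset.card_bij (fun e _ => e.val)
    · intro e he
      rw [SimpleGraph.mem_incidenceFinset]
      rw [Finset.mem_filter] at he
      exact ⟨SimpleGraph.mem_edgeFinset.mp e.2, he.2⟩
    · intro e₁ _ e₂ _ h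
      exact Subtype.ext h
    · intro e he
      rw [SimpleGraph.mem_incidenceFinset] at he
      refine ⟨⟨e, SimpleGraph.mem_edgeFinset.mpr he.1⟩, ?_, rfl⟩
      rw [Finset.mem_filter]
      exact ⟨Finset.mem_univ _, he.2⟩
  obtain ⟨o, f, hA, hB, hC⟩ := IC.mmt r hr
    ((Finset.univ.filter (fun v => IC.mdeg ends v = 2)).card) ends rfl
    (by
      intro v
      rw [hdeg_eq v]
      rcases hdeg v with h | h | h
      · exact Or.inr (Or.inl h)
      · exact Or.inr (Or.inr (Or.inl h))
      · exact Or.inr (Or.inr (Or.inr h)))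
  obtain ⟨C⟩ := hbip
  have hst : ∀ e, (IC.msrc ends o e = (ends e).1 ∧ IC.mtgt ends o e = (ends e).2) ∨
      (IC.msrc ends o e = (ends e).2 ∧ IC.mtgt ends o e = (ends e).1) := by
    intro e
    unfold IC.msrc IC.mtgt
    cases h : o e <;> simp [h]
  have hsadj : ∀ e, G.Adj (IC.msrc ends o e) (IC.mtgt ends o e) := by
    intro e
    rcases hst e with ⟨h1, h2⟩ | ⟨h1, h2⟩ <;> rw [h1, h2]
    · exact hadj e
    · exact (hadj e).symm
  have hmem_st : ∀ (e) (v : V), v ∈ e.val ↔ (v = IC.msrc ends o e ∨ v = IC.mtgt ends o e) := by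
    intro e v
    rw [hmem e v]
    rcases hst e with ⟨h1, h2⟩ | ⟨h1, h2⟩ <;> rw [h1, h2] <;> tauto
  have hCne : ∀ e, C (IC.msrc ends o e) ≠ C (IC.mtgt ends o e) := fun e => C.valid (hsadj e)
  set col : {e : Sym2 V // e ∈ G.edgeFinset} → ℕ :=
    fun e => 2 * (f e : ℕ) + (if C (IC.msrc ends o e) = 0 then 1 else 2) with hcol
  have hcole : ∀ e, col e = 2 * (f e : ℕ) + (if C (IC.msrc ends o e) = 0 then 1 else 2) :=
    fun _ => rfl
  set c : Sym2 V → ℕ := fun e => if h : e ∈ G.edgeFinset then col ⟨e, h⟩ else 0 with hcdef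
  have hce : ∀ e : {e : Sym2 V // e ∈ G.edgeFinset}, c e.val = col e := fun e => dif_pos e.2
  have hcol_ge : ∀ e, 1 ≤ col e := by
    intro e
    rw [hcole e]
    split <;> omega
  have hcol_le : ∀ e, col e ≤ 2 * r := by
    intro e
    have := (f e).isLt
    rw [hcole e]
    split <;> omega
  have hfin2 : ∀ x : Fin 2, x ≠ 0 → x = 1 := by decide
  have hcol_eq : ∀ e₁ e₂, col e₁ = col e₂ →
      f e₁ = f e₂ ∧ C (IC.msrc ends o e₁) = C (IC.msrc ends o e₂) := by
    intro e₁ e₂ h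
    rw [hcole e₁, hcole e₂] at h
    by_cases d₁ : C (IC.msrc ends o e₁) = 0 <;> by_cases d₂ : C (IC.msrc ends o e₂) = 0 <;>
      simp only [d₁, d₂, if_pos, if_neg, if_true, if_false] at h
    · exact ⟨Fin.ext (by omega), by rw [d₁, d₂]⟩
    · omega
    · omega
    · exact ⟨Fin.ext (by omega), by rw [hfin2 _ d₁, hfin2 _ d₂]⟩
  have two_le_out : ∀ (i : Fin r) (v : V) (x y : {e : Sym2 V // e ∈ G.edgeFinset}),
      x ≠ y → f x = i → f y = i → IC.msrc ends o x = v → IC.msrc ends o y = v →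
      2 ≤ IC.outc ends o f i v := by
    intro i v x y hxy hfx hfy hsx hsy
    have hp : ∑ e ∈ ({x, y} : Finset _),
        (if f e = i ∧ IC.msrc ends o e = v then 1 else 0 : ℕ) = 2 := by
      rw [Finset.sum_pair hxy]
      simp [hfx, hfy, hsx, hsy]
    unfold IC.outc
    rw [← hp]
    exact Finset.sum_le_sum_of_subset (Finset.subset_univ _)
  have two_le_in : ∀ (i : Fin r) (v : V) (x y : {e : Sym2 V // e ∈ G.edgeFinset}),
      x ≠ y → f x = i → f y = i → IC.mtgt ends o x = v → IC.mtgt ends o y = v →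
      2 ≤ IC.inc ends o f i v := by
    intro i v x y hxy hfx hfy hsx hsy
    have hp : ∑ e ∈ ({x, y} : Finset _),
        (if f e = i ∧ IC.mtgt ends o e = v then 1 else 0 : ℕ) = 2 := by
      rw [Finset.sum_pair hxy]
      simp [hfx, hfy, hsx, hsy]
    unfold IC.inc
    rw [← hp]
    exact Finset.sum_le_sum_of_subset (Finset.subset_univ _)
  have hproper : ∀ (e₁ e₂ : {e : Sym2 V // e ∈ G.edgeFinset}), e₁ ≠ e₂ →
      (∃ v, v ∈ e₁.val ∧ v ∈ e₂.val) → col e₁ ≠ col e₂ := by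
    rintro e₁ e₂ hne ⟨v, hv1, hv2⟩ heq
    obtain ⟨hfeq, hCeq⟩ := hcol_eq e₁ e₂ heq
    rw [hmem_st] at hv1 hv2
    rcases hv1 with h1 | h1 <;> rcases hv2 with h2 | h2
    · have := two_le_out (f e₁) v e₁ e₂ hne rfl hfeq.symm h1.symm h2.symm
      have := (hA (f e₁) v).1
      omega
    · have hx := hCne e₂
      rw [← h2, h1, hCeq] at hx
      exact hx rfl
    · have hx := hCne e₁
      rw [← h1, h2, hCeq] at hx
      exact hx rfl
    · have := two_le_in (f e₁) v e₁ e₂ hne rfl hfeq.symm h1.symm h2.symm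
      have := (hA (f e₁) v).2
      omega
  have hcolAt : ∀ (v : V) (n : ℕ), n ∈ colorsAt G c v ↔
      ∃ e : {e : Sym2 V // e ∈ G.edgeFinset},
        (v = IC.msrc ends o e ∨ v = IC.mtgt ends o e) ∧ col e = n := by
    intro v n
    constructor
    · rintro ⟨e, heS, hvin, hcn⟩
      have he : e ∈ G.edgeFinset := SimpleGraph.mem_edgeFinset.mpr heS
      exact ⟨⟨e, he⟩, (hmem_st ⟨e, he⟩ v).mp hvin, by rw [← hcn]; exact (hce ⟨e, he⟩).symm⟩
    · rintro ⟨e, hv, hcn⟩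
      exact ⟨e.val, SimpleGraph.mem_edgeFinset.mp e.2, (hmem_st e v).mpr hv,
        by rw [hce e, hcn]⟩
  have exists_out : ∀ (i : Fin r) (v : V), 1 ≤ IC.outc ends o f i v →
      ∃ e, f e = i ∧ IC.msrc ends o e = v := by
    intro i v h
    by_contra hcon
    push_neg at hcon
    have : IC.outc ends o f i v = 0 :=
      Finset.sum_eq_zero fun e _ => by
        by_cases hfe : f e = i
        · simp [hfe, hcon e hfe]
        · simp [hfe]
    omega
  have exists_in : ∀ (i : Fin r) (v : V), 1 ≤ IC.inc ends o f i v →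
      ∃ e, f e = i ∧ IC.mtgt ends o e = v := by
    intro i v h
    by_contra hcon
    push_neg at hcon
    have : IC.inc ends o f i v = 0 :=
      Finset.sum_eq_zero fun e _ => by
        by_cases hfe : f e = i
        · simp [hfe, hcon e hfe]
        · simp [hfe]
    omega
  have hcol_out : ∀ (v : V) (e), IC.msrc ends o e = v →
      col e = 2 * (f e : ℕ) + (if C v = 0 then 1 else 2) := by
    intro v e hsv
    rw [hcole e, hsv]
  have hcol_in : ∀ (v : V) (e), IC.mtgt ends o e = v →
      col e = 2 * (f e : ℕ) + (if C v = 0 then 2 else 1) := by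
    intro v e htv
    have hCx := hCne e
    rw [htv] at hCx
    rw [hcole e]
    by_cases hv0 : C v = 0
    · rw [hv0] at hCx
      simp [hv0, hCx]
    · have h1 := hfin2 _ hv0
      have h2 : C (IC.msrc ends o e) = 0 := by
        by_contra hc
        rw [hfin2 _ hc, h1] at hCx
        exact hCx rfl
      simp [hv0, h2]
  have hIcc : ∀ v, G.degree v = 2 * r → colorsAt G c v = Set.Icc 1 (2 * r) := by
    intro v hv
    have hmd : IC.mdeg ends v = 2 * r := by rw [hdeg_eq]; exact hv
    ext n
    rw [hcolAt v n, Set.mem_Icc]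
    constructor
    · rintro ⟨e, hv', rfl⟩
      exact ⟨hcol_ge e, hcol_le e⟩
    · rintro ⟨h1, h2⟩
      have hi2 : (n - 1) / 2 < r := by omega
      set i : Fin r := ⟨(n - 1) / 2, hi2⟩ with hidef
      have hival : (i : ℕ) = (n - 1) / 2 := rfl
      obtain ⟨ho1, hi1⟩ := hB v hmd i
      obtain ⟨eo, hfo, hso⟩ := exists_out i v (by omega)
      obtain ⟨ei, hfi, hti⟩ := exists_in i v (by omega)
      have hco := hcol_out v eo hso
      have hci := hcol_in v ei hti
      rw [hfo] at hco
      rw [hfi] at hci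
      by_cases hv0 : C v = 0
      · rw [if_pos hv0] at hco hci
        rcases (by omega : n = 2 * (i : ℕ) + 1 ∨ n = 2 * (i : ℕ) + 2) with hn | hn
        · exact ⟨eo, Or.inl hso.symm, by omega⟩
        · exact ⟨ei, Or.inr hti.symm, by omega⟩
      · rw [if_neg hv0] at hco hci
        rcases (by omega : n = 2 * (i : ℕ) + 1 ∨ n = 2 * (i : ℕ) + 2) with hn | hn
        · exact ⟨ei, Or.inr hti.symm, by omega⟩
        · exact ⟨eo, Or.inl hso.symm, by omega⟩
  have hPair : ∀ v, G.degree v = 2 → ∃ i₀ : Fin r,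
      colorsAt G c v = {2 * (i₀ : ℕ) + 1, 2 * (i₀ : ℕ) + 2} := by
    intro v hv
    have hmd : IC.mdeg ends v = 2 := by rw [hdeg_eq]; exact hv
    have hsum : ∑ i : Fin r, (IC.outc ends o f i v + IC.inc ends o f i v) = 2 := by
      rw [Finset.sum_add_distrib, IC.sum_outc, IC.sum_inc]
      have := IC.outdeg_add_indeg ends o v
      omega
    have hex : ∃ i₀ : Fin r, IC.outc ends o f i₀ v = 1 ∧ IC.inc ends o f i₀ v = 1 := by
      by_contra hcon
      push_neg at hcon
      have hz : ∀ i : Fin r, IC.outc ends o f i v + IC.inc ends o f i v = 0 := by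
        intro i
        rcases hC v hmd i with ⟨h1', h2'⟩ | ⟨h1', h2'⟩
        · exact absurd h2' (hcon i h1')
        · omega
      rw [Finset.sum_congr rfl (fun i _ => hz i)] at hsum
      simp at hsum
    obtain ⟨i₀, ho1, hi1⟩ := hex
    have honly : ∀ e, (v = IC.msrc ends o e ∨ v = IC.mtgt ends o e) → f e = i₀ := by
      intro e hv'
      by_contra hne'
      have hterm : 1 ≤ IC.outc ends o f (f e) v + IC.inc ends o f (f e) v := by
        rcases hv' with h | h
        · have hx : 1 ≤ IC.outc ends o f (f e) v := by
            unfold IC.outc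
            have := Finset.single_le_sum (f := fun x =>
              (if f x = f e ∧ IC.msrc ends o x = v then 1 else 0 : ℕ))
              (fun x _ => Nat.zero_le _) (Finset.mem_univ e)
            simpa [h.symm] using this
          omega
        · have hx : 1 ≤ IC.inc ends o f (f e) v := by
            unfold IC.inc
            have := Finset.single_le_sum (f := fun x =>
              (if f x = f e ∧ IC.mtgt ends o x = v then 1 else 0 : ℕ))
              (fun x _ => Nat.zero_le _) (Finset.mem_univ e)
            simpa [h.symm] using this
          omega
      rcases hC v hmd (f e) with ⟨h1', h2'⟩ | ⟨h1', h2'⟩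
      · have hp : (IC.outc ends o f i₀ v + IC.inc ends o f i₀ v) +
            (IC.outc ends o f (f e) v + IC.inc ends o f (f e) v) =
            ∑ i ∈ ({i₀, f e} : Finset (Fin r)),
              (IC.outc ends o f i v + IC.inc ends o f i v) :=
          (Finset.sum_pair (f := fun i => IC.outc ends o f i v + IC.inc ends o f i v)
            (fun hh : i₀ = f e => hne' hh.symm)).symm
        have hq : ∑ i ∈ ({i₀, f e} : Finset (Fin r)),
            (IC.outc ends o f i v + IC.inc ends o f i v)
            ≤ ∑ i : Fin r, (IC.outc ends o f i v + IC.inc ends o f i v) :=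
          Finset.sum_le_sum_of_subset (Finset.subset_univ _)
        omega
      · omega
    refine ⟨i₀, ?_⟩
    ext n
    rw [hcolAt v n]
    simp only [Set.mem_insert_iff, Set.mem_singleton_iff]
    constructor
    · rintro ⟨e, hv', rfl⟩
      have hfe := honly e hv'
      rcases hv' with h | h
      · rw [hcol_out v e h.symm, hfe]
        split <;> omega
      · rw [hcol_in v e h.symm, hfe]
        split <;> omega
    · intro hn
      obtain ⟨eo, hfo, hso⟩ := exists_out i₀ v (by omega)
      obtain ⟨ei, hfi, hti⟩ := exists_in i₀ v (by omega)
      have hco := hcol_out v eo hso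
      have hci := hcol_in v ei hti
      rw [hfo] at hco
      rw [hfi] at hci
      by_cases hv0 : C v = 0
      · rw [if_pos hv0] at hco hci
        rcases hn with hn | hn
        · exact ⟨eo, Or.inl hso.symm, by omega⟩
        · exact ⟨ei, Or.inr hti.symm, by omega⟩
      · rw [if_neg hv0] at hco hci
        rcases hn with hn | hn
        · exact ⟨ei, Or.inr hti.symm, by omega⟩
        · exact ⟨eo, Or.inl hso.symm, by omega⟩
  have hSing : ∀ v, G.degree v = 1 → ∃ m, colorsAt G c v = {m} := by
    intro v hv
    have hmd : IC.mdeg ends v = 1 := by rw [hdeg_eq]; exact hv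
    have hdsum := IC.outdeg_add_indeg ends o v
    have hex : ∃ e₀, v = IC.msrc ends o e₀ ∨ v = IC.mtgt ends o e₀ := by
      by_contra hcon
      push_neg at hcon
      have h1 : IC.outdeg ends o v = 0 :=
        Finset.sum_eq_zero fun e _ => if_neg (fun hh => (hcon e).1 hh.symm)
      have h2 : IC.indeg ends o v = 0 :=
        Finset.sum_eq_zero fun e _ => if_neg (fun hh => (hcon e).2 hh.symm)
      omega
    obtain ⟨e₀, he₀⟩ := hex
    have huniq : ∀ e, (v = IC.msrc ends o e ∨ v = IC.mtgt ends o e) → e = e₀ := by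
      intro e he
      by_contra hne'
      have hcontrib : ∀ x, (v = IC.msrc ends o x ∨ v = IC.mtgt ends o x) →
          1 ≤ (if IC.msrc ends o x = v then 1 else 0 : ℕ) +
            (if IC.mtgt ends o x = v then 1 else 0 : ℕ) := by
        intro x hx
        rcases hx with h | h <;> simp [h.symm]
      have hp : ∑ x ∈ ({e, e₀} : Finset _),
          ((if IC.msrc ends o x = v then 1 else 0 : ℕ) +
            (if IC.mtgt ends o x = v then 1 else 0)) =
          ((if IC.msrc ends o e = v then 1 else 0) +
            (if IC.mtgt ends o e = v then 1 else 0)) +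
          ((if IC.msrc ends o e₀ = v then 1 else 0) +
            (if IC.mtgt ends o e₀ = v then 1 else 0)) := Finset.sum_pair hne'
      have hq : ∑ x ∈ ({e, e₀} : Finset _),
          ((if IC.msrc ends o x = v then 1 else 0 : ℕ) +
            (if IC.mtgt ends o x = v then 1 else 0)) ≤
          ∑ x, ((if IC.msrc ends o x = v then 1 else 0 : ℕ) +
            (if IC.mtgt ends o x = v then 1 else 0)) :=
        Finset.sum_le_sum_of_subset (Finset.subset_univ _)
      have htot : ∑ x, ((if IC.msrc ends o x = v then 1 else 0 : ℕ) +
          (if IC.mtgt ends o x = v then 1 else 0)) =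
          IC.outdeg ends o v + IC.indeg ends o v := by
        unfold IC.outdeg IC.indeg
        rw [← Finset.sum_add_distrib]
      have hc1 := hcontrib e he
      have hc2 := hcontrib e₀ he₀
      omega
    refine ⟨col e₀, ?_⟩
    ext n
    rw [hcolAt v n]
    simp only [Set.mem_singleton_iff]
    constructor
    · rintro ⟨e, hv', rfl⟩
      rw [huniq e hv']
    · intro hn
      exact ⟨e₀, he₀, hn.symm⟩
  refine ⟨c, ⟨?_, ?_, ?_⟩, ?_, ?_⟩
  · intro e₁ he₁ e₂ he₂ hne hsh
    have h1 : c e₁ = col ⟨e₁, SimpleGraph.mem_edgeFinset.mpr he₁⟩ :=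
      hce ⟨e₁, SimpleGraph.mem_edgeFinset.mpr he₁⟩
    have h2 : c e₂ = col ⟨e₂, SimpleGraph.mem_edgeFinset.mpr he₂⟩ :=
      hce ⟨e₂, SimpleGraph.mem_edgeFinset.mpr he₂⟩
    rw [h1, h2]
    exact hproper _ _ (fun hh => hne (congrArg Subtype.val hh)) hsh
  · intro e he
    have h1 := hcol_ge ⟨e, SimpleGraph.mem_edgeFinset.mpr he⟩
    have h2 : c e = col ⟨e, SimpleGraph.mem_edgeFinset.mpr he⟩ :=
      hce ⟨e, SimpleGraph.mem_edgeFinset.mpr he⟩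
    omega
  · intro v a ha' b hb' k hak hkb
    rcases hdeg v with hv | hv | hv
    · obtain ⟨m, hm⟩ := hSing v hv
      rw [hm] at ha' hb' ⊢
      simp only [Set.mem_singleton_iff] at ha' hb' ⊢
      omega
    · obtain ⟨i₀, hp⟩ := hPair v hv
      rw [hp] at ha' hb' ⊢
      simp only [Set.mem_insert_iff, Set.mem_singleton_iff] at ha' hb' ⊢
      omega
    · rw [hIcc v hv] at ha' hb' ⊢
      simp only [Set.mem_Icc] at ha' hb' ⊢
      omega
  · intro e he
    have h1 := hcol_le ⟨e, SimpleGraph.mem_edgeFinset.mpr he⟩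
    have h2 : c e = col ⟨e, SimpleGraph.mem_edgeFinset.mpr he⟩ :=
      hce ⟨e, SimpleGraph.mem_edgeFinset.mpr he⟩
    omega
  · intro v hv
    obtain ⟨i₀, hp⟩ := hPair v hv
    refine ⟨(i₀ : ℕ) + 1, by omega, by have := i₀.isLt; omega, ?_⟩
    rw [hp]
    have h1 : 2 * ((i₀ : ℕ) + 1) - 1 = 2 * (i₀ : ℕ) + 1 := by omega
    have h2 : 2 * ((i₀ : ℕ) + 1) = 2 * (i₀ : ℕ) + 2 := by omega
    rw [h1, h2]
end

section
/- Every (3,3r)-biregular bipartite graph with r ≥ 2 satisfies θ_int(G) ≤ 2. -/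
open SimpleGraph

variable {V : Type*}

open Finset

/-- Hall-type: a `d`-regular bipartite relation (both sides) admits a perfect matching. -/
lemma hall_regular {ι α : Type*} [Fintype ι] [Fintype α] [DecidableEq ι] [DecidableEq α]
    (R : ι → α → Prop) [∀ x a, Decidable (R x a)] {d : ℕ} (hd : 0 < d)
    (hl : ∀ x, (univ.filter (fun a => R x a)).card = d)
    (hr : ∀ a, (univ.filter (fun x => R x a)).card = d) :
    ∃ f : ι → α, Function.Bijective f ∧ ∀ x, R x (f x) := by
  classical
  set t : ι → Finset α := fun x => univ.filter (fun a => R x a) with ht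
  have hhall : ∀ s : Finset ι, s.card ≤ (s.biUnion t).card := by
    intro s
    have hsum : (s.sigma t).card = d * s.card := by
      rw [card_sigma]
      simp only [ht, hl, sum_const, smul_eq_mul, mul_comm]
    have hmap : ∀ p ∈ s.sigma t, (p.2 : α) ∈ s.biUnion t := by
      rintro ⟨x, a⟩ hp
      rw [mem_sigma] at hp
      exact mem_biUnion.2 ⟨x, hp.1, hp.2⟩
    have hfib : ∀ b ∈ s.biUnion t, ((s.sigma t).filter (fun p => p.2 = b)).card ≤ d := by
      intro b _
      rw [← hr b]
      apply card_le_card_of_injOn (fun p => p.1)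
      · rintro ⟨x, a⟩ hp
        simp only [mem_coe, mem_filter, mem_sigma] at hp
        simp only [mem_coe, mem_filter, mem_univ, true_and]
        have := hp.1.2
        rw [ht] at this
        simp only [mem_filter] at this
        rw [← hp.2] ; exact this.2
      · rintro ⟨x, a⟩ hp ⟨x', a'⟩ hp' (h : x = x')
        simp only [mem_coe, mem_filter] at hp hp'
        subst h
        have : a = a' := hp.2.trans hp'.2.symm
        subst this; rfl
    have := card_le_mul_card_image_of_maps_to hmap d hfib
    rw [hsum] at this
    exact Nat.le_of_mul_le_mul_left (by linarith [this]) hd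
  obtain ⟨f, hfinj, hf⟩ := (Finset.all_card_le_biUnion_card_iff_exists_injective t).1 hhall
  have hcard : Fintype.card ι = Fintype.card α := by
    have h1 : ((univ : Finset ι).sigma t).card = d * Fintype.card ι := by
      rw [card_sigma]; simp [ht, hl, mul_comm]
    have h2 : ((univ : Finset ι).sigma t).card = d * Fintype.card α := by
      have hmap : ∀ p ∈ (univ : Finset ι).sigma t, (p.2 : α) ∈ (univ : Finset α) := by
        intros; exact mem_univ _
      rw [card_eq_sum_card_fiberwise hmap]
      have : ∀ b ∈ (univ : Finset α),
          (((univ : Finset ι).sigma t).filter (fun p => p.2 = b)).card = d := by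
        intro b _
        rw [← hr b]
        apply card_bij (fun p _ => p.1)
        · rintro ⟨x, a⟩ hp
          simp only [mem_filter, mem_sigma] at hp
          simp only [mem_filter, mem_univ, true_and]
          have := hp.1.2
          rw [ht] at this
          simp only [mem_filter] at this
          rw [← hp.2]; exact this.2
        · rintro ⟨x, a⟩ hp ⟨x', a'⟩ hp' (h : x = x')
          simp only [mem_filter] at hp hp'
          subst h
          have : a = a' := hp.2.trans hp'.2.symm
          subst this; rfl
        · intro x hx
          simp only [mem_filter, mem_univ, true_and] at hx
          refine ⟨⟨x, b⟩, ?_, rfl⟩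
          simp only [mem_filter, mem_sigma, mem_univ, true_and, and_true, ht]
          simp [hx]
      rw [sum_congr rfl this]
      simp [mul_comm]
    have := h1.symm.trans h2
    exact Nat.eq_of_mul_eq_mul_left hd this
  refine ⟨f, ?_, fun x => by have := hf x; rw [ht] at this; simpa using this⟩
  exact (Fintype.bijective_iff_injective_and_card f).2 ⟨hfinj, hcard⟩

/-- König: an `r`-regular "directed multigraph" (edge set `E`, tail `t`, head `h`) can be
properly `r`-edge-colored (injective on tail-fibers and head-fibers). -/
lemma konig_coloring {E Y : Type*} [Fintype E] [DecidableEq E] [Fintype Y] [DecidableEq Y] :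
    ∀ (r : ℕ) (s : Finset E) (t h : E → Y),
    (∀ y, (s.filter (fun e => t e = y)).card = r) →
    (∀ y, (s.filter (fun e => h e = y)).card = r) →
    ∃ c : E → ℕ, (∀ e ∈ s, c e < r) ∧
      (∀ e₁ ∈ s, ∀ e₂ ∈ s, t e₁ = t e₂ → c e₁ = c e₂ → e₁ = e₂) ∧
      (∀ e₁ ∈ s, ∀ e₂ ∈ s, h e₁ = h e₂ → c e₁ = c e₂ → e₁ = e₂) := by
  intro r
  induction r with
  | zero =>
    intro s t h ht _
    have hs : s = ∅ := by
      by_contra hne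
      obtain ⟨e, he⟩ := Finset.nonempty_iff_ne_empty.2 hne
      have := ht (t e)
      have hmem : e ∈ s.filter (fun e' => t e' = t e) := by simp [he]
      rw [Finset.card_eq_zero] at this
      simp [this] at hmem
    subst hs
    exact ⟨fun _ => 0, by simp, by simp, by simp⟩
  | succ r ih =>
    intro s t h ht hh
    classical
    -- Hall to find a matching: for each y pick an edge with tail y, heads all distinct
    set T : Y → Finset Y := fun y => (s.filter (fun e => t e = y)).image h with hT
    have hhall : ∀ A : Finset Y, A.card ≤ (A.biUnion T).card := by
      intro A
      have h1 : (s.filter (fun e => t e ∈ A)).card = (r + 1) * A.card := by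
        have hmap : ∀ e ∈ s.filter (fun e => t e ∈ A), t e ∈ A := fun e he =>
          (mem_filter.1 he).2
        rw [card_eq_sum_card_fiberwise hmap]
        have : ∀ y ∈ A, ((s.filter (fun e => t e ∈ A)).filter (fun e => t e = y)).card
            = r + 1 := by
          intro y hy
          rw [← ht y]
          congr 1
          ext e
          simp only [mem_filter, and_assoc]
          constructor
          · rintro ⟨h1, _, h3⟩; exact ⟨h1, h3⟩
          · rintro ⟨h1, h3⟩; exact ⟨h1, h3 ▸ hy, h3⟩
        rw [sum_congr rfl this]; simp [mul_comm]
      have h2 : (s.filter (fun e => t e ∈ A)).card ≤ (r + 1) * (A.biUnion T).card := by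
        have hsub : s.filter (fun e => t e ∈ A) ⊆ s.filter (fun e => h e ∈ A.biUnion T) := by
          intro e he
          rw [mem_filter] at he ⊢
          refine ⟨he.1, mem_biUnion.2 ⟨t e, he.2, ?_⟩⟩
          rw [hT]; exact mem_image.2 ⟨e, mem_filter.2 ⟨he.1, rfl⟩, rfl⟩
        calc (s.filter (fun e => t e ∈ A)).card
            ≤ (s.filter (fun e => h e ∈ A.biUnion T)).card := card_le_card hsub
          _ = (r + 1) * (A.biUnion T).card := by
              have hmap : ∀ e ∈ s.filter (fun e => h e ∈ A.biUnion T),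
                  h e ∈ A.biUnion T := fun e he => (mem_filter.1 he).2
              rw [card_eq_sum_card_fiberwise hmap]
              have : ∀ y ∈ A.biUnion T,
                  ((s.filter (fun e => h e ∈ A.biUnion T)).filter
                    (fun e => h e = y)).card = r + 1 := by
                intro y hy
                rw [← hh y]
                congr 1
                ext e
                simp only [mem_filter, and_assoc]
                constructor
                · rintro ⟨h1, _, h3⟩; exact ⟨h1, h3⟩
                · rintro ⟨h1, h3⟩; exact ⟨h1, h3 ▸ hy, h3⟩
              rw [sum_congr rfl this]; simp [mul_comm]
      rw [h1] at h2
      exact Nat.le_of_mul_le_mul_left h2 (Nat.succ_pos r)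
    obtain ⟨σ, hσinj, hσ⟩ := (Finset.all_card_le_biUnion_card_iff_exists_injective T).1 hhall
    have hσbij : Function.Bijective σ := Finite.injective_iff_bijective.1 hσinj
    -- pick edges realizing the matching
    have hpick : ∀ y, ∃ e, e ∈ s ∧ t e = y ∧ h e = σ y := by
      intro y
      have := hσ y
      rw [hT, mem_image] at this
      obtain ⟨e, he, heq⟩ := this
      rw [mem_filter] at he
      exact ⟨e, he.1, he.2, heq⟩
    choose m hm ht' hh' using hpick
    have hminj : Function.Injective m := fun y y' hyy => by
      have := ht' y; rw [hyy, ht' y'] at this; exact this.symm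
    set M : Finset E := univ.image m with hM
    have hmemM : ∀ e, e ∈ M ↔ ∃ y, m y = e := by
      intro e; rw [hM, mem_image]; simp
    set s' : Finset E := s \ M with hs'
    have htfib : ∀ y, (s'.filter (fun e => t e = y)).card = r := by
      intro y
      have key : s.filter (fun e => t e = y) = insert (m y) (s'.filter (fun e => t e = y)) := by
        ext e
        simp only [mem_insert, mem_filter, hs', mem_sdiff, hmemM]
        constructor
        · rintro ⟨hes, hte⟩
          by_cases hem : ∃ y', m y' = e
          · obtain ⟨y', rfl⟩ := hem
            left; rw [ht'] at hte; rw [hte]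
          · right; exact ⟨⟨hes, hem⟩, hte⟩
        · rintro (rfl | ⟨⟨hes, _⟩, hte⟩)
          · exact ⟨hm y, ht' y⟩
          · exact ⟨hes, hte⟩
      have hnotin : m y ∉ s'.filter (fun e => t e = y) := by
        simp only [mem_filter, hs', mem_sdiff, hmemM, not_and]
        intro h1 _; exact absurd ⟨y, rfl⟩ h1.2
      have := ht y
      rw [key, card_insert_of_notMem hnotin] at this
      omega
    have hhfib : ∀ y, (s'.filter (fun e => h e = y)).card = r := by
      intro y
      obtain ⟨y₀, rfl⟩ := hσbij.2 y
      have key : s.filter (fun e => h e = σ y₀)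
          = insert (m y₀) (s'.filter (fun e => h e = σ y₀)) := by
        ext e
        simp only [mem_insert, mem_filter, hs', mem_sdiff, hmemM]
        constructor
        · rintro ⟨hes, hte⟩
          by_cases hem : ∃ y', m y' = e
          · obtain ⟨y', rfl⟩ := hem
            left; rw [hh'] at hte
            rw [hσinj hte]
          · right; exact ⟨⟨hes, hem⟩, hte⟩
        · rintro (rfl | ⟨⟨hes, _⟩, hte⟩)
          · exact ⟨hm y₀, hh' y₀⟩
          · exact ⟨hes, hte⟩
      have hnotin : m y₀ ∉ s'.filter (fun e => h e = σ y₀) := by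
        simp only [mem_filter, hs', mem_sdiff, hmemM, not_and]
        intro h1 _; exact absurd ⟨y₀, rfl⟩ h1.2
      have := hh (σ y₀)
      rw [key, card_insert_of_notMem hnotin] at this
      omega
    obtain ⟨c', hc'lt, hc't, hc'h⟩ := ih s' t h htfib hhfib
    refine ⟨fun e => if e ∈ M then r else c' e, ?_, ?_, ?_⟩
    · intro e he
      by_cases heM : e ∈ M
      · simp [heM]
      · simp only [heM, if_false]
        have : e ∈ s' := by rw [hs', mem_sdiff]; exact ⟨he, heM⟩
        exact Nat.lt_succ_of_lt (hc'lt e this)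
    · intro e₁ he₁ e₂ he₂ hteq hceq
      by_cases h1 : e₁ ∈ M <;> by_cases h2 : e₂ ∈ M <;>
        simp only [h1, h2, if_true, if_false] at hceq
      · obtain ⟨y₁, rfl⟩ := (hmemM e₁).1 h1
        obtain ⟨y₂, rfl⟩ := (hmemM e₂).1 h2
        rw [ht' y₁, ht' y₂] at hteq
        rw [hteq]
      · have : e₂ ∈ s' := by rw [hs', mem_sdiff]; exact ⟨he₂, h2⟩
        exact absurd hceq.symm (Nat.ne_of_lt (hc'lt e₂ this))
      · have : e₁ ∈ s' := by rw [hs', mem_sdiff]; exact ⟨he₁, h1⟩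
        exact absurd hceq (Nat.ne_of_lt (hc'lt e₁ this))
      · have m1 : e₁ ∈ s' := by rw [hs', mem_sdiff]; exact ⟨he₁, h1⟩
        have m2 : e₂ ∈ s' := by rw [hs', mem_sdiff]; exact ⟨he₂, h2⟩
        exact hc't e₁ m1 e₂ m2 hteq hceq
    · intro e₁ he₁ e₂ he₂ hheq hceq
      by_cases h1 : e₁ ∈ M <;> by_cases h2 : e₂ ∈ M <;>
        simp only [h1, h2, if_true, if_false] at hceq
      · obtain ⟨y₁, rfl⟩ := (hmemM e₁).1 h1
        obtain ⟨y₂, rfl⟩ := (hmemM e₂).1 h2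
        rw [hh' y₁, hh' y₂] at hheq
        rw [hσinj hheq]
      · have : e₂ ∈ s' := by rw [hs', mem_sdiff]; exact ⟨he₂, h2⟩
        exact absurd hceq.symm (Nat.ne_of_lt (hc'lt e₂ this))
      · have : e₁ ∈ s' := by rw [hs', mem_sdiff]; exact ⟨he₁, h1⟩
        exact absurd hceq (Nat.ne_of_lt (hc'lt e₁ this))
      · have m1 : e₁ ∈ s' := by rw [hs', mem_sdiff]; exact ⟨he₁, h1⟩
        have m2 : e₂ ∈ s' := by rw [hs', mem_sdiff]; exact ⟨he₂, h2⟩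
        exact hc'h e₁ m1 e₂ m2 hheq hceq
open Finset SimpleGraph

/-- Predicate on pairs in `X ⊕ Y`: the pair is the selected edge `(x, sel x)`. -/
def pairSel {X Y : Type*} (sel : X → Y) : (X ⊕ Y) → (X ⊕ Y) → Prop := fun u v =>
  match u, v with
  | Sum.inl x, Sum.inr y => sel x = y
  | Sum.inr y, Sum.inl x => sel x = y
  | _, _ => False

lemma pairSel_symm {X Y : Type*} (sel : X → Y) (u v : X ⊕ Y) :
    pairSel sel u v → pairSel sel v u := by
  cases u <;> cases v <;> simp [pairSel]

/-- A "bipartite" coloring function on `Sym2 (X ⊕ Y)` from `F : X → Y → ℕ`. -/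
def bipColor {X Y : Type*} (F : X → Y → ℕ) : Sym2 (X ⊕ Y) → ℕ :=
  Sym2.lift ⟨fun u v =>
    match u, v with
    | Sum.inl x, Sum.inr y => F x y
    | Sum.inr y, Sum.inl x => F x y
    | _, _ => 0,
    by intro u v; cases u <;> cases v <;> rfl⟩

@[simp] lemma bipColor_mk {X Y : Type*} (F : X → Y → ℕ) (x : X) (y : Y) :
    bipColor F s(Sum.inl x, Sum.inr y) = F x y := rfl

@[simp] lemma bipColor_mk' {X Y : Type*} (F : X → Y → ℕ) (x : X) (y : Y) :
    bipColor F s(Sum.inr y, Sum.inl x) = F x y := rfl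

/-- Fibers of the first coordinate of a bijection to a product have card of second factor. -/
lemma fiber_card_of_bij {X Y β : Type*} [Fintype X] [Fintype Y] [Fintype β] [DecidableEq Y]
    (f : X → Y × β) (hf : Function.Bijective f) (y : Y) :
    (univ.filter (fun x => (f x).1 = y)).card = Fintype.card β := by
  classical
  have : (univ.filter (fun x => (f x).1 = y)).card
      = (univ.filter (fun p : Y × β => p.1 = y)).card := by
    apply card_bij (fun x _ => f x)
    · intro x hx; simp only [mem_filter, mem_univ, true_and] at hx ⊢; exact hx
    · intro x _ x' _ h; exact hf.1 h
    · intro p hp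
      obtain ⟨x, rfl⟩ := hf.2 p
      simp only [mem_filter, mem_univ, true_and] at hp
      exact ⟨x, by simp [hp], rfl⟩
  rw [this]
  have : (univ.filter (fun p : Y × β => p.1 = y)) = {y} ×ˢ univ := by
    ext p
    simp only [mem_filter, mem_univ, true_and, Finset.mem_product, Finset.mem_singleton]
    tauto
  rw [this, card_product]
  simp

section Main
variable {X Y : Type*} [Fintype X] [Fintype Y] [DecidableEq X] [DecidableEq Y]
variable (G : SimpleGraph (X ⊕ Y)) [DecidableRel G.Adj]

lemma degX_eq (hX : ∀ x x' : X, ¬ G.Adj (Sum.inl x) (Sum.inl x')) (x : X) :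
    (univ.filter (fun y => G.Adj (Sum.inl x) (Sum.inr y))).card = G.degree (Sum.inl x) := by
  classical
  rw [← card_neighborFinset_eq_degree]
  apply card_bij (fun y _ => Sum.inr y)
  · intro y hy; simp only [mem_filter, mem_univ, true_and] at hy
    simpa [mem_neighborFinset] using hy
  · intro y _ y' _ h; exact Sum.inr.inj h
  · intro v hv
    rw [mem_neighborFinset] at hv
    match v with
    | Sum.inl x' => exact absurd hv (hX x x')
    | Sum.inr y => exact ⟨y, by simpa using hv, rfl⟩

lemma degY_eq (hY : ∀ y y' : Y, ¬ G.Adj (Sum.inr y) (Sum.inr y')) (y : Y) :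
    (univ.filter (fun x => G.Adj (Sum.inl x) (Sum.inr y))).card = G.degree (Sum.inr y) := by
  classical
  rw [← card_neighborFinset_eq_degree]
  apply card_bij (fun x _ => Sum.inl x)
  · intro x hx; simp only [mem_filter, mem_univ, true_and] at hx
    rw [mem_neighborFinset]; exact hx.symm
  · intro x _ x' _ h; exact Sum.inl.inj h
  · intro v hv
    rw [mem_neighborFinset] at hv
    match v with
    | Sum.inr y' => exact absurd hv (hY y y')
    | Sum.inl x => exact ⟨x, by simpa using hv.symm, rfl⟩

end Main
/-- Extract the bipartite shape of an incident colored edge. -/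
lemma colorsAt_shape {X Y : Type*} (H : SimpleGraph (X ⊕ Y))
    (hsh : ∀ e ∈ H.edgeSet, ∃ x y, e = s(Sum.inl x, Sum.inr y) ∧ H.Adj (Sum.inl x) (Sum.inr y))
    (c : Sym2 (X ⊕ Y) → ℕ) (v : X ⊕ Y) (n : ℕ) (hn : n ∈ colorsAt H c v) :
    ∃ x y, H.Adj (Sum.inl x) (Sum.inr y) ∧ (v = Sum.inl x ∨ v = Sum.inr y) ∧
      c s(Sum.inl x, Sum.inr y) = n := by
  obtain ⟨e, he, hv, hc⟩ := hn
  obtain ⟨x, y, rfl, hadj⟩ := hsh e he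
  rw [Sym2.mem_iff] at hv
  exact ⟨x, y, hadj, hv, hc⟩

lemma mem_colorsAt {X Y : Type*} (H : SimpleGraph (X ⊕ Y)) (c : Sym2 (X ⊕ Y) → ℕ)
    {x : X} {y : Y} (h : H.Adj (Sum.inl x) (Sum.inr y)) :
    c s(Sum.inl x, Sum.inr y) ∈ colorsAt H c (Sum.inl x) ∧
    c s(Sum.inl x, Sum.inr y) ∈ colorsAt H c (Sum.inr y) := by
  constructor <;>
    exact ⟨s(Sum.inl x, Sum.inr y), H.mem_edgeSet.2 h, by simp, rfl⟩

theorem biregular_three_intervalThickness_le_two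
    {X Y : Type*} [Fintype X] [Fintype Y] [DecidableEq X] [DecidableEq Y]
    (G : SimpleGraph (X ⊕ Y)) [DecidableRel G.Adj] (r : ℕ) (hr : 2 ≤ r)
    (hX : ∀ x x' : X, ¬ G.Adj (Sum.inl x) (Sum.inl x'))
    (hY : ∀ y y' : Y, ¬ G.Adj (Sum.inr y) (Sum.inr y'))
    (hdX : ∀ x : X, G.degree (Sum.inl x) = 3)
    (hdY : ∀ y : Y, G.degree (Sum.inr y) = 3 * r) :
    intervalThickness G ≤ 2 := by
  classical
  have hrpos : 0 < r := by omega
  have degX : ∀ x, (Finset.univ.filter (fun y => G.Adj (Sum.inl x) (Sum.inr y))).card = 3 :=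
    fun x => (degX_eq G hX x).trans (hdX x)
  have degY : ∀ y, (Finset.univ.filter (fun x => G.Adj (Sum.inl x) (Sum.inr y))).card = 3 * r :=
    fun y => (degY_eq G hY y).trans (hdY y)
  -- product-form degree counts
  have prodcount : ∀ (P : X → Y → Prop) [∀ x y, Decidable (P x y)] (x : X) (k : ℕ),
      (Finset.univ.filter (fun y => P x y)).card = k →
      (Finset.univ.filter (fun p : Y × Fin r => P x p.1)).card = k * r := by
    intro P _ x k hk
    have : (Finset.univ.filter (fun p : Y × Fin r => P x p.1))
        = (Finset.univ.filter (fun y => P x y)) ×ˢ Finset.univ := by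
      ext p
      simp [Finset.mem_product]
    rw [this, Finset.card_product, hk]
    simp [mul_comm r]
  -- Step 1: Hall for the selection subgraph S
  obtain ⟨f, hfbij, hfadj⟩ := hall_regular
    (fun (x : X) (p : Y × Fin r) => G.Adj (Sum.inl x) (Sum.inr p.1)) (d := 3 * r)
    (by positivity)
    (fun x => prodcount (fun x y => G.Adj (Sum.inl x) (Sum.inr y)) x 3 (degX x))
    (fun p => degY p.1)
  set sel : X → Y := fun x => (f x).1 with hseldef
  have hsel_adj : ∀ x, G.Adj (Sum.inl x) (Sum.inr (sel x)) := hfadj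
  have hsel_fiber : ∀ y, (Finset.univ.filter (fun x => sel x = y)).card = r := by
    intro y
    have := fiber_card_of_bij f hfbij y
    simpa using this
  -- Step 2: Hall for the orientation of the rest
  have filter2 : ∀ x, (Finset.univ.filter
      (fun y => G.Adj (Sum.inl x) (Sum.inr y) ∧ sel x ≠ y)).card = 2 := by
    intro x
    have heq : Finset.univ.filter (fun y => G.Adj (Sum.inl x) (Sum.inr y) ∧ sel x ≠ y)
        = (Finset.univ.filter (fun y => G.Adj (Sum.inl x) (Sum.inr y))).erase (sel x) := by
      ext y
      simp only [Finset.mem_filter, Finset.mem_univ, true_and, Finset.mem_erase]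
      constructor
      · rintro ⟨h1, h2⟩; exact ⟨Ne.symm h2, h1⟩
      · rintro ⟨h1, h2⟩; exact ⟨h2, Ne.symm h1⟩
    rw [heq, Finset.card_erase_of_mem, degX x]
    simp only [Finset.mem_filter, Finset.mem_univ, true_and]
    exact hsel_adj x
  have filter2r : ∀ y, (Finset.univ.filter
      (fun x => G.Adj (Sum.inl x) (Sum.inr y) ∧ sel x ≠ y)).card = 2 * r := by
    intro y
    have heq : Finset.univ.filter (fun x => G.Adj (Sum.inl x) (Sum.inr y) ∧ sel x ≠ y)
        = (Finset.univ.filter (fun x => G.Adj (Sum.inl x) (Sum.inr y)))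
          \ (Finset.univ.filter (fun x => sel x = y)) := by
      ext x
      simp only [Finset.mem_filter, Finset.mem_univ, true_and, Finset.mem_sdiff]
    have hsub : (Finset.univ.filter (fun x => sel x = y))
        ⊆ (Finset.univ.filter (fun x => G.Adj (Sum.inl x) (Sum.inr y))) := by
      intro x hx
      simp only [Finset.mem_filter, Finset.mem_univ, true_and] at hx ⊢
      rw [← hx]; exact hsel_adj x
    rw [heq, Finset.card_sdiff_of_subset hsub, degY y, hsel_fiber y]
    omega
  obtain ⟨g, hgbij, hgadj⟩ := hall_regular
    (fun (x : X) (p : Y × Fin r) =>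
      G.Adj (Sum.inl x) (Sum.inr p.1) ∧ sel x ≠ p.1) (d := 2 * r)
    (by positivity)
    (fun x => prodcount (fun x y => G.Adj (Sum.inl x) (Sum.inr y) ∧ sel x ≠ y) x 2 (filter2 x))
    (fun p => filter2r p.1)
  set head : X → Y := fun x => (g x).1 with hheaddef
  have hhead_adj : ∀ x, G.Adj (Sum.inl x) (Sum.inr (head x)) := fun x => (hgadj x).1
  have hhead_ne : ∀ x, sel x ≠ head x := fun x => (hgadj x).2
  have hhead_fiber : ∀ y, (Finset.univ.filter (fun x => head x = y)).card = r := by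
    intro y
    have := fiber_card_of_bij g hgbij y
    simpa using this
  -- the third neighbor: tail
  have htail_ex : ∀ x, ∃ t,
      ((Finset.univ.filter (fun y => G.Adj (Sum.inl x) (Sum.inr y))).erase
        (sel x)).erase (head x) = {t} := by
    intro x
    rw [← Finset.card_eq_one]
    have h1 : sel x ∈ Finset.univ.filter (fun y => G.Adj (Sum.inl x) (Sum.inr y)) := by
      simp only [Finset.mem_filter, Finset.mem_univ, true_and]; exact hsel_adj x
    have h2 : head x ∈ (Finset.univ.filter
        (fun y => G.Adj (Sum.inl x) (Sum.inr y))).erase (sel x) := by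
      simp only [Finset.mem_erase, Finset.mem_filter, Finset.mem_univ, true_and]
      exact ⟨Ne.symm (hhead_ne x), hhead_adj x⟩
    rw [Finset.card_erase_of_mem h2, Finset.card_erase_of_mem h1, degX x]
  choose tail htail using htail_ex
  have htail_mem : ∀ x, tail x ∈ ((Finset.univ.filter
      (fun y => G.Adj (Sum.inl x) (Sum.inr y))).erase (sel x)).erase (head x) := by
    intro x; rw [htail x]; exact Finset.mem_singleton_self _
  have htail_ne_head : ∀ x, tail x ≠ head x := fun x => (Finset.mem_erase.1 (htail_mem x)).1
  have htail_ne_sel : ∀ x, tail x ≠ sel x :=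
    fun x => (Finset.mem_erase.1 (Finset.mem_of_mem_erase (htail_mem x))).1
  have htail_adj : ∀ x, G.Adj (Sum.inl x) (Sum.inr (tail x)) := by
    intro x
    have := Finset.mem_of_mem_erase (Finset.mem_of_mem_erase (htail_mem x))
    simpa using this
  -- neighbor characterization
  have hnbr : ∀ x y, G.Adj (Sum.inl x) (Sum.inr y) →
      y = sel x ∨ y = head x ∨ y = tail x := by
    intro x y hadj
    have hset : Finset.univ.filter (fun y => G.Adj (Sum.inl x) (Sum.inr y))
        = {sel x, head x, tail x} := by
      symm
      apply Finset.eq_of_subset_of_card_le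
      · intro z hz
        simp only [Finset.mem_insert, Finset.mem_singleton] at hz
        simp only [Finset.mem_filter, Finset.mem_univ, true_and]
        rcases hz with rfl | rfl | rfl
        · exact hsel_adj x
        · exact hhead_adj x
        · exact htail_adj x
      · rw [degX x]
        have c1 : sel x ∉ ({head x, tail x} : Finset Y) := by
          simp only [Finset.mem_insert, Finset.mem_singleton]
          push_neg
          exact ⟨hhead_ne x, fun h => htail_ne_sel x h.symm⟩
        have c2 : head x ∉ ({tail x} : Finset Y) := by
          simp only [Finset.mem_singleton]
          exact fun h => htail_ne_head x h.symm
        rw [Finset.card_insert_of_notMem c1, Finset.card_insert_of_notMem c2,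
          Finset.card_singleton]
    have : y ∈ Finset.univ.filter (fun y => G.Adj (Sum.inl x) (Sum.inr y)) := by
      simp only [Finset.mem_filter, Finset.mem_univ, true_and]; exact hadj
    rw [hset] at this
    simpa using this
  -- tail fibers
  have htail_fiber : ∀ y, (Finset.univ.filter (fun x => tail x = y)).card = r := by
    intro y
    have hsplit : Finset.univ.filter (fun x => G.Adj (Sum.inl x) (Sum.inr y) ∧ sel x ≠ y)
        = (Finset.univ.filter (fun x => head x = y))
          ∪ (Finset.univ.filter (fun x => tail x = y)) := by
      ext x
      simp only [Finset.mem_union, Finset.mem_filter, Finset.mem_univ, true_and]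
      constructor
      · rintro ⟨h1, h2⟩
        rcases hnbr x y h1 with rfl | rfl | rfl
        · exact absurd rfl h2
        · left; rfl
        · right; rfl
      · rintro (rfl | rfl)
        · exact ⟨hhead_adj x, hhead_ne x⟩
        · exact ⟨htail_adj x, fun h => htail_ne_sel x h.symm⟩
    have hdisj : Disjoint (Finset.univ.filter (fun x => head x = y))
        (Finset.univ.filter (fun x => tail x = y)) := by
      rw [Finset.disjoint_filter]
      intro x _ h1 h2
      exact htail_ne_head x (h2.trans h1.symm)
    have := filter2r y
    rw [hsplit, Finset.card_union_of_disjoint hdisj, hhead_fiber y] at this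
    omega
  -- König edge coloring
  obtain ⟨c, hclt0, hct, hch⟩ := konig_coloring r Finset.univ tail head
    (fun y => htail_fiber y) (fun y => hhead_fiber y)
  have hclt : ∀ x, c x < r := fun x => hclt0 x (Finset.mem_univ x)
  have hct' : ∀ x₁ x₂, tail x₁ = tail x₂ → c x₁ = c x₂ → x₁ = x₂ :=
    fun x₁ x₂ => hct x₁ (Finset.mem_univ _) x₂ (Finset.mem_univ _)
  have hch' : ∀ x₁ x₂, head x₁ = head x₂ → c x₁ = c x₂ → x₁ = x₂ :=
    fun x₁ x₂ => hch x₁ (Finset.mem_univ _) x₂ (Finset.mem_univ _)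
  -- surjectivity of colors on fibers
  have hsurj : ∀ (F : X → Y), (∀ y, (Finset.univ.filter (fun x => F x = y)).card = r) →
      (∀ x₁ x₂, F x₁ = F x₂ → c x₁ = c x₂ → x₁ = x₂) →
      ∀ y i, i < r → ∃ x, F x = y ∧ c x = i := by
    intro F hfib hinj y i hi
    set s := Finset.univ.filter (fun x => F x = y) with hs
    have himg : (s.image c).card = r := by
      rw [Finset.card_image_of_injOn, hfib y]
      intro x₁ h₁ x₂ h₂ hc
      simp only [hs, Finset.mem_coe, Finset.mem_filter, Finset.mem_univ, true_and] at h₁ h₂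
      exact hinj x₁ x₂ (h₁.trans h₂.symm) hc
    have hsub : s.image c ⊆ Finset.range r := by
      intro n hn
      obtain ⟨x, _, rfl⟩ := Finset.mem_image.1 hn
      exact Finset.mem_range.2 (hclt x)
    have : s.image c = Finset.range r :=
      Finset.eq_of_subset_of_card_le hsub (by rw [himg, Finset.card_range])
    have : i ∈ s.image c := by rw [this]; exact Finset.mem_range.2 hi
    obtain ⟨x, hx, hcx⟩ := Finset.mem_image.1 this
    simp only [hs, Finset.mem_filter, Finset.mem_univ, true_and] at hx
    exact ⟨x, hx, hcx⟩
  have htailsurj := hsurj tail htail_fiber hct'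
  have hheadsurj := hsurj head hhead_fiber hch'
  have hslotsurj : ∀ (y : Y) (j : Fin r), ∃ x, sel x = y ∧ (f x).2 = j := by
    intro y j
    obtain ⟨x, hx⟩ := hfbij.2 (y, j)
    exact ⟨x, by rw [hseldef]; simp [hx], by rw [hx]⟩
  -- the two subgraphs
  set H2 : SimpleGraph (X ⊕ Y) :=
    { Adj := fun u v => G.Adj u v ∧ pairSel sel u v
      symm := ⟨fun u v h => ⟨h.1.symm, pairSel_symm sel u v h.2⟩⟩
      loopless := ⟨fun u h => G.loopless.irrefl u h.1⟩ } with hH2def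
  set H1 : SimpleGraph (X ⊕ Y) :=
    { Adj := fun u v => G.Adj u v ∧ ¬ pairSel sel u v
      symm := ⟨fun u v h => ⟨h.1.symm, fun hp => h.2 (pairSel_symm sel v u hp)⟩⟩
      loopless := ⟨fun u h => G.loopless.irrefl u h.1⟩ } with hH1def
  have hH2adj : ∀ x y, H2.Adj (Sum.inl x) (Sum.inr y) ↔
      (G.Adj (Sum.inl x) (Sum.inr y) ∧ sel x = y) := by
    intro x y; rw [hH2def]; rfl
  have hH1adj : ∀ x y, H1.Adj (Sum.inl x) (Sum.inr y) ↔
      (G.Adj (Sum.inl x) (Sum.inr y) ∧ sel x ≠ y) := by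
    intro x y; rw [hH1def]; rfl
  -- shape of edges
  have hshapeG : ∀ e ∈ G.edgeSet, ∃ x y,
      e = s(Sum.inl x, Sum.inr y) ∧ G.Adj (Sum.inl x) (Sum.inr y) := by
    intro e he
    induction e with
    | _ u v =>
      rw [SimpleGraph.mem_edgeSet] at he
      match u, v, he with
      | Sum.inl x, Sum.inl x', he => exact absurd he (hX x x')
      | Sum.inr y, Sum.inr y', he => exact absurd he (hY y y')
      | Sum.inl x, Sum.inr y, he => exact ⟨x, y, rfl, he⟩
      | Sum.inr y, Sum.inl x, he => exact ⟨x, y, Sym2.eq_swap, he.symm⟩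
  have hle1 : H1 ≤ G := fun u v h => h.1
  have hle2 : H2 ≤ G := fun u v h => h.1
  have hshape1 : ∀ e ∈ H1.edgeSet, ∃ x y,
      e = s(Sum.inl x, Sum.inr y) ∧ H1.Adj (Sum.inl x) (Sum.inr y) := by
    intro e he
    obtain ⟨x, y, rfl, _⟩ := hshapeG e (SimpleGraph.edgeSet_mono hle1 he)
    exact ⟨x, y, rfl, (SimpleGraph.mem_edgeSet _).1 he⟩
  have hshape2 : ∀ e ∈ H2.edgeSet, ∃ x y,
      e = s(Sum.inl x, Sum.inr y) ∧ H2.Adj (Sum.inl x) (Sum.inr y) := by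
    intro e he
    obtain ⟨x, y, rfl, _⟩ := hshapeG e (SimpleGraph.edgeSet_mono hle2 he)
    exact ⟨x, y, rfl, (SimpleGraph.mem_edgeSet _).1 he⟩
  -- H1 adjacency in terms of head/tail
  have hH1iff : ∀ x y, H1.Adj (Sum.inl x) (Sum.inr y) ↔ (y = head x ∨ y = tail x) := by
    intro x y
    rw [hH1adj]
    constructor
    · rintro ⟨h1, h2⟩
      rcases hnbr x y h1 with rfl | rfl | rfl
      · exact absurd rfl h2
      · exact Or.inl rfl
      · exact Or.inr rfl
    · rintro (rfl | rfl)
      · exact ⟨hhead_adj x, hhead_ne x⟩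
      · exact ⟨htail_adj x, fun h => htail_ne_sel x h.symm⟩
  -- colorings
  set cS : Sym2 (X ⊕ Y) → ℕ := bipColor (fun x _ => ((f x).2 : ℕ) + 1) with hcSdef
  set cH : Sym2 (X ⊕ Y) → ℕ := bipColor (fun x y =>
    if y = head x then 2 * c x + 2 else if y = tail x then 2 * c x + 1 else 0) with hcHdef
  -- interval colorability of H2 (the star forest)
  have hIC2 : IntervalColorable H2 := by
    refine ⟨cS, ?_, ?_, ?_⟩
    · rintro e₁ he₁ e₂ he₂ hne ⟨v, hv₁, hv₂⟩
      obtain ⟨x₁, y₁, rfl, ha₁⟩ := hshape2 e₁ he₁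
      obtain ⟨x₂, y₂, rfl, ha₂⟩ := hshape2 e₂ he₂
      obtain ⟨hg₁, hs₁⟩ := (hH2adj _ _).1 ha₁
      obtain ⟨hg₂, hs₂⟩ := (hH2adj _ _).1 ha₂
      rw [Sym2.mem_iff] at hv₁ hv₂
      have hxy : x₁ ≠ x₂ := by
        rintro rfl
        have : y₁ = y₂ := hs₁.symm.trans hs₂
        subst this
        exact hne rfl
      rcases hv₁ with rfl | rfl
      · rcases hv₂ with h | h
        · exact absurd (Sum.inl.inj h) hxy
        · simp at h
      · rcases hv₂ with h | h
        · simp at h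
        · have hy : y₁ = y₂ := Sum.inr.inj h
          subst hy
          simp only [hcSdef, bipColor_mk]
          intro hcc
          have h2 : (f x₁).2 = (f x₂).2 := Fin.ext (by omega)
          have h1 : (f x₁).1 = (f x₂).1 := by
            rw [hseldef] at hs₁ hs₂
            simp only at hs₁ hs₂
            rw [hs₁, hs₂]
          exact hxy (hfbij.1 (Prod.ext h1 h2))
    · intro e he
      obtain ⟨x, y, rfl, _⟩ := hshape2 e he
      simp only [hcSdef, bipColor_mk]
      omega
    · intro v a ha b hb k hak hkb
      match v with
      | Sum.inl x =>
        have hval : ∀ n ∈ colorsAt H2 cS (Sum.inl x), n = ((f x).2 : ℕ) + 1 := by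
          intro n hn
          obtain ⟨x', y', hadj, hv, hc⟩ := colorsAt_shape H2 hshape2 cS _ n hn
          rcases hv with h | h
          · obtain rfl := Sum.inl.inj h
            rw [← hc]
            simp [hcSdef]
          · simp at h
        have hka : k = a := by
          have h1 := hval a ha
          have h2 := hval b hb
          omega
        exact hka ▸ ha
      | Sum.inr y =>
        have hbnd : ∀ n ∈ colorsAt H2 cS (Sum.inr y), 1 ≤ n ∧ n ≤ r := by
          intro n hn
          obtain ⟨x', y', hadj, hv, hc⟩ := colorsAt_shape H2 hshape2 cS _ n hn
          rcases hv with h | h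
          · simp at h
          · rw [← hc]
            simp only [hcSdef, bipColor_mk]
            have := (f x').2.isLt
            omega
        have h1k : 1 ≤ k := le_trans (hbnd a ha).1 hak
        have hkr : k ≤ r := le_trans hkb (hbnd b hb).2
        obtain ⟨x, hx1, hx2⟩ := hslotsurj y ⟨k - 1, by omega⟩
        refine ⟨s(Sum.inl x, Sum.inr y),
          (SimpleGraph.mem_edgeSet _).2 ((hH2adj x y).2 ⟨?_, hx1⟩), by simp, ?_⟩
        · rw [← hx1]; exact hsel_adj x
        · simp only [hcSdef, bipColor_mk, hx2]
          show k - 1 + 1 = k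
          omega
  have hcH_head : ∀ x, cH s(Sum.inl x, Sum.inr (head x)) = 2 * c x + 2 := by
    intro x
    simp [hcHdef]
  have hcH_tail : ∀ x, cH s(Sum.inl x, Sum.inr (tail x)) = 2 * c x + 1 := by
    intro x
    simp [hcHdef, htail_ne_head x]
  have hcH_val : ∀ x y, H1.Adj (Sum.inl x) (Sum.inr y) →
      cH s(Sum.inl x, Sum.inr y) = 2 * c x + 2 ∧ y = head x ∨
      cH s(Sum.inl x, Sum.inr y) = 2 * c x + 1 ∧ y = tail x := by
    intro x y hadj
    rcases (hH1iff x y).1 hadj with rfl | rfl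
    · exact Or.inl ⟨hcH_head x, rfl⟩
    · exact Or.inr ⟨hcH_tail x, rfl⟩
  have hIC1 : IntervalColorable H1 := by
    refine ⟨cH, ?_, ?_, ?_⟩
    · rintro e₁ he₁ e₂ he₂ hne ⟨v, hv₁, hv₂⟩
      obtain ⟨x₁, y₁, rfl, ha₁⟩ := hshape1 e₁ he₁
      obtain ⟨x₂, y₂, rfl, ha₂⟩ := hshape1 e₂ he₂
      rw [Sym2.mem_iff] at hv₁ hv₂
      rcases hv₁ with rfl | rfl
      · rcases hv₂ with h | h
        · obtain rfl := Sum.inl.inj h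
          have hyne : y₁ ≠ y₂ := by rintro rfl; exact hne rfl
          rcases hcH_val _ _ ha₁ with ⟨hc₁, rfl⟩ | ⟨hc₁, rfl⟩ <;>
            rcases hcH_val _ _ ha₂ with ⟨hc₂, h₂⟩ | ⟨hc₂, h₂⟩ <;>
            rw [hc₁, hc₂] <;> first
              | (exact absurd h₂.symm hyne)
              | omega
        · simp at h
      · rcases hv₂ with h | h
        · simp at h
        · obtain rfl := Sum.inr.inj h
          have hxne : x₁ ≠ x₂ := by rintro rfl; exact hne rfl
          rcases hcH_val _ _ ha₁ with ⟨hc₁, h₁⟩ | ⟨hc₁, h₁⟩ <;>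
            rcases hcH_val _ _ ha₂ with ⟨hc₂, h₂⟩ | ⟨hc₂, h₂⟩ <;>
            rw [hc₁, hc₂]
          · intro hcc
            exact hxne (hch' x₁ x₂ (h₁.symm.trans h₂) (by omega))
          · omega
          · omega
          · intro hcc
            exact hxne (hct' x₁ x₂ (h₁.symm.trans h₂) (by omega))
    · intro e he
      obtain ⟨x, y, rfl, hadj⟩ := hshape1 e he
      rcases hcH_val _ _ hadj with ⟨hc₁, _⟩ | ⟨hc₁, _⟩ <;> omega
    · intro v a ha b hb k hak hkb
      match v with
      | Sum.inl x =>
        have hval : ∀ n ∈ colorsAt H1 cH (Sum.inl x),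
            n = 2 * c x + 1 ∨ n = 2 * c x + 2 := by
          intro n hn
          obtain ⟨x', y', hadj, hv, hc⟩ := colorsAt_shape H1 hshape1 cH _ n hn
          rcases hv with h | h
          · obtain rfl := Sum.inl.inj h
            rcases hcH_val _ _ hadj with ⟨hc₁, _⟩ | ⟨hc₁, _⟩ <;> omega
          · simp at h
        have hk : k = 2 * c x + 1 ∨ k = 2 * c x + 2 := by
          rcases hval a ha with h₁ | h₁ <;> rcases hval b hb with h₂ | h₂ <;> omega
        have hmem1 : (2 * c x + 1 : ℕ) ∈ colorsAt H1 cH (Sum.inl x) := by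
          refine ⟨s(Sum.inl x, Sum.inr (tail x)),
            (SimpleGraph.mem_edgeSet _).2 ((hH1iff x (tail x)).2 (Or.inr rfl)), by simp, ?_⟩
          exact hcH_tail x
        have hmem2 : (2 * c x + 2 : ℕ) ∈ colorsAt H1 cH (Sum.inl x) := by
          refine ⟨s(Sum.inl x, Sum.inr (head x)),
            (SimpleGraph.mem_edgeSet _).2 ((hH1iff x (head x)).2 (Or.inl rfl)), by simp, ?_⟩
          exact hcH_head x
        rcases hk with rfl | rfl
        · exact hmem1
        · exact hmem2
      | Sum.inr y =>
        have hbnd : ∀ n ∈ colorsAt H1 cH (Sum.inr y), 1 ≤ n ∧ n ≤ 2 * r := by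
          intro n hn
          obtain ⟨x', y', hadj, hv, hc⟩ := colorsAt_shape H1 hshape1 cH _ n hn
          rcases hv with h | h
          · simp at h
          · have := hclt x'
            rcases hcH_val _ _ hadj with ⟨hc₁, _⟩ | ⟨hc₁, _⟩ <;> omega
        have h1k : 1 ≤ k := le_trans (hbnd a ha).1 hak
        have hkr : k ≤ 2 * r := le_trans hkb (hbnd b hb).2
        rcases Nat.even_or_odd k with ⟨m, hm⟩ | ⟨m, hm⟩
        · -- k = 2(m-1) + 2, head edge
          obtain ⟨x, hx1, hx2⟩ := hheadsurj y (m - 1) (by omega)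
          refine ⟨s(Sum.inl x, Sum.inr y),
            (SimpleGraph.mem_edgeSet _).2 ((hH1iff x y).2 (Or.inl hx1.symm)), by simp, ?_⟩
          rw [show y = head x from hx1.symm, hcH_head x, hx2]
          omega
        · -- k = 2m + 1, tail edge
          obtain ⟨x, hx1, hx2⟩ := htailsurj y m (by omega)
          refine ⟨s(Sum.inl x, Sum.inr y),
            (SimpleGraph.mem_edgeSet _).2 ((hH1iff x y).2 (Or.inr hx1.symm)), by simp, ?_⟩
          rw [show y = tail x from hx1.symm, hcH_tail x, hx2]
          omega
  -- assemble
  have hdec : IntervalDecomposition G 2 := by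
    refine ⟨fun i => if i = 0 then H1 else H2, ?_, ?_, ?_⟩
    · intro i; by_cases h : i = 0 <;> simp [h, hle1, hle2]
    · intro i; by_cases h : i = 0 <;> simp [h, hIC1, hIC2]
    · intro e he
      obtain ⟨x, y, rfl, hadj⟩ := hshapeG e he
      by_cases hsel : sel x = y
      · refine ⟨1, ?_, ?_⟩
        · simp only [Fin.one_eq_zero_iff, if_neg (by omega : (1 : Fin 2) ≠ 0)]
          exact (SimpleGraph.mem_edgeSet _).2 ((hH2adj x y).2 ⟨hadj, hsel⟩)
        · intro i hi
          by_cases h : i = 0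
          · subst h
            simp only [if_pos rfl] at hi
            have := (hH1adj x y).1 ((SimpleGraph.mem_edgeSet _).1 hi)
            exact absurd hsel this.2
          · omega
      · refine ⟨0, ?_, ?_⟩
        · simp only [if_pos rfl]
          exact (SimpleGraph.mem_edgeSet _).2 ((hH1adj x y).2 ⟨hadj, hsel⟩)
        · intro i hi
          by_cases h : i = 0
          · exact h
          · exfalso
            simp only [if_neg h] at hi
            have := (hH2adj x y).1 ((SimpleGraph.mem_edgeSet _).1 hi)
            exact hsel this.2
  exact Nat.sInf_le hdec
end

section
/- Every (k, kr)-biregular bipartite graph with k ≥ 4 and r ≥ 2 satisfies θ_int(G) ≤ k − 2. -/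
open SimpleGraph

variable {V : Type*}

open Finset

section Counting

variable {ε A B : Type*}

lemma double_count [DecidableEq A] (E : Finset ε) (p : ε → A) (S : Finset A)
    [DecidablePred fun e => p e ∈ S] [∀ a, DecidablePred fun e => p e = a] :
    (E.filter (fun e => p e ∈ S)).card = ∑ a ∈ S, (E.filter (fun e => p e = a)).card := by
  classical
  rw [Finset.card_eq_sum_card_fiberwise (f := p) (s := E.filter (fun e => p e ∈ S)) (t := S)
    (fun e he => Finset.mem_coe.mpr (mem_filter.mp (Finset.mem_coe.mp he)).2)]
  refine Finset.sum_congr rfl fun a ha => ?_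
  congr 1
  ext e
  simp only [mem_filter]
  constructor
  · rintro ⟨⟨he, _⟩, hpe⟩; exact ⟨he, hpe⟩
  · rintro ⟨he, hpe⟩; exact ⟨⟨he, hpe ▸ ha⟩, hpe⟩

lemma reg_matching [Fintype A] [Fintype B] [DecidableEq ε] [DecidableEq A] [DecidableEq B]
    (E : Finset ε) (p : ε → A) (q : ε → B) (d : ℕ) (hd : 0 < d)
    (hA : ∀ a, (E.filter (fun e => p e = a)).card = d)
    (hB : ∀ b, (E.filter (fun e => q e = b)).card = d) :
    ∃ m : A → ε, (∀ a, m a ∈ E ∧ p (m a) = a) ∧ Function.Bijective (q ∘ m) := by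
  classical
  set t : A → Finset B := fun a => (E.filter (fun e => p e = a)).image q with ht
  have hall : ∀ S : Finset A, S.card ≤ (S.biUnion t).card := by
    intro S
    have h1 : d * S.card = (E.filter (fun e => p e ∈ S)).card := by
      rw [double_count E p S]
      rw [Finset.sum_congr rfl fun a _ => hA a, Finset.sum_const, smul_eq_mul, mul_comm]
    have h2 : (E.filter (fun e => p e ∈ S)).card ≤ (E.filter (fun e => q e ∈ S.biUnion t)).card := by
      apply Finset.card_le_card
      intro e he
      rw [mem_filter] at he ⊢
      refine ⟨he.1, Finset.mem_biUnion.mpr ⟨p e, he.2, ?_⟩⟩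
      exact Finset.mem_image.mpr ⟨e, mem_filter.mpr ⟨he.1, rfl⟩, rfl⟩
    have h3 : (E.filter (fun e => q e ∈ S.biUnion t)).card = d * (S.biUnion t).card := by
      rw [double_count E q (S.biUnion t)]
      rw [Finset.sum_congr rfl fun b _ => hB b, Finset.sum_const, smul_eq_mul, mul_comm]
    have := h1 ▸ (h3 ▸ h2)
    exact Nat.le_of_mul_le_mul_left this hd
  obtain ⟨f, hfinj, hf⟩ := (Finset.all_card_le_biUnion_card_iff_exists_injective t).mp hall
  have hch : ∀ a, ∃ e, (e ∈ E ∧ p e = a) ∧ q e = f a := by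
    intro a
    obtain ⟨e, he, hqe⟩ := Finset.mem_image.mp (hf a)
    exact ⟨e, mem_filter.mp he, hqe⟩
  choose m hm hqm using hch
  have hqmf : (q ∘ m) = f := funext fun a => hqm a
  have hcard : Fintype.card A = Fintype.card B := by
    have cA : d * Fintype.card A = E.card := by
      have : (E.filter (fun e => p e ∈ (univ : Finset A))).card = E.card := by
        congr 1; apply Finset.filter_true_of_mem; intro e _; exact mem_univ _
      rw [← this, double_count E p univ,
        Finset.sum_congr rfl fun a _ => hA a, Finset.sum_const, smul_eq_mul, mul_comm,
        Finset.card_univ]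
    have cB : d * Fintype.card B = E.card := by
      have : (E.filter (fun e => q e ∈ (univ : Finset B))).card = E.card := by
        congr 1; apply Finset.filter_true_of_mem; intro e _; exact mem_univ _
      rw [← this, double_count E q univ,
        Finset.sum_congr rfl fun b _ => hB b, Finset.sum_const, smul_eq_mul, mul_comm,
        Finset.card_univ]
    exact Nat.eq_of_mul_eq_mul_left hd (cA.trans cB.symm)
  refine ⟨m, fun a => hm a, ?_⟩
  · rw [hqmf]
    exact (Fintype.bijective_iff_injective_and_card f).mpr ⟨hfinj, hcard⟩

lemma reg_factor [Fintype A] [Fintype B] [DecidableEq ε] [DecidableEq A] [DecidableEq B]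
    (p : ε → A) (q : ε → B) :
    ∀ (d : ℕ) (E : Finset ε),
      (∀ a, (E.filter (fun e => p e = a)).card = d) →
      (∀ b, (E.filter (fun e => q e = b)).card = d) →
      ∃ φ : ε → ℕ, (∀ e ∈ E, φ e < d) ∧
        ∀ j < d, (∀ a, (E.filter (fun e => p e = a ∧ φ e = j)).card = 1) ∧
                 (∀ b, (E.filter (fun e => q e = b ∧ φ e = j)).card = 1) := by
  classical
  intro d
  induction d with
  | zero =>
    intro E hA _
    refine ⟨fun _ => 0, fun e he => ?_, fun j hj => by omega⟩
    have : e ∈ E.filter (fun e' => p e' = p e) := mem_filter.mpr ⟨he, rfl⟩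
    have h0 := hA (p e)
    rw [Finset.card_eq_zero] at h0
    rw [h0] at this
    exact absurd this (Finset.notMem_empty e)
  | succ d IH =>
    intro E hA hB
    obtain ⟨m, hm, hbij⟩ := reg_matching E p q (d+1) (Nat.succ_pos d) hA hB
    have hpm : ∀ a, p (m a) = a := fun a => (hm a).2
    have hminj : Function.Injective m := by
      intro a a' h
      have := hpm a; rw [h, hpm a'] at this; exact this.symm
    set M : Finset ε := Finset.univ.image m with hM
    have hmemM : ∀ e, e ∈ M ↔ ∃ a, m a = e := by
      intro e; simp [hM]
    -- unique element of M in each q-fiber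
    have hqM : ∀ b, ∀ e ∈ M, q e = b → e = m ((Equiv.ofBijective _ hbij).symm b) := by
      intro b e heM hqe
      obtain ⟨a, ha⟩ := (hmemM e).mp heM
      have : (q ∘ m) a = b := by simp [ha, hqe]
      have ha' : a = (Equiv.ofBijective _ hbij).symm b := (Equiv.eq_symm_apply _).mpr this
      rw [← ha, ha']
    set E' : Finset ε := E \ M with hE'
    have hA' : ∀ a, (E'.filter (fun e => p e = a)).card = d := by
      intro a
      have heq : E'.filter (fun e => p e = a) = (E.filter (fun e => p e = a)).erase (m a) := by
        ext e
        simp only [hE', mem_filter, mem_sdiff, Finset.mem_erase]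
        constructor
        · rintro ⟨⟨he, hnm⟩, hpe⟩
          exact ⟨fun h => hnm (h ▸ (hmemM (m a)).mpr ⟨a, rfl⟩), he, hpe⟩
        · rintro ⟨hne, he, hpe⟩
          refine ⟨⟨he, fun hmem => ?_⟩, hpe⟩
          obtain ⟨a', ha'⟩ := (hmemM e).mp hmem
          have : a' = a := by rw [← hpe, ← ha', hpm]
          exact hne (by rw [← ha', this])
      rw [heq, Finset.card_erase_of_mem (mem_filter.mpr ⟨(hm a).1, hpm a⟩), hA a]
      omega
    have hB' : ∀ b, (E'.filter (fun e => q e = b)).card = d := by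
      intro b
      set ab := (Equiv.ofBijective _ hbij).symm b with hab
      have hqmb : q (m ab) = b := (Equiv.ofBijective _ hbij).apply_symm_apply b
      have heq : E'.filter (fun e => q e = b) = (E.filter (fun e => q e = b)).erase (m ab) := by
        ext e
        simp only [hE', mem_filter, mem_sdiff, Finset.mem_erase]
        constructor
        · rintro ⟨⟨he, hnm⟩, hqe⟩
          exact ⟨fun h => hnm (h ▸ (hmemM (m ab)).mpr ⟨ab, rfl⟩), he, hqe⟩
        · rintro ⟨hne, he, hqe⟩
          refine ⟨⟨he, fun hmem => ?_⟩, hqe⟩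
          exact hne (hqM b e hmem hqe)
      rw [heq, Finset.card_erase_of_mem (mem_filter.mpr ⟨(hm ab).1, hqmb⟩), hB b]
      omega
    obtain ⟨φ', hφ'lt, hφ'⟩ := IH E' hA' hB'
    refine ⟨fun e => if e ∈ M then d else φ' e, ?_, ?_⟩
    · intro e he
      by_cases hM' : e ∈ M
      · simp [hM']
      · simp only [hM', if_false]
        exact Nat.lt_succ_of_lt (hφ'lt e (mem_sdiff.mpr ⟨he, hM'⟩))
    · intro j hj
      rcases Nat.lt_succ_iff_lt_or_eq.mp hj with hjd | hjd
      · constructor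
        · intro a
          have heq : E.filter (fun e => p e = a ∧ (if e ∈ M then d else φ' e) = j)
              = E'.filter (fun e => p e = a ∧ φ' e = j) := by
            ext e
            simp only [mem_filter, hE', mem_sdiff]
            constructor
            · rintro ⟨he, hpe, hval⟩
              by_cases hM' : e ∈ M
              · rw [if_pos hM'] at hval; omega
              · rw [if_neg hM'] at hval; exact ⟨⟨he, hM'⟩, hpe, hval⟩
            · rintro ⟨⟨he, hM'⟩, hpe, hval⟩
              exact ⟨he, hpe, by rw [if_neg hM']; exact hval⟩
          rw [heq]; exact (hφ' j hjd).1 a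
        · intro b
          have heq : E.filter (fun e => q e = b ∧ (if e ∈ M then d else φ' e) = j)
              = E'.filter (fun e => q e = b ∧ φ' e = j) := by
            ext e
            simp only [mem_filter, hE', mem_sdiff]
            constructor
            · rintro ⟨he, hqe, hval⟩
              by_cases hM' : e ∈ M
              · rw [if_pos hM'] at hval; omega
              · rw [if_neg hM'] at hval; exact ⟨⟨he, hM'⟩, hqe, hval⟩
            · rintro ⟨⟨he, hM'⟩, hqe, hval⟩
              exact ⟨he, hqe, by rw [if_neg hM']; exact hval⟩
          rw [heq]; exact (hφ' j hjd).2 b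
      · subst hjd
        constructor
        · intro a
          have heq : E.filter (fun e => p e = a ∧ (if e ∈ M then j else φ' e) = j) = {m a} := by
            ext e
            simp only [mem_filter, Finset.mem_singleton]
            constructor
            · rintro ⟨he, hpe, hval⟩
              by_cases hM' : e ∈ M
              · obtain ⟨a', ha'⟩ := (hmemM e).mp hM'
                have : a' = a := by rw [← hpe, ← ha', hpm]
                rw [← ha', this]
              · rw [if_neg hM'] at hval
                exact absurd hval (Nat.ne_of_lt (hφ'lt e (mem_sdiff.mpr ⟨he, hM'⟩)))
            · rintro rfl
              have hMm : m a ∈ M := (hmemM (m a)).mpr ⟨a, rfl⟩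
              exact ⟨(hm a).1, hpm a, by rw [if_pos hMm]⟩
          rw [heq, Finset.card_singleton]
        · intro b
          set ab := (Equiv.ofBijective _ hbij).symm b with hab
          have hqmb : q (m ab) = b := (Equiv.ofBijective _ hbij).apply_symm_apply b
          have heq : E.filter (fun e => q e = b ∧ (if e ∈ M then j else φ' e) = j) = {m ab} := by
            ext e
            simp only [mem_filter, Finset.mem_singleton]
            constructor
            · rintro ⟨he, hqe, hval⟩
              by_cases hM' : e ∈ M
              · exact hqM b e hM' hqe
              · rw [if_neg hM'] at hval
                exact absurd hval (Nat.ne_of_lt (hφ'lt e (mem_sdiff.mpr ⟨he, hM'⟩)))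
            · rintro rfl
              have hMm : m ab ∈ M := (hmemM (m ab)).mpr ⟨ab, rfl⟩
              exact ⟨(hm ab).1, hqmb, by rw [if_pos hMm]⟩
          rw [heq, Finset.card_singleton]

lemma card_fiber_comp {α β : Type*} [Fintype α] [Fintype β] [DecidableEq β]
    (σ : α → β) (hσ : Function.Bijective σ) (P : β → Prop) [DecidablePred P] :
    (univ.filter (fun x => P (σ x))).card = (univ.filter P).card := by
  apply Finset.card_bij (fun x _ => σ x)
  · intro x hx
    simp only [mem_filter, mem_univ, true_and] at hx ⊢
    exact hx
  · intro x _ x' _ h; exact hσ.1 h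
  · intro b hb
    obtain ⟨x, rfl⟩ := hσ.2 b
    simp only [mem_filter, mem_univ, true_and] at hb
    exact ⟨x, by simp [hb]⟩

lemma card_fst_fiber {Y : Type*} [Fintype Y] [DecidableEq Y] (r : ℕ) (y : Y) :
    (univ.filter (fun z : Y × Fin r => z.1 = y)).card = r := by
  have : univ.filter (fun z : Y × Fin r => z.1 = y) = {y} ×ˢ univ := by
    ext z
    simp only [mem_filter, mem_univ, true_and, Finset.mem_product, Finset.mem_singleton,
      and_true]
  rw [this, Finset.card_product, Finset.card_singleton, Finset.card_univ, Fintype.card_fin,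
    one_mul]

lemma exu_of_card_one {α : Type*} [Fintype α] {P : α → Prop} [DecidablePred P]
    (h : (univ.filter P).card = 1) : ∃! a, P a := by
  obtain ⟨a, ha⟩ := Finset.card_eq_one.mp h
  refine ⟨a, ?_, ?_⟩
  · have : a ∈ univ.filter P := ha ▸ Finset.mem_singleton_self a
    exact (mem_filter.mp this).2
  · intro a' ha'
    have : a' ∈ univ.filter P := mem_filter.mpr ⟨mem_univ _, ha'⟩
    rw [ha] at this
    exact Finset.mem_singleton.mp this

lemma peel {X Y : Type*} [Fintype X] [Fintype Y] [DecidableEq X] [DecidableEq Y]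
    (r : ℕ) (hr : 0 < r) :
    ∀ (m : ℕ) (D : Finset (X × Y)),
      (∀ x, (D.filter (fun p => p.1 = x)).card = m) →
      (∀ y, (D.filter (fun p => p.2 = y)).card = m * r) →
      ∃ f : Fin m → X → Y,
        (∀ t x, (x, f t x) ∈ D) ∧
        (∀ t y, (univ.filter (fun x => f t x = y)).card = r) ∧
        (∀ t s x, t ≠ s → f t x ≠ f s x) := by
  classical
  intro m
  induction m with
  | zero =>
    intro D _ _
    exact ⟨Fin.elim0, fun t => t.elim0, fun t => t.elim0, fun t => t.elim0⟩
  | succ m IH =>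
    intro D hDx hDy
    -- blow up Y into Y × Fin r and apply Hall
    set E : Finset ((X × Y) × Fin r) := D ×ˢ univ with hE
    have hA : ∀ x, (E.filter (fun e => e.1.1 = x)).card = (m+1) * r := by
      intro x
      have : E.filter (fun e => e.1.1 = x) = (D.filter (fun p => p.1 = x)) ×ˢ univ := by
        ext e
        simp only [hE, mem_filter, Finset.mem_product, mem_univ, and_true]
      rw [this, Finset.card_product, hDx x, Finset.card_univ, Fintype.card_fin]
    have hB : ∀ z : Y × Fin r, (E.filter (fun e => (e.1.2, e.2) = z)).card = (m+1) * r := by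
      rintro ⟨y, i⟩
      have : E.filter (fun e => (e.1.2, e.2) = (y, i))
          = (D.filter (fun p => p.2 = y)) ×ˢ {i} := by
        ext e
        simp only [hE, mem_filter, Finset.mem_product, mem_univ, and_true, Prod.mk.injEq,
          Finset.mem_singleton]
        tauto
      rw [this, Finset.card_product, hDy y, Finset.card_singleton, mul_one]
    obtain ⟨mf, hmf, hbij⟩ := reg_matching E (fun e => e.1.1) (fun e => (e.1.2, e.2))
      ((m+1) * r) (Nat.mul_pos (Nat.succ_pos m) hr) hA hB
    set f₀ : X → Y := fun x => (mf x).1.2 with hf₀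
    have hmem₀ : ∀ x, (x, f₀ x) ∈ D := by
      intro x
      have h1 : (mf x) ∈ E := (hmf x).1
      have h2 : (mf x).1.1 = x := (hmf x).2
      have : (mf x).1 ∈ D := (Finset.mem_product.mp h1).1
      have heq : (mf x).1 = (x, f₀ x) := by
        rw [hf₀]; exact Prod.ext h2 rfl
      rwa [heq] at this
    have hfib₀ : ∀ y, (univ.filter (fun x => f₀ x = y)).card = r := by
      intro y
      have heq : (univ.filter (fun x => f₀ x = y))
          = (univ.filter (fun x => (((fun e => (e.1.2, e.2)) ∘ mf) x).1 = y)) := by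
        ext x; simp [hf₀, Function.comp]
      rw [heq, card_fiber_comp _ hbij (fun z : Y × Fin r => z.1 = y), card_fst_fiber]
    -- remove the factor
    set F : Finset (X × Y) := univ.image (fun x => (x, f₀ x)) with hF
    have hmemF : ∀ p : X × Y, p ∈ F ↔ f₀ p.1 = p.2 := by
      intro p
      simp only [hF, Finset.mem_image, mem_univ, true_and]
      constructor
      · rintro ⟨x, rfl⟩; rfl
      · intro h; exact ⟨p.1, by rw [h]⟩
    set D' : Finset (X × Y) := D \ F with hD'
    have hD'x : ∀ x, (D'.filter (fun p => p.1 = x)).card = m := by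
      intro x
      have heq : D'.filter (fun p => p.1 = x) = (D.filter (fun p => p.1 = x)).erase (x, f₀ x) := by
        ext p
        simp only [hD', mem_filter, mem_sdiff, Finset.mem_erase]
        constructor
        · rintro ⟨⟨hp, hnF⟩, hx⟩
          refine ⟨fun h => hnF ?_, hp, hx⟩
          rw [h, hmemF]
        · rintro ⟨hne, hp, hx⟩
          refine ⟨⟨hp, fun hmem => hne ?_⟩, hx⟩
          have := (hmemF p).mp hmem
          have : p = (p.1, f₀ p.1) := Prod.ext rfl this.symm
          rw [this, hx]
      have hmm : (x, f₀ x) ∈ D.filter (fun p : X × Y => p.1 = x) :=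
        mem_filter.mpr ⟨hmem₀ x, rfl⟩
      rw [heq, Finset.card_erase_of_mem hmm, hDx x]
      omega
    have hD'y : ∀ y, (D'.filter (fun p => p.2 = y)).card = m * r := by
      intro y
      set Fy : Finset (X × Y) := (univ.filter (fun x => f₀ x = y)).image (fun x => (x, f₀ x))
        with hFy
      have heq : D'.filter (fun p => p.2 = y) = (D.filter (fun p => p.2 = y)) \ Fy := by
        ext p
        simp only [hD', hFy, mem_filter, mem_sdiff, Finset.mem_image, mem_univ, true_and]
        constructor
        · rintro ⟨⟨hp, hnF⟩, hy⟩
          refine ⟨⟨hp, hy⟩, fun ⟨x, _, hxp⟩ => hnF ?_⟩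
          rw [← hxp, hmemF]
        · rintro ⟨⟨hp, hy⟩, hnFy⟩
          refine ⟨⟨hp, fun hmem => hnFy ?_⟩, hy⟩
          have h1 := (hmemF p).mp hmem
          exact ⟨p.1, by rw [h1, hy], Prod.ext rfl h1⟩
      have hsub : Fy ⊆ D.filter (fun p => p.2 = y) := by
        intro p hp
        simp only [hFy, Finset.mem_image, mem_filter, mem_univ, true_and] at hp
        obtain ⟨x, hx, rfl⟩ := hp
        exact mem_filter.mpr ⟨hmem₀ x, hx⟩
      have hcardFy : Fy.card = r := by
        rw [hFy, Finset.card_image_of_injective _ (fun a b h => (Prod.ext_iff.mp h).1),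
          hfib₀ y]
      rw [heq, Finset.card_sdiff_of_subset hsub, hDy y, hcardFy]
      have : (m+1) * r = m * r + r := by ring
      omega
    obtain ⟨f', hf'D, hf'fib, hf'dist⟩ := IH D' hD'x hD'y
    have hD'subD : D' ⊆ D := Finset.sdiff_subset
    refine ⟨Fin.cases f₀ f', ?_, ?_, ?_⟩
    · intro t x
      induction t using Fin.cases with
      | zero => simpa using hmem₀ x
      | succ s => simpa using hD'subD (hf'D s x)
    · intro t y
      induction t using Fin.cases with
      | zero => simp only [Fin.cases_zero]; convert hfib₀ y; exact Finset.filter_congr (fun _ _ => Iff.rfl)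
      | succ s => simp only [Fin.cases_succ]; convert hf'fib s y; exact Finset.filter_congr (fun _ _ => Iff.rfl)
    · intro t s x hts
      induction t using Fin.cases with
      | zero =>
        induction s using Fin.cases with
        | zero => exact absurd rfl hts
        | succ s' =>
          simp only [Fin.cases_zero, Fin.cases_succ]
          intro h
          have hmem : (x, f' s' x) ∈ D' := hf'D s' x
          have : (x, f' s' x) ∈ F := by rw [hmemF]; exact h
          exact (mem_sdiff.mp hmem).2 this
      | succ t' =>
        induction s using Fin.cases with
        | zero =>
          simp only [Fin.cases_zero, Fin.cases_succ]
          intro h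
          have hmem : (x, f' t' x) ∈ D' := hf'D t' x
          have : (x, f' t' x) ∈ F := by rw [hmemF]; exact h.symm
          exact (mem_sdiff.mp hmem).2 this
        | succ s' =>
          simp only [Fin.cases_succ]
          exact hf'dist t' s' x (fun h => hts (by rw [h]))

end Counting

lemma pair_eq_pair_iff {X Y : Type*} {x x' : X} {y y' : Y} :
    (s(Sum.inl x, Sum.inr y) : Sym2 (X ⊕ Y)) = s(Sum.inl x', Sum.inr y') ↔ x = x' ∧ y = y' := by
  rw [Sym2.eq_iff]
  constructor
  · rintro (⟨h1, h2⟩ | ⟨h1, h2⟩)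
    · exact ⟨Sum.inl.inj h1, Sum.inr.inj h2⟩
    · exact absurd h1 (by simp)
  · rintro ⟨rfl, rfl⟩; left; exact ⟨rfl, rfl⟩

lemma inl_mem_pair_iff {X Y : Type*} {x x' : X} {y : Y} :
    Sum.inl x ∈ (s(Sum.inl x', Sum.inr y) : Sym2 (X ⊕ Y)) ↔ x = x' := by
  rw [Sym2.mem_iff]; simp

lemma inr_mem_pair_iff {X Y : Type*} {x : X} {y y' : Y} :
    Sum.inr y ∈ (s(Sum.inl x, Sum.inr y') : Sym2 (X ⊕ Y)) ↔ y = y' := by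
  rw [Sym2.mem_iff]; simp

lemma star_colorable {X Y : Type*} (H : SimpleGraph (X ⊕ Y)) (g : X → Y) (φ : X → ℕ) (r : ℕ)
    (hE : H.edgeSet = {e | ∃ x, e = s(Sum.inl x, Sum.inr (g x))})
    (hlt : ∀ x, φ x < r)
    (huniq : ∀ y, ∀ j, j < r → ∃! x, g x = y ∧ φ x = j) :
    IntervalColorable H := by
  classical
  set c : Sym2 (X ⊕ Y) → ℕ := fun e =>
    if h : ∃ x, e = s(Sum.inl x, Sum.inr (g x)) then φ h.choose + 1 else 1 with hc
  have hceval : ∀ x, c s(Sum.inl x, Sum.inr (g x)) = φ x + 1 := by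
    intro x
    have h : ∃ x', (s(Sum.inl x, Sum.inr (g x)) : Sym2 (X ⊕ Y))
        = s(Sum.inl x', Sum.inr (g x')) := ⟨x, rfl⟩
    rw [hc]
    simp only [dif_pos h]
    have := h.choose_spec
    have hxx : x = h.choose := (pair_eq_pair_iff.mp this).1
    rw [← hxx]
  have hmemE : ∀ e, e ∈ H.edgeSet ↔ ∃ x, e = s(Sum.inl x, Sum.inr (g x)) := by
    intro e; rw [hE]; rfl
  refine ⟨c, ?_, ?_, ?_⟩
  · -- proper
    intro e₁ h₁ e₂ h₂ hne hshare
    obtain ⟨x₁, rfl⟩ := (hmemE e₁).mp h₁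
    obtain ⟨x₂, rfl⟩ := (hmemE e₂).mp h₂
    have hx : x₁ ≠ x₂ := fun h => hne (by rw [h])
    obtain ⟨v, hv₁, hv₂⟩ := hshare
    rcases v with z | z
    · rw [inl_mem_pair_iff] at hv₁ hv₂
      exact absurd (hv₁ ▸ hv₂ : x₁ = x₂) hx
    · rw [inr_mem_pair_iff] at hv₁ hv₂
      have hgg : g x₁ = g x₂ := hv₁ ▸ hv₂ ▸ rfl
      rw [hceval, hceval]
      intro hcc
      have hφ : φ x₁ = φ x₂ := by omega
      obtain ⟨x₀, -, hx₀⟩ := huniq (g x₁) (φ x₁) (hlt x₁)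
      have e1 := hx₀ x₁ ⟨rfl, rfl⟩
      have e2 := hx₀ x₂ ⟨hgg.symm, hφ.symm⟩
      exact hx (e1.trans e2.symm)
  · -- colors positive
    intro e he
    obtain ⟨x, rfl⟩ := (hmemE e).mp he
    rw [hceval]; omega
  · -- interval
    intro v a ha b hb n han hnb
    obtain ⟨e₁, he₁, hv₁, hc₁⟩ := ha
    obtain ⟨e₂, he₂, hv₂, hc₂⟩ := hb
    obtain ⟨x₁, rfl⟩ := (hmemE e₁).mp he₁
    obtain ⟨x₂, rfl⟩ := (hmemE e₂).mp he₂
    rcases v with x₀ | y₀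
    · rw [inl_mem_pair_iff] at hv₁ hv₂
      have hx12 : x₁ = x₂ := hv₁.symm.trans hv₂
      rw [hceval] at hc₁ hc₂
      have hn : n = φ x₁ + 1 := by rw [← hx12] at hc₂; omega
      exact ⟨s(Sum.inl x₁, Sum.inr (g x₁)), (hmemE _).mpr ⟨x₁, rfl⟩,
        inl_mem_pair_iff.mpr hv₁, by rw [hceval, hn]⟩
    · rw [inr_mem_pair_iff] at hv₁ hv₂
      rw [hceval] at hc₁ hc₂
      have h1n : 1 ≤ n := by omega
      have hnr : n ≤ r := by have := hlt x₂; omega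
      obtain ⟨x, hx, -⟩ := huniq y₀ (n - 1) (by omega)
      refine ⟨s(Sum.inl x, Sum.inr (g x)), (hmemE _).mpr ⟨x, rfl⟩,
        inr_mem_pair_iff.mpr hx.1.symm, ?_⟩
      rw [hceval, hx.2]; omega

open Finset in
lemma pair_colorable {X Y : Type*} [Fintype X] [Fintype Y] [DecidableEq X] [DecidableEq Y]
    (H : SimpleGraph (X ⊕ Y)) (a b : X → Y) (r : ℕ) (hr : 0 < r)
    (hE : H.edgeSet
      = {e | ∃ x, e = s(Sum.inl x, Sum.inr (a x)) ∨ e = s(Sum.inl x, Sum.inr (b x))})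
    (hab : ∀ x, a x ≠ b x)
    (hfa : ∀ y, (univ.filter (fun x => a x = y)).card = r)
    (hfb : ∀ y, (univ.filter (fun x => b x = y)).card = r) :
    IntervalColorable H := by
  classical
  -- Step A: orientation via a regular bipartite matching
  set q : (X × Bool) × Fin r → Y × Fin r :=
    fun e => ((if e.1.2 then a e.1.1 else b e.1.1), e.2) with hq
  have hA : ∀ x : X, ((univ : Finset ((X × Bool) × Fin r)).filter
      (fun e => e.1.1 = x)).card = 2 * r := by
    intro x
    have heq : (univ : Finset ((X × Bool) × Fin r)).filter (fun e => e.1.1 = x)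
        = ({x} ×ˢ univ) ×ˢ univ := by
      ext e
      obtain ⟨⟨x', cb⟩, i'⟩ := e
      cases cb <;> simp [Finset.mem_product]
    rw [heq, Finset.card_product, Finset.card_product, Finset.card_singleton,
      Finset.card_univ, Finset.card_univ, Fintype.card_bool, Fintype.card_fin, one_mul]
  have hB : ∀ z : Y × Fin r, ((univ : Finset ((X × Bool) × Fin r)).filter
      (fun e => q e = z)).card = 2 * r := by
    rintro ⟨y, i⟩
    have heq : (univ : Finset ((X × Bool) × Fin r)).filter (fun e => q e = (y, i))
        = ((univ.filter (fun x => a x = y)).image (fun x => ((x, true), i))) ∪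
          ((univ.filter (fun x => b x = y)).image (fun x => ((x, false), i))) := by
      ext e
      obtain ⟨⟨x, cb⟩, i'⟩ := e
      simp only [hq, mem_filter, mem_univ, true_and, Finset.mem_union, Finset.mem_image,
        Prod.mk.injEq]
      cases cb <;> aesop
    rw [heq, Finset.card_union_of_disjoint, Finset.card_image_of_injective,
      Finset.card_image_of_injective, hfa, hfb]
    · omega
    · intro x x' h; exact (Prod.ext_iff.mp (Prod.ext_iff.mp h).1).1
    · intro x x' h; exact (Prod.ext_iff.mp (Prod.ext_iff.mp h).1).1
    · rw [Finset.disjoint_left]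
      rintro e he₁ he₂
      obtain ⟨x, -, rfl⟩ := Finset.mem_image.mp he₁
      obtain ⟨x', -, hx'⟩ := Finset.mem_image.mp he₂
      exact Bool.false_ne_true (Prod.ext_iff.mp (Prod.ext_iff.mp hx').1).2
  obtain ⟨mf, hmf, hbij⟩ := reg_matching (univ : Finset ((X × Bool) × Fin r))
    (fun e => e.1.1) q (2 * r) (by omega) hA hB
  set out : X → Y := fun x => (q (mf x)).1 with hout
  set inn : X → Y := fun x => if (mf x).1.2 then b x else a x with hinn
  have hswap : ∀ x, (out x = a x ∧ inn x = b x) ∨ (out x = b x ∧ inn x = a x) := by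
    intro x
    have hx : (mf x).1.1 = x := (hmf x).2
    by_cases hcb : (mf x).1.2
    · left; constructor
      · rw [hout, hq]; simp [hcb, hx]
      · rw [hinn]; simp [hcb]
    · right; constructor
      · rw [hout, hq]; simp [hcb, hx]
      · rw [hinn]; simp [hcb]
  have hoi : ∀ x, out x ≠ inn x := by
    intro x
    rcases hswap x with ⟨h1, h2⟩ | ⟨h1, h2⟩
    · rw [h1, h2]; exact hab x
    · rw [h1, h2]; exact fun h => hab x h.symm
  have hfo : ∀ y, (univ.filter (fun x => out x = y)).card = r := by
    intro y
    have heq : (univ.filter (fun x => out x = y))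
        = (univ.filter (fun x => ((q ∘ mf) x).1 = y)) := rfl
    rw [heq, card_fiber_comp (q ∘ mf) hbij (fun z : Y × Fin r => z.1 = y), card_fst_fiber]
  have hfi : ∀ y, (univ.filter (fun x => inn x = y)).card = r := by
    intro y
    have hunion : (univ.filter (fun x => a x = y)) ∪ (univ.filter (fun x => b x = y))
        = (univ.filter (fun x => out x = y)) ∪ (univ.filter (fun x => inn x = y)) := by
      ext x
      simp only [Finset.mem_union, mem_filter, mem_univ, true_and]
      rcases hswap x with ⟨h1, h2⟩ | ⟨h1, h2⟩ <;> rw [h1, h2] <;> tauto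
    have hd1 : Disjoint (univ.filter (fun x => a x = y)) (univ.filter (fun x => b x = y)) := by
      rw [Finset.disjoint_left]
      intro x h1 h2
      rw [mem_filter] at h1 h2
      exact hab x (h1.2.trans h2.2.symm)
    have hd2 : Disjoint (univ.filter (fun x => out x = y))
        (univ.filter (fun x => inn x = y)) := by
      rw [Finset.disjoint_left]
      intro x h1 h2
      rw [mem_filter] at h1 h2
      exact hoi x (h1.2.trans h2.2.symm)
    have := congrArg Finset.card hunion
    rw [Finset.card_union_of_disjoint hd1, Finset.card_union_of_disjoint hd2,
      hfa, hfb, hfo] at this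
    omega
  -- Step B: factor into r matchings
  obtain ⟨φ, hφlt', hφ⟩ := reg_factor out inn r univ hfo hfi
  have hφlt : ∀ x, φ x < r := fun x => hφlt' x (mem_univ x)
  have huo : ∀ j, j < r → ∀ y, ∃! x, out x = y ∧ φ x = j :=
    fun j hj y => exu_of_card_one ((hφ j hj).1 y)
  have hui : ∀ j, j < r → ∀ y, ∃! x, inn x = y ∧ φ x = j :=
    fun j hj y => exu_of_card_one ((hφ j hj).2 y)
  -- the coloring
  set c : Sym2 (X ⊕ Y) → ℕ := fun e =>
    if h : ∃ p : X × Y, e = s(Sum.inl p.1, Sum.inr p.2) then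
      (if out h.choose.1 = h.choose.2 then 2 * φ h.choose.1 + 1 else 2 * φ h.choose.1 + 2)
    else 1 with hc
  have hceval : ∀ x y, c s(Sum.inl x, Sum.inr y)
      = if out x = y then 2 * φ x + 1 else 2 * φ x + 2 := by
    intro x y
    have h : ∃ p : X × Y, (s(Sum.inl x, Sum.inr y) : Sym2 (X ⊕ Y))
        = s(Sum.inl p.1, Sum.inr p.2) := ⟨(x, y), rfl⟩
    rw [hc]
    simp only [dif_pos h]
    have hsp := h.choose_spec
    have hxy : x = h.choose.1 ∧ y = h.choose.2 := pair_eq_pair_iff.mp hsp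
    rw [← hxy.1, ← hxy.2]
  have hcout : ∀ x, c s(Sum.inl x, Sum.inr (out x)) = 2 * φ x + 1 := by
    intro x; rw [hceval, if_pos rfl]
  have hcinn : ∀ x, c s(Sum.inl x, Sum.inr (inn x)) = 2 * φ x + 2 := by
    intro x; rw [hceval, if_neg (hoi x)]
  have hoab : ∀ (x : X) (e : Sym2 (X ⊕ Y)),
      (e = s(Sum.inl x, Sum.inr (a x)) ∨ e = s(Sum.inl x, Sum.inr (b x)))
      ↔ (e = s(Sum.inl x, Sum.inr (out x)) ∨ e = s(Sum.inl x, Sum.inr (inn x))) := by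
    intro x e
    rcases hswap x with ⟨h1, h2⟩ | ⟨h1, h2⟩ <;> rw [h1, h2] <;> tauto
  have hmemE : ∀ e, e ∈ H.edgeSet
      ↔ ∃ x, e = s(Sum.inl x, Sum.inr (out x)) ∨ e = s(Sum.inl x, Sum.inr (inn x)) := by
    intro e
    rw [hE]
    exact exists_congr (fun x => hoab x e)
  refine ⟨c, ?_, ?_, ?_⟩
  · -- proper
    rintro e₁ he₁ e₂ he₂ hne ⟨v, hv₁, hv₂⟩
    obtain ⟨x₁, h₁⟩ := (hmemE e₁).mp he₁
    obtain ⟨x₂, h₂⟩ := (hmemE e₂).mp he₂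
    rcases v with z | z
    · -- shared vertex in X: x₁ = x₂
      have hz₁ : z = x₁ := by
        rcases h₁ with rfl | rfl <;> exact inl_mem_pair_iff.mp hv₁
      have hz₂ : z = x₂ := by
        rcases h₂ with rfl | rfl <;> exact inl_mem_pair_iff.mp hv₂
      have hx : x₁ = x₂ := hz₁ ▸ hz₂
      subst hx
      rcases h₁ with rfl | rfl <;> rcases h₂ with rfl | rfl
      · exact absurd rfl hne
      · rw [hcout, hcinn]; omega
      · rw [hcinn, hcout]; omega
      · exact absurd rfl hne
    · -- shared vertex in Y
      intro hcc
      rcases h₁ with rfl | rfl <;> rcases h₂ with rfl | rfl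
      · have hy₁ : z = out x₁ := inr_mem_pair_iff.mp hv₁
        have hy₂ : z = out x₂ := inr_mem_pair_iff.mp hv₂
        rw [hcout, hcout] at hcc
        have hφeq : φ x₁ = φ x₂ := by omega
        obtain ⟨x₀, -, hx₀⟩ := huo (φ x₁) (hφlt x₁) z
        have e1 := hx₀ x₁ ⟨hy₁.symm, rfl⟩
        have e2 := hx₀ x₂ ⟨hy₂.symm, hφeq.symm⟩
        exact hne (by rw [e1.trans e2.symm])
      · rw [hcout, hcinn] at hcc; omega
      · rw [hcinn, hcout] at hcc; omega
      · have hy₁ : z = inn x₁ := inr_mem_pair_iff.mp hv₁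
        have hy₂ : z = inn x₂ := inr_mem_pair_iff.mp hv₂
        rw [hcinn, hcinn] at hcc
        have hφeq : φ x₁ = φ x₂ := by omega
        obtain ⟨x₀, -, hx₀⟩ := hui (φ x₁) (hφlt x₁) z
        have e1 := hx₀ x₁ ⟨hy₁.symm, rfl⟩
        have e2 := hx₀ x₂ ⟨hy₂.symm, hφeq.symm⟩
        exact hne (by rw [e1.trans e2.symm])
  · -- positive
    intro e he
    obtain ⟨x, h | h⟩ := (hmemE e).mp he <;> subst h
    · rw [hcout]; omega
    · rw [hcinn]; omega
  · -- interval
    intro v α hα β hβ n hαn hnβ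
    obtain ⟨e₁, he₁, hv₁, hc₁⟩ := hα
    obtain ⟨e₂, he₂, hv₂, hc₂⟩ := hβ
    obtain ⟨x₁, h₁⟩ := (hmemE e₁).mp he₁
    obtain ⟨x₂, h₂⟩ := (hmemE e₂).mp he₂
    rcases v with x₀ | y₀
    · -- vertex in X: colors in {2φ+1, 2φ+2}
      have hx₁ : x₀ = x₁ := by
        rcases h₁ with rfl | rfl <;> exact inl_mem_pair_iff.mp hv₁
      have hx₂ : x₀ = x₂ := by
        rcases h₂ with rfl | rfl <;> exact inl_mem_pair_iff.mp hv₂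
      subst hx₁
      have hα' : α = 2 * φ x₀ + 1 ∨ α = 2 * φ x₀ + 2 := by
        rcases h₁ with rfl | rfl
        · left; rw [← hc₁, hcout]
        · right; rw [← hc₁, hcinn]
      have hβ' : β = 2 * φ x₀ + 1 ∨ β = 2 * φ x₀ + 2 := by
        rcases h₂ with rfl | rfl
        · left; rw [← hc₂, ← hx₂, hcout]
        · right; rw [← hc₂, ← hx₂, hcinn]
      have hn : n = 2 * φ x₀ + 1 ∨ n = 2 * φ x₀ + 2 := by omega
      rcases hn with hn | hn
      · exact ⟨s(Sum.inl x₀, Sum.inr (out x₀)), (hmemE _).mpr ⟨x₀, Or.inl rfl⟩,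
          inl_mem_pair_iff.mpr rfl, by rw [hcout, hn]⟩
      · exact ⟨s(Sum.inl x₀, Sum.inr (inn x₀)), (hmemE _).mpr ⟨x₀, Or.inr rfl⟩,
          inl_mem_pair_iff.mpr rfl, by rw [hcinn, hn]⟩
    · -- vertex in Y: colors fill [1, 2r]
      have hα1 : 1 ≤ α := by
        rcases h₁ with rfl | rfl
        · rw [← hc₁, hcout]; omega
        · rw [← hc₁, hcinn]; omega
      have hβ2r : β ≤ 2 * r := by
        rcases h₂ with rfl | rfl
        · rw [← hc₂, hcout]; have := hφlt x₂; omega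
        · rw [← hc₂, hcinn]; have := hφlt x₂; omega
      have hn1 : 1 ≤ n := le_trans hα1 hαn
      have hn2r : n ≤ 2 * r := le_trans hnβ hβ2r
      set j := (n - 1) / 2 with hj
      have hjr : j < r := by omega
      have hncase : n = 2 * j + 1 ∨ n = 2 * j + 2 := by omega
      rcases hncase with hn | hn
      · obtain ⟨x, hx, -⟩ := huo j hjr y₀
        exact ⟨s(Sum.inl x, Sum.inr (out x)), (hmemE _).mpr ⟨x, Or.inl rfl⟩,
          inr_mem_pair_iff.mpr hx.1.symm, by rw [hcout, hx.2, hn]⟩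
      · obtain ⟨x, hx, -⟩ := hui j hjr y₀
        exact ⟨s(Sum.inl x, Sum.inr (inn x)), (hmemE _).mpr ⟨x, Or.inr rfl⟩,
          inr_mem_pair_iff.mpr hx.1.symm, by rw [hcinn, hx.2, hn]⟩

theorem biregular_k_intervalThickness_le
    {X Y : Type*} [Fintype X] [Fintype Y] [DecidableEq X] [DecidableEq Y]
    (G : SimpleGraph (X ⊕ Y)) [DecidableRel G.Adj] (k r : ℕ) (hk : 4 ≤ k) (hr : 2 ≤ r)
    (hX : ∀ x x' : X, ¬ G.Adj (Sum.inl x) (Sum.inl x'))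
    (hY : ∀ y y' : Y, ¬ G.Adj (Sum.inr y) (Sum.inr y'))
    (hdX : ∀ x : X, G.degree (Sum.inl x) = k)
    (hdY : ∀ y : Y, G.degree (Sum.inr y) = k * r) :
    intervalThickness G ≤ k - 2 := by
  classical
  set D : Finset (X × Y) := univ.filter (fun p => G.Adj (Sum.inl p.1) (Sum.inr p.2)) with hD
  have hmemD : ∀ p : X × Y, p ∈ D ↔ G.Adj (Sum.inl p.1) (Sum.inr p.2) := by
    intro p; rw [hD, mem_filter]; simp
  have hDx : ∀ x, (D.filter (fun p => p.1 = x)).card = k := by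
    intro x
    rw [← hdX x, ← SimpleGraph.card_neighborFinset_eq_degree]
    apply Finset.card_bij (fun p _ => Sum.inr p.2)
    · intro p hp
      rw [mem_filter] at hp
      rw [SimpleGraph.mem_neighborFinset]
      have := (hmemD p).mp hp.1
      rwa [hp.2] at this
    · intro p hp p' hp' h
      rw [mem_filter] at hp hp'
      have h2 : p.2 = p'.2 := Sum.inr.inj h
      exact Prod.ext (hp.2.trans hp'.2.symm) h2
    · intro v hv
      rw [SimpleGraph.mem_neighborFinset] at hv
      rcases v with x' | y
      · exact absurd hv (hX x x')
      · exact ⟨(x, y), mem_filter.mpr ⟨(hmemD (x, y)).mpr hv, rfl⟩, rfl⟩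
  have hDy : ∀ y, (D.filter (fun p => p.2 = y)).card = k * r := by
    intro y
    rw [← hdY y, ← SimpleGraph.card_neighborFinset_eq_degree]
    apply Finset.card_bij (fun p _ => Sum.inl p.1)
    · intro p hp
      rw [mem_filter] at hp
      rw [SimpleGraph.mem_neighborFinset]
      have := (hmemD p).mp hp.1
      rw [hp.2] at this
      exact this.symm
    · intro p hp p' hp' h
      rw [mem_filter] at hp hp'
      have h1 : p.1 = p'.1 := Sum.inl.inj h
      exact Prod.ext h1 (hp.2.trans hp'.2.symm)
    · intro v hv
      rw [SimpleGraph.mem_neighborFinset] at hv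
      rcases v with x | y'
      · exact ⟨(x, y), mem_filter.mpr ⟨(hmemD (x, y)).mpr hv.symm, rfl⟩, rfl⟩
      · exact absurd hv (hY y y')
  obtain ⟨f, hfD, hfib, hdist⟩ := peel r (by omega) k D hDx hDy
  have hadjf : ∀ (t : Fin k) (x : X), G.Adj (Sum.inl x) (Sum.inr (f t x)) :=
    fun t x => (hmemD _).mp (hfD t x)
  -- every edge of D is covered by a unique factor
  have hexu : ∀ x y, (x, y) ∈ D → ∃! t, f t x = y := by
    intro x y hxy
    have hinj : Function.Injective (fun t => f t x) := by
      intro t s h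
      by_contra hne
      exact hdist t s x hne h
    have hTx : (univ.image (fun t : Fin k => f t x)).card = k := by
      rw [Finset.card_image_of_injective _ hinj, Finset.card_univ, Fintype.card_fin]
    have hNx : ((D.filter (fun p => p.1 = x)).image Prod.snd).card = k := by
      rw [Finset.card_image_of_injOn, hDx x]
      intro p hp p' hp' h
      rw [Finset.mem_coe, mem_filter] at hp hp'
      exact Prod.ext (hp.2.trans hp'.2.symm) h
    have hsub : (univ.image (fun t : Fin k => f t x))
        ⊆ (D.filter (fun p => p.1 = x)).image Prod.snd := by
      intro z hz
      obtain ⟨t, -, rfl⟩ := Finset.mem_image.mp hz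
      exact Finset.mem_image.mpr ⟨(x, f t x), mem_filter.mpr ⟨hfD t x, rfl⟩, rfl⟩
    have heqTN := Finset.eq_of_subset_of_card_le hsub (by omega)
    have hyN : y ∈ (D.filter (fun p => p.1 = x)).image Prod.snd :=
      Finset.mem_image.mpr ⟨(x, y), mem_filter.mpr ⟨hxy, rfl⟩, rfl⟩
    rw [← heqTN] at hyN
    obtain ⟨t, -, ht⟩ := Finset.mem_image.mp hyN
    exact ⟨t, ht, fun s hs => hinj (ht ▸ hs : f s x = f t x)⟩
  -- the part index map
  set pt : Fin k → Fin (k - 2) := fun t =>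
    ⟨if (t : ℕ) < k - 2 then (t : ℕ) else (t : ℕ) - 2, by have := t.isLt; split <;> omega⟩
    with hptdef
  have hpt : ∀ (t : Fin k) (j : Fin (k - 2)),
      pt t = j ↔ ((t : ℕ) = (j : ℕ) ∨ (k - 4 ≤ (j : ℕ) ∧ (t : ℕ) = (j : ℕ) + 2)) := by
    intro t j
    have ht := t.isLt; have hj := j.isLt
    constructor
    · intro h
      have hval : (if (t : ℕ) < k - 2 then (t : ℕ) else (t : ℕ) - 2) = (j : ℕ) :=
        congrArg Fin.val h
      split at hval <;> omega
    · intro h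
      apply Fin.ext
      show (if (t : ℕ) < k - 2 then (t : ℕ) else (t : ℕ) - 2) = (j : ℕ)
      split <;> omega
  -- the parts
  set Ej : Fin (k - 2) → Set (Sym2 (X ⊕ Y)) := fun j =>
    {e | ∃ t : Fin k, pt t = j ∧ ∃ x, e = s(Sum.inl x, Sum.inr (f t x))} with hEjdef
  set H : Fin (k - 2) → SimpleGraph (X ⊕ Y) := fun j => SimpleGraph.fromEdgeSet (Ej j) with hHdef
  have hHE : ∀ j, (H j).edgeSet = Ej j := by
    intro j
    rw [hHdef]
    rw [SimpleGraph.edgeSet_fromEdgeSet]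
    ext e
    simp only [Set.mem_diff, Set.mem_setOf_eq]
    constructor
    · rintro ⟨h, -⟩; exact h
    · intro h
      refine ⟨h, ?_⟩
      obtain ⟨t, -, x, rfl⟩ := h
      simp [Sym2.mk_isDiag_iff]
  have hle : ∀ j, H j ≤ G := by
    intro j v w hvw
    rw [hHdef, SimpleGraph.fromEdgeSet_adj] at hvw
    obtain ⟨⟨t, -, x, hx⟩, -⟩ := hvw
    rcases Sym2.eq_iff.mp hx with ⟨rfl, rfl⟩ | ⟨rfl, rfl⟩
    · exact hadjf t x
    · exact (hadjf t x).symm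
  have hcover : ∀ e ∈ G.edgeSet, ∃! j, e ∈ (H j).edgeSet := by
    have main : ∀ x y, G.Adj (Sum.inl x) (Sum.inr y) →
        ∃! j, (s(Sum.inl x, Sum.inr y) : Sym2 (X ⊕ Y)) ∈ (H j).edgeSet := by
      intro x y hadj
      obtain ⟨t₀, ht₀, ht₀u⟩ := hexu x y ((hmemD (x, y)).mpr hadj)
      refine ⟨pt t₀, ?_, ?_⟩
      · show s(Sum.inl x, Sum.inr y) ∈ (H (pt t₀)).edgeSet
        rw [hHE]
        exact ⟨t₀, rfl, x, by rw [ht₀]⟩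
      · intro j hj
        rw [hHE] at hj
        obtain ⟨t, hptt, x', hxx'⟩ := hj
        obtain ⟨rfl, hy⟩ := pair_eq_pair_iff.mp hxx'
        have := ht₀u t hy.symm
        rw [← this, hptt]
    intro e he
    induction e using Sym2.ind with
    | _ v w =>
      have hadj : G.Adj v w := (SimpleGraph.mem_edgeSet G).mp he
      rcases v with x | y <;> rcases w with x' | y'
      · exact absurd hadj (hX x x')
      · exact main x y' hadj
      · rw [Sym2.eq_swap]
        exact main x' y hadj.symm
      · exact absurd hadj (hY y y')
  have hcol : ∀ j, IntervalColorable (H j) := by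
    intro j
    have hj2 := j.isLt
    by_cases hj4 : (j : ℕ) < k - 4
    · -- star part
      set t₀ : Fin k := ⟨(j : ℕ), by omega⟩ with ht₀def
      have hEj : (H j).edgeSet = {e | ∃ x, e = s(Sum.inl x, Sum.inr (f t₀ x))} := by
        rw [hHE]
        ext e
        simp only [hEjdef, Set.mem_setOf_eq]
        constructor
        · rintro ⟨t, hptt, x, rfl⟩
          rcases (hpt t j).mp hptt with h | ⟨h4, -⟩
          · have : t = t₀ := Fin.ext h
            exact ⟨x, by rw [this]⟩
          · omega
        · rintro ⟨x, rfl⟩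
          exact ⟨t₀, (hpt t₀ j).mpr (Or.inl rfl), x, rfl⟩
      obtain ⟨φ, hφlt, hφ⟩ := reg_factor (f t₀) (f t₀) r univ (hfib t₀) (hfib t₀)
      exact star_colorable (H j) (f t₀) φ r hEj (fun x => hφlt x (mem_univ x))
        (fun y jj hjj => exu_of_card_one ((hφ jj hjj).1 y))
    · -- pair part
      set t₁ : Fin k := ⟨(j : ℕ), by omega⟩ with ht₁def
      set t₂ : Fin k := ⟨(j : ℕ) + 2, by omega⟩ with ht₂def
      have hEj : (H j).edgeSet = {e | ∃ x,
          e = s(Sum.inl x, Sum.inr (f t₁ x)) ∨ e = s(Sum.inl x, Sum.inr (f t₂ x))} := by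
        rw [hHE]
        ext e
        simp only [hEjdef, Set.mem_setOf_eq]
        constructor
        · rintro ⟨t, hptt, x, rfl⟩
          rcases (hpt t j).mp hptt with h | ⟨-, h⟩
          · have : t = t₁ := Fin.ext h
            exact ⟨x, Or.inl (by rw [this])⟩
          · have : t = t₂ := Fin.ext h
            exact ⟨x, Or.inr (by rw [this])⟩
        · rintro ⟨x, h | h⟩
          · exact ⟨t₁, (hpt t₁ j).mpr (Or.inl rfl), x, h⟩
          · exact ⟨t₂, (hpt t₂ j).mpr (Or.inr ⟨by omega, rfl⟩), x, h⟩
      have hne12 : t₁ ≠ t₂ := by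
        intro h
        have := congrArg Fin.val h
        simp [ht₁def, ht₂def] at this
      exact pair_colorable (H j) (f t₁) (f t₂) r (by omega) hEj
        (fun x => hdist t₁ t₂ x hne12) (hfib t₁) (hfib t₂)
  exact Nat.sInf_le ⟨H, hle, hcol, hcover⟩
end
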